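/- arXiv:1603.01535 — 9 statements merged into one kernel-verified Lean document; each statement's English description precedes it below -/
import Mathlib

section
/- Let T : ℓ∞²(ℝ) × ℓ∞²(ℝ) → ℝ be the bilinear form T(x,y) = Σ_{i,j=1}^{2} a_{ij} x_i y_j with real coefficients a_{ij}. Then ‖T‖ = max{ |a₁₁+a₂₁| + |a₁₂+a₂₂| , |a₁₁−a₂₁| + |a₁₂−a₂₂| }. -/
lemma key_scalar (a11 a12 a21 a22 x0 x1 y0 y1 X Y : ℝ)
    (hx0 : |x0| ≤ X) (hx1 : |x1| ≤ X) (hy0 : |y0| ≤ Y) (hy1 : |y1| ≤ Y)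
    (hY : 0 ≤ Y) :
    |a11 * x0 * y0 + a21 * x1 * y0 + a12 * x0 * y1 + a22 * x1 * y1| ≤
      max (|a11 + a21| + |a12 + a22|) (|a11 - a21| + |a12 - a22|) * X * Y := by
  set M := max (|a11 + a21| + |a12 + a22|) (|a11 - a21| + |a12 - a22|) with hM
  set u := (x0 + x1) / 2
  set v := (x0 - x1) / 2
  have hsum : a11 * x0 * y0 + a21 * x1 * y0 + a12 * x0 * y1 + a22 * x1 * y1
      = ((a11 + a21) * y0 + (a12 + a22) * y1) * u
        + ((a11 - a21) * y0 + (a12 - a22) * y1) * v := by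
    simp only [u, v]; ring
  have h1 : |(a11 + a21) * y0 + (a12 + a22) * y1| ≤ (|a11 + a21| + |a12 + a22|) * Y := by
    calc |(a11 + a21) * y0 + (a12 + a22) * y1|
        ≤ |(a11 + a21) * y0| + |(a12 + a22) * y1| := abs_add_le _ _
      _ = |a11 + a21| * |y0| + |a12 + a22| * |y1| := by rw [abs_mul, abs_mul]
      _ ≤ (|a11 + a21| + |a12 + a22|) * Y := by
          nlinarith [abs_nonneg (a11+a21), abs_nonneg (a12+a22)]
  have h2 : |(a11 - a21) * y0 + (a12 - a22) * y1| ≤ (|a11 - a21| + |a12 - a22|) * Y := by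
    calc |(a11 - a21) * y0 + (a12 - a22) * y1|
        ≤ |(a11 - a21) * y0| + |(a12 - a22) * y1| := abs_add_le _ _
      _ = |a11 - a21| * |y0| + |a12 - a22| * |y1| := by rw [abs_mul, abs_mul]
      _ ≤ (|a11 - a21| + |a12 - a22|) * Y := by
          nlinarith [abs_nonneg (a11-a21), abs_nonneg (a12-a22)]
  have huv : |u| + |v| ≤ X := by
    rw [abs_le] at hx0 hx1
    rcases abs_cases u with ⟨h, _⟩ | ⟨h, _⟩ <;> rcases abs_cases v with ⟨h', _⟩ | ⟨h', _⟩ <;>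
      simp only [u, v] at h h' <;> rw [h, h'] <;> linarith
  have hle1 : |a11 + a21| + |a12 + a22| ≤ M := le_max_left _ _
  have hle2 : |a11 - a21| + |a12 - a22| ≤ M := le_max_right _ _
  calc |a11 * x0 * y0 + a21 * x1 * y0 + a12 * x0 * y1 + a22 * x1 * y1|
      ≤ |((a11 + a21) * y0 + (a12 + a22) * y1) * u|
        + |((a11 - a21) * y0 + (a12 - a22) * y1) * v| := by rw [hsum]; exact abs_add_le _ _
    _ = |((a11 + a21) * y0 + (a12 + a22) * y1)| * |u|
        + |((a11 - a21) * y0 + (a12 - a22) * y1)| * |v| := by rw [abs_mul, abs_mul]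
    _ ≤ M * Y * |u| + M * Y * |v| := by
        gcongr <;> [exact h1.trans (by nlinarith [abs_nonneg ((a11+a21)*1)]);
          exact h2.trans (by nlinarith)]
    _ = M * Y * (|u| + |v|) := by ring
    _ ≤ M * X * Y := by
        have hM0 : 0 ≤ M := le_trans (by positivity) hle1
        have := mul_le_mul_of_nonneg_left huv (mul_nonneg hM0 hY)
        linarith

/-- The norm of a real bilinear form on `ℓ∞²(ℝ)` (modeled as `Fin 2 → ℝ` with the sup norm)
with coefficient matrix `a i j` is `max (|a₁₁+a₂₁|+|a₁₂+a₂₂|) (|a₁₁-a₂₁|+|a₁₂-a₂₂|)`. -/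
theorem norm_bilinear_form_linf2_real
    (a11 a12 a21 a22 : ℝ)
    (T : (Fin 2 → ℝ) →L[ℝ] (Fin 2 → ℝ) →L[ℝ] ℝ)
    (hT : ∀ x y : Fin 2 → ℝ,
      T x y = a11 * x 0 * y 0 + a21 * x 1 * y 0 + a12 * x 0 * y 1 + a22 * x 1 * y 1) :
    ‖T‖ = max (|a11 + a21| + |a12 + a22|) (|a11 - a21| + |a12 - a22|) := by
  set M := max (|a11 + a21| + |a12 + a22|) (|a11 - a21| + |a12 - a22|) with hM
  have hM0 : (0:ℝ) ≤ M := le_trans (by positivity) (le_max_left _ _)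
  apply le_antisymm
  · apply ContinuousLinearMap.opNorm_le_bound₂ T hM0
    intro x y
    rw [hT, Real.norm_eq_abs]
    exact key_scalar a11 a12 a21 a22 (x 0) (x 1) (y 0) (y 1) ‖x‖ ‖y‖
      ((Real.norm_eq_abs _) ▸ norm_le_pi_norm x 0)
      ((Real.norm_eq_abs _) ▸ norm_le_pi_norm x 1)
      ((Real.norm_eq_abs _) ▸ norm_le_pi_norm y 0)
      ((Real.norm_eq_abs _) ▸ norm_le_pi_norm y 1)
      (norm_nonneg y)
  · have hnorm1 : ∀ v : Fin 2 → ℝ, |v 0| ≤ 1 → |v 1| ≤ 1 → ‖v‖ ≤ 1 := by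
      intro v h0 h1
      rw [pi_norm_le_iff_of_nonneg zero_le_one]
      intro i
      fin_cases i <;> rwa [Real.norm_eq_abs]
    have hbound : ∀ v w : Fin 2 → ℝ, ‖v‖ ≤ 1 → ‖w‖ ≤ 1 → T v w ≤ ‖T‖ := by
      intro v w hv hw
      have := ContinuousLinearMap.le_opNorm₂ T v w
      have h2 : ‖T v w‖ ≤ ‖T‖ := by
        calc ‖T v w‖ ≤ ‖T‖ * ‖v‖ * ‖w‖ := this
          _ ≤ ‖T‖ * 1 * 1 := by gcongr
          _ = ‖T‖ := by ring
      exact (le_abs_self _).trans ((Real.norm_eq_abs _) ▸ h2)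
    have sgn : ∀ c : ℝ, (if 0 ≤ c then (1:ℝ) else -1) * c = |c| := by
      intro c; split_ifs with h
      · rw [abs_of_nonneg h]; ring
      · rw [abs_of_neg (lt_of_not_ge h)]; ring
    have sgnabs : ∀ c : ℝ, |if 0 ≤ c then (1:ℝ) else -1| ≤ 1 := by
      intro c; split_ifs <;> simp
    rw [max_le_iff]
    constructor
    · have := hbound ![1, 1] ![if 0 ≤ a11 + a21 then 1 else -1, if 0 ≤ a12 + a22 then 1 else -1]
        (hnorm1 _ (by norm_num) (by norm_num))
        (hnorm1 _ (by simpa using sgnabs (a11 + a21)) (by simpa using sgnabs (a12 + a22)))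
      rw [hT] at this
      simp only [Matrix.cons_val_zero, Matrix.cons_val_one, Matrix.head_cons] at this
      have e1 := sgn (a11 + a21)
      have e2 := sgn (a12 + a22)
      nlinarith [this, e1, e2]
    · have := hbound ![1, -1] ![if 0 ≤ a11 - a21 then 1 else -1, if 0 ≤ a12 - a22 then 1 else -1]
        (hnorm1 _ (by norm_num) (by norm_num))
        (hnorm1 _ (by simpa using sgnabs (a11 - a21)) (by simpa using sgnabs (a12 - a22)))
      rw [hT] at this
      simp only [Matrix.cons_val_zero, Matrix.cons_val_one, Matrix.head_cons] at this
      have e1 := sgn (a11 - a21)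
      have e2 := sgn (a12 - a22)
      nlinarith [this, e1, e2]
end

section
/- Let T : ℓ∞²(ℂ) × ℓ∞²(ℂ) → ℂ be the bilinear form T(z,w) = Σ_{i,j=1}^{2} a_{ij} z_i w_j with real coefficients a_{ij}. Suppose all four coefficients a₁₁, a₂₁, a₁₂, a₂₂ are nonzero, that a₁₁a₂₁/(a₁₂a₂₂) < 0, and that |(a₁₁²a₂₁²/(a₁₂²a₂₂²))(a₁₂²+a₂₂²) − (a₁₁²+a₂₁²)| ≤ |2a₁₁a₂₁(1 − a₁₁a₂₁/(a₁₂a₂₂))|. Set c₀ = [(a₁₁²a₂₁²/(a₁₂²a₂₂²))(a₁₂²+a₂₂²) − (a₁₁²+a₂₁²)] / [2a₁₁a₂₁(1 − a₁₁a₂₁/(a₁₂a₂₂))]. Then ‖T‖ = max{ |a₁₁+a₂₁| + |a₁₂+a₂₂| , |a₁₁−a₂₁| + |a₁₂−a₂₂| , √(a₁₁²+a₂₁²+2a₁₁a₂₁c₀) + √(a₁₂²+a₂₂²+2a₁₂a₂₂c₀) }. -/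
set_option maxHeartbeats 2000000

lemma aux_tangent (x x0 : ℝ) (hx : 0 ≤ x) (hx0 : 0 < x0) :
    Real.sqrt x ≤ Real.sqrt x0 + (x - x0) / (2 * Real.sqrt x0) := by
  have hs0 : 0 < Real.sqrt x0 := Real.sqrt_pos.2 hx0
  have e0 : Real.sqrt x0 ^ 2 = x0 := Real.sq_sqrt hx0.le
  have e1 : Real.sqrt x ^ 2 = x := Real.sq_sqrt hx
  have key : Real.sqrt x0 + (x - x0) / (2 * Real.sqrt x0) - Real.sqrt x
      = (Real.sqrt x - Real.sqrt x0) ^ 2 / (2 * Real.sqrt x0) := by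
    field_simp
    nlinarith [e0, e1]
  nlinarith [div_nonneg (sq_nonneg (Real.sqrt x - Real.sqrt x0))
    (by positivity : (0:ℝ) ≤ 2 * Real.sqrt x0), key]

lemma aux_key (p q r s c0 c : ℝ)
    (hP : 0 < p + q * c0) (hR : 0 < r + s * c0)
    (hcrit : q * Real.sqrt (r + s * c0) + s * Real.sqrt (p + q * c0) = 0)
    (h1 : 0 ≤ p + q * c) (h2 : 0 ≤ r + s * c) :
    Real.sqrt (p + q * c) + Real.sqrt (r + s * c)
      ≤ Real.sqrt (p + q * c0) + Real.sqrt (r + s * c0) := by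
  have hSP : 0 < Real.sqrt (p + q * c0) := Real.sqrt_pos.2 hP
  have hSR : 0 < Real.sqrt (r + s * c0) := Real.sqrt_pos.2 hR
  have t1 := aux_tangent (p + q * c) (p + q * c0) h1 hP
  have t2 := aux_tangent (r + s * c) (r + s * c0) h2 hR
  set SP := Real.sqrt (p + q * c0) with hSPdef
  set SR := Real.sqrt (r + s * c0) with hSRdef
  have e : (p + q * c - (p + q * c0)) / (2 * SP)
      + (r + s * c - (r + s * c0)) / (2 * SR) = 0 := by
    rw [div_add_div _ _ (by positivity) (by positivity), div_eq_zero_iff]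
    left
    have h3 : (p + q * c - (p + q * c0)) * (2 * SR) + (r + s * c - (r + s * c0)) * (2 * SP)
        = 2 * (c - c0) * (q * SR + s * SP) := by ring
    linear_combination h3 + 2 * (c - c0) * hcrit
  linarith

/-- Part (A) of the norm formula for complex bilinear forms on `ℓ∞²(ℂ)` with real
coefficients: under the stated sign and inequality conditions, the norm involves an extra
square-root term evaluated at the critical value `c₀`. -/
theorem norm_bilinear_form_linf2_complex_caseA
    (a11 a12 a21 a22 : ℝ)
    (T : (Fin 2 → ℂ) →L[ℂ] (Fin 2 → ℂ) →L[ℂ] ℂ)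
    (hT : ∀ z w : Fin 2 → ℂ,
      T z w = (a11 : ℂ) * z 0 * w 0 + (a21 : ℂ) * z 1 * w 0
        + (a12 : ℂ) * z 0 * w 1 + (a22 : ℂ) * z 1 * w 1)
    (h11 : a11 ≠ 0) (h21 : a21 ≠ 0) (h12 : a12 ≠ 0) (h22 : a22 ≠ 0)
    (hsgn : a11 * a21 / (a12 * a22) < 0)
    (hle : |a11 ^ 2 * a21 ^ 2 / (a12 ^ 2 * a22 ^ 2) * (a12 ^ 2 + a22 ^ 2)
            - (a11 ^ 2 + a21 ^ 2)|
          ≤ |2 * a11 * a21 * (1 - a11 * a21 / (a12 * a22))|)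
    (c0 : ℝ)
    (hc0 : c0 = (a11 ^ 2 * a21 ^ 2 / (a12 ^ 2 * a22 ^ 2) * (a12 ^ 2 + a22 ^ 2)
            - (a11 ^ 2 + a21 ^ 2)) / (2 * a11 * a21 * (1 - a11 * a21 / (a12 * a22)))) :
    ‖T‖ = max (max (|a11 + a21| + |a12 + a22|) (|a11 - a21| + |a12 - a22|))
      (Real.sqrt (a11 ^ 2 + a21 ^ 2 + 2 * a11 * a21 * c0)
        + Real.sqrt (a12 ^ 2 + a22 ^ 2 + 2 * a12 * a22 * c0)) := by
  have ha12a22 : a12 * a22 ≠ 0 := mul_ne_zero h12 h22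
  have hqs : a11 * a21 * (a12 * a22) < 0 := by
    rcases div_neg_iff.mp hsgn with ⟨h, h'⟩ | ⟨h, h'⟩ <;> nlinarith
  have hfac : 0 < 1 - a11 * a21 / (a12 * a22) := by linarith
  have hden : 2 * a11 * a21 * (1 - a11 * a21 / (a12 * a22)) ≠ 0 := by
    apply mul_ne_zero
    · exact mul_ne_zero (mul_ne_zero two_ne_zero h11) h21
    · exact ne_of_gt hfac
  have hc1 : |c0| ≤ 1 := by
    rw [hc0, abs_div, div_le_one (abs_pos.mpr hden)]; exact hle
  obtain ⟨hcm, hcp⟩ := abs_le.mp hc1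
  have hPnn : 0 ≤ a11 ^ 2 + a21 ^ 2 + 2 * a11 * a21 * c0 := by
    nlinarith [mul_nonneg (by linarith : (0:ℝ) ≤ 1 - c0) (sq_nonneg (a11 - a21)),
      mul_nonneg (by linarith : (0:ℝ) ≤ 1 + c0) (sq_nonneg (a11 + a21))]
  have hRnn : 0 ≤ a12 ^ 2 + a22 ^ 2 + 2 * a12 * a22 * c0 := by
    nlinarith [mul_nonneg (by linarith : (0:ℝ) ≤ 1 - c0) (sq_nonneg (a12 - a22)),
      mul_nonneg (by linarith : (0:ℝ) ≤ 1 + c0) (sq_nonneg (a12 + a22))]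
  have hid : (2 * a11 * a21) ^ 2 * (a12 ^ 2 + a22 ^ 2 + 2 * a12 * a22 * c0)
      = (2 * a12 * a22) ^ 2 * (a11 ^ 2 + a21 ^ 2 + 2 * a11 * a21 * c0) := by
    have hdiff : a12 * a22 - a11 * a21 ≠ 0 := by intro h; nlinarith
    rw [hc0]
    field_simp [hdiff]
    ring
  have hP : 0 < a11 ^ 2 + a21 ^ 2 + 2 * a11 * a21 * c0 := by
    rcases hPnn.eq_or_lt with h | h
    · exfalso
      have hR0 : a12 ^ 2 + a22 ^ 2 + 2 * a12 * a22 * c0 = 0 := by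
        have h2 : (2 * a11 * a21) ^ 2 ≠ 0 := by positivity
        have := hid
        rw [← h] at this
        simpa [h2] using this
      have e1 : 2 * a11 * a21 * c0 = -(a11 ^ 2 + a21 ^ 2) := by linarith
      have e2 : 2 * a12 * a22 * c0 = -(a12 ^ 2 + a22 ^ 2) := by linarith
      have e3 : (2 * a11 * a21 * c0) * (2 * a12 * a22 * c0)
          = (a11 ^ 2 + a21 ^ 2) * (a12 ^ 2 + a22 ^ 2) := by rw [e1, e2]; ring
      have hpr : 0 < (a11 ^ 2 + a21 ^ 2) * (a12 ^ 2 + a22 ^ 2) := by positivity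
      nlinarith [sq_nonneg c0, hqs]
    · exact h
  have hR : 0 < a12 ^ 2 + a22 ^ 2 + 2 * a12 * a22 * c0 := by
    nlinarith [mul_pos (show (0:ℝ) < (2 * a12 * a22) ^ 2 by positivity) hP,
      sq_nonneg (2 * a11 * a21)]
  set SP := Real.sqrt (a11 ^ 2 + a21 ^ 2 + 2 * a11 * a21 * c0) with hSPdef
  set SR := Real.sqrt (a12 ^ 2 + a22 ^ 2 + 2 * a12 * a22 * c0) with hSRdef
  have hSP : 0 < SP := Real.sqrt_pos.2 hP
  have hSR : 0 < SR := Real.sqrt_pos.2 hR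
  have eP : SP ^ 2 = a11 ^ 2 + a21 ^ 2 + 2 * a11 * a21 * c0 := Real.sq_sqrt hP.le
  have eR : SR ^ 2 = a12 ^ 2 + a22 ^ 2 + 2 * a12 * a22 * c0 := Real.sq_sqrt hR.le
  have hcrit : 2 * a11 * a21 * SR + 2 * a12 * a22 * SP = 0 := by
    have hAB : (2 * a11 * a21 * SR) * (2 * a12 * a22 * SP) < 0 := by
      have e : (2 * a11 * a21 * SR) * (2 * a12 * a22 * SP)
          = 4 * (a11 * a21 * (a12 * a22)) * (SR * SP) := by ring
      rw [e]
      exact mul_neg_of_neg_of_pos (by linarith) (by positivity)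
    have hfac2 : (2 * a11 * a21 * SR + 2 * a12 * a22 * SP)
        * (2 * a11 * a21 * SR - 2 * a12 * a22 * SP) = 0 := by
      have e : (2 * a11 * a21 * SR + 2 * a12 * a22 * SP)
          * (2 * a11 * a21 * SR - 2 * a12 * a22 * SP)
          = (2 * a11 * a21) ^ 2 * SR ^ 2 - (2 * a12 * a22) ^ 2 * SP ^ 2 := by ring
      rw [e, eP, eR]
      linarith [hid]
    rcases mul_eq_zero.mp hfac2 with h | h
    · exact h
    · exfalso
      have e2 : 2 * a11 * a21 * SR = 2 * a12 * a22 * SP := by linarith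
      rw [e2] at hAB
      exact absurd hAB (not_lt.2 (mul_self_nonneg _))
  -- key inequality at arbitrary c
  have keyc : ∀ c : ℝ, 0 ≤ a11 ^ 2 + a21 ^ 2 + 2 * a11 * a21 * c →
      0 ≤ a12 ^ 2 + a22 ^ 2 + 2 * a12 * a22 * c →
      Real.sqrt (a11 ^ 2 + a21 ^ 2 + 2 * a11 * a21 * c)
        + Real.sqrt (a12 ^ 2 + a22 ^ 2 + 2 * a12 * a22 * c) ≤ SP + SR := by
    intro c h1 h2
    exact aux_key (a11 ^ 2 + a21 ^ 2) (2 * a11 * a21) (a12 ^ 2 + a22 ^ 2) (2 * a12 * a22)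
      c0 c hP hR hcrit h1 h2
  have hM1 : |a11 + a21| + |a12 + a22| ≤ SP + SR := by
    have h := keyc 1 (by linarith [sq_nonneg (a11 + a21)]) (by linarith [sq_nonneg (a12 + a22)])
    rw [show a11 ^ 2 + a21 ^ 2 + 2 * a11 * a21 * 1 = (a11 + a21) ^ 2 by ring,
      show a12 ^ 2 + a22 ^ 2 + 2 * a12 * a22 * 1 = (a12 + a22) ^ 2 by ring,
      Real.sqrt_sq_eq_abs, Real.sqrt_sq_eq_abs] at h
    exact h
  have hM2 : |a11 - a21| + |a12 - a22| ≤ SP + SR := by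
    have h := keyc (-1) (by linarith [sq_nonneg (a11 - a21)]) (by linarith [sq_nonneg (a12 - a22)])
    rw [show a11 ^ 2 + a21 ^ 2 + 2 * a11 * a21 * (-1) = (a11 - a21) ^ 2 by ring,
      show a12 ^ 2 + a22 ^ 2 + 2 * a12 * a22 * (-1) = (a12 - a22) ^ 2 by ring,
      Real.sqrt_sq_eq_abs, Real.sqrt_sq_eq_abs] at h
    exact h
  rw [max_eq_right (max_le hM1 hM2)]
  clear hle hc0 hsgn hid hden hfac hqs ha12a22 hcrit hPnn hRnn hc1 hM1 hM2 h11 h21 h12 h22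
  apply le_antisymm
  · -- upper bound
    apply ContinuousLinearMap.opNorm_le_bound _ (by positivity)
    intro z
    apply ContinuousLinearMap.opNorm_le_bound _ (by positivity)
    intro w
    rw [hT z w]
    have hw0 : ‖w 0‖ ≤ ‖w‖ := norm_le_pi_norm w 0
    have hw1 : ‖w 1‖ ≤ ‖w‖ := norm_le_pi_norm w 1
    set u := (a11:ℂ) * z 0 + (a21:ℂ) * z 1 with hu
    set v := (a12:ℂ) * z 0 + (a22:ℂ) * z 1 with hv
    have hE : (a11:ℂ) * z 0 * w 0 + (a21:ℂ) * z 1 * w 0 + (a12:ℂ) * z 0 * w 1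
        + (a22:ℂ) * z 1 * w 1 = u * w 0 + v * w 1 := by rw [hu, hv]; ring
    rw [hE]
    have step1 : ‖u * w 0 + v * w 1‖ ≤ (‖u‖ + ‖v‖) * ‖w‖ := by
      calc ‖u * w 0 + v * w 1‖ ≤ ‖u * w 0‖ + ‖v * w 1‖ := norm_add_le _ _
        _ = ‖u‖ * ‖w 0‖ + ‖v‖ * ‖w 1‖ := by rw [norm_mul, norm_mul]
        _ ≤ ‖u‖ * ‖w‖ + ‖v‖ * ‖w‖ := by gcongr
        _ = (‖u‖ + ‖v‖) * ‖w‖ := by ring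
    have step2 : ‖u‖ + ‖v‖ ≤ (SP + SR) * ‖z‖ := by
      rcases eq_or_lt_of_le (norm_nonneg z) with hz | hz
      · have hz0 : z = 0 := norm_eq_zero.mp hz.symm
        rw [hu, hv, hz0]
        simp
        
      · set N := ‖z‖ with hN
        obtain ⟨c, hc⟩ : ∃ c : ℝ, (z 0).re * (z 1).re + (z 0).im * (z 1).im = c * N ^ 2 :=
          ⟨((z 0).re * (z 1).re + (z 0).im * (z 1).im) / N ^ 2, by field_simp⟩
        set t := (z 0).re * (z 1).re + (z 0).im * (z 1).im with ht
        have hm0 : (z 0).re ^ 2 + (z 0).im ^ 2 ≤ N ^ 2 := by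
          have h0 : ‖z 0‖ ≤ N := norm_le_pi_norm z 0
          have h1 := Complex.sq_norm (z 0)
          rw [Complex.normSq_apply] at h1
          nlinarith [norm_nonneg (z 0)]
        have hm1 : (z 1).re ^ 2 + (z 1).im ^ 2 ≤ N ^ 2 := by
          have h0 : ‖z 1‖ ≤ N := norm_le_pi_norm z 1
          have h1 := Complex.sq_norm (z 1)
          rw [Complex.normSq_apply] at h1
          nlinarith [norm_nonneg (z 1)]
        have hu2 : ‖u‖ ^ 2 = a11 ^ 2 * ((z 0).re ^ 2 + (z 0).im ^ 2)
            + a21 ^ 2 * ((z 1).re ^ 2 + (z 1).im ^ 2) + 2 * a11 * a21 * t := by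
          rw [hu, Complex.sq_norm, Complex.normSq_apply, ht]
          simp [Complex.add_re, Complex.add_im, Complex.mul_re, Complex.mul_im]
          ring
        have hv2 : ‖v‖ ^ 2 = a12 ^ 2 * ((z 0).re ^ 2 + (z 0).im ^ 2)
            + a22 ^ 2 * ((z 1).re ^ 2 + (z 1).im ^ 2) + 2 * a12 * a22 * t := by
          rw [hv, Complex.sq_norm, Complex.normSq_apply, ht]
          simp [Complex.add_re, Complex.add_im, Complex.mul_re, Complex.mul_im]
          ring
        have hu2' : ‖u‖ ^ 2 ≤ (a11 ^ 2 + a21 ^ 2) * N ^ 2 + 2 * a11 * a21 * t := by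
          have q0 := mul_le_mul_of_nonneg_left hm0 (sq_nonneg a11)
          have q1 := mul_le_mul_of_nonneg_left hm1 (sq_nonneg a21)
          linarith
        have hv2' : ‖v‖ ^ 2 ≤ (a12 ^ 2 + a22 ^ 2) * N ^ 2 + 2 * a12 * a22 * t := by
          have q0 := mul_le_mul_of_nonneg_left hm0 (sq_nonneg a12)
          have q1 := mul_le_mul_of_nonneg_left hm1 (sq_nonneg a22)
          linarith
        have hN2 : (0:ℝ) < N ^ 2 := by positivity
        have harg1 : (a11 ^ 2 + a21 ^ 2) * N ^ 2 + 2 * a11 * a21 * t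
            = N ^ 2 * (a11 ^ 2 + a21 ^ 2 + 2 * a11 * a21 * c) := by
          rw [hc]; ring
        have harg2 : (a12 ^ 2 + a22 ^ 2) * N ^ 2 + 2 * a12 * a22 * t
            = N ^ 2 * (a12 ^ 2 + a22 ^ 2 + 2 * a12 * a22 * c) := by
          rw [hc]; ring
        have hna : 0 ≤ a11 ^ 2 + a21 ^ 2 + 2 * a11 * a21 * c := by
          nlinarith [sq_nonneg ‖u‖, hu2', harg1, hN2]
          
        have hnb : 0 ≤ a12 ^ 2 + a22 ^ 2 + 2 * a12 * a22 * c := by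
          nlinarith [sq_nonneg ‖v‖, hv2', harg2, hN2]
        have hun : ‖u‖ ≤ N * Real.sqrt (a11 ^ 2 + a21 ^ 2 + 2 * a11 * a21 * c) := by
          rw [show ‖u‖ = Real.sqrt (‖u‖ ^ 2) from (Real.sqrt_sq (norm_nonneg u)).symm]
          calc Real.sqrt (‖u‖ ^ 2)
              ≤ Real.sqrt (N ^ 2 * (a11 ^ 2 + a21 ^ 2 + 2 * a11 * a21 * c)) := by
                apply Real.sqrt_le_sqrt
                rw [← harg1]
                exact hu2'
            _ = N * Real.sqrt (a11 ^ 2 + a21 ^ 2 + 2 * a11 * a21 * c) := by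
                rw [Real.sqrt_mul (sq_nonneg N), Real.sqrt_sq hz.le]
        have hvn : ‖v‖ ≤ N * Real.sqrt (a12 ^ 2 + a22 ^ 2 + 2 * a12 * a22 * c) := by
          rw [show ‖v‖ = Real.sqrt (‖v‖ ^ 2) from (Real.sqrt_sq (norm_nonneg v)).symm]
          calc Real.sqrt (‖v‖ ^ 2)
              ≤ Real.sqrt (N ^ 2 * (a12 ^ 2 + a22 ^ 2 + 2 * a12 * a22 * c)) := by
                apply Real.sqrt_le_sqrt
                rw [← harg2]
                exact hv2'
            _ = N * Real.sqrt (a12 ^ 2 + a22 ^ 2 + 2 * a12 * a22 * c) := by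
                rw [Real.sqrt_mul (sq_nonneg N), Real.sqrt_sq hz.le]
        have hkey := keyc c hna hnb
        have hmul := mul_le_mul_of_nonneg_left hkey hz.le
        nlinarith [hun, hvn, hmul]
    calc ‖u * w 0 + v * w 1‖ ≤ (‖u‖ + ‖v‖) * ‖w‖ := step1
      _ ≤ (SP + SR) * ‖z‖ * ‖w‖ := by
          exact mul_le_mul_of_nonneg_right step2 (norm_nonneg w)
  · -- lower bound
    have h1c : (0:ℝ) ≤ 1 - c0 ^ 2 := by nlinarith
    set s1 := Real.sqrt (1 - c0 ^ 2) with hs1def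
    have hs1 : s1 ^ 2 = 1 - c0 ^ 2 := Real.sq_sqrt h1c
    set z1 : ℂ := (c0 : ℂ) + (s1 : ℂ) * Complex.I with hz1
    have hz1n : ‖z1‖ = 1 := by
      rw [hz1, Complex.norm_def, Complex.normSq_apply]
      simp only [Complex.add_re, Complex.add_im, Complex.mul_re, Complex.mul_im,
        Complex.ofReal_re, Complex.ofReal_im, Complex.I_re, Complex.I_im]
      rw [show (c0 + (s1 * 0 - 0 * 1)) * (c0 + (s1 * 0 - 0 * 1))
          + (0 + (s1 * 1 + 0 * 0)) * (0 + (s1 * 1 + 0 * 0)) = (1:ℝ) by nlinarith [hs1]]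
      exact Real.sqrt_one
    set u : ℂ := (a11 : ℂ) + (a21 : ℂ) * z1 with hu
    set v : ℂ := (a12 : ℂ) + (a22 : ℂ) * z1 with hv
    have hun : Complex.normSq u = a11 ^ 2 + a21 ^ 2 + 2 * a11 * a21 * c0 := by
      rw [hu, hz1, Complex.normSq_apply]
      simp only [Complex.add_re, Complex.add_im, Complex.mul_re, Complex.mul_im,
        Complex.ofReal_re, Complex.ofReal_im, Complex.I_re, Complex.I_im]
      nlinarith [hs1]
    have hvn : Complex.normSq v = a12 ^ 2 + a22 ^ 2 + 2 * a12 * a22 * c0 := by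
      rw [hv, hz1, Complex.normSq_apply]
      simp only [Complex.add_re, Complex.add_im, Complex.mul_re, Complex.mul_im,
        Complex.ofReal_re, Complex.ofReal_im, Complex.I_re, Complex.I_im]
      nlinarith [hs1]
    have huabs : ‖u‖ = SP := by
      rw [Complex.norm_def, hun, hSPdef]
    have hvabs : ‖v‖ = SR := by
      rw [Complex.norm_def, hvn, hSRdef]
    set z : Fin 2 → ℂ := ![1, z1] with hz
    set w : Fin 2 → ℂ := ![(starRingEnd ℂ) u / ((SP : ℝ) : ℂ),
      (starRingEnd ℂ) v / ((SR : ℝ) : ℂ)] with hw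
    have hzn : ‖z‖ ≤ 1 := by
      rw [pi_norm_le_iff_of_nonneg zero_le_one]
      intro i
      fin_cases i
      · simp [hz]
      · simp [hz, hz1n]
    have hwn : ‖w‖ ≤ 1 := by
      rw [pi_norm_le_iff_of_nonneg zero_le_one]
      intro i
      fin_cases i
      · show ‖(starRingEnd ℂ) u / ((SP : ℝ) : ℂ)‖ ≤ 1
        rw [norm_div, RCLike.norm_conj, huabs, Complex.norm_real, Real.norm_eq_abs,
          abs_of_nonneg hSP.le, div_self hSP.ne']
      · show ‖(starRingEnd ℂ) v / ((SR : ℝ) : ℂ)‖ ≤ 1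
        rw [norm_div, RCLike.norm_conj, hvabs, Complex.norm_real, Real.norm_eq_abs,
          abs_of_nonneg hSR.le, div_self hSR.ne']
    have hTzw : T z w = ((SP + SR : ℝ) : ℂ) := by
      rw [hT z w]
      simp only [hz, hw, Matrix.cons_val_zero, Matrix.cons_val_one, Matrix.head_cons]
      have e1 : (a11:ℂ) * 1 * ((starRingEnd ℂ) u / ((SP : ℝ) : ℂ))
          + (a21:ℂ) * z1 * ((starRingEnd ℂ) u / ((SP : ℝ) : ℂ))
          + (a12:ℂ) * 1 * ((starRingEnd ℂ) v / ((SR : ℝ) : ℂ))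
          + (a22:ℂ) * z1 * ((starRingEnd ℂ) v / ((SR : ℝ) : ℂ))
          = (u * (starRingEnd ℂ) u) / ((SP : ℝ) : ℂ)
            + (v * (starRingEnd ℂ) v) / ((SR : ℝ) : ℂ) := by
        rw [hu, hv]; ring
      rw [e1, Complex.mul_conj, Complex.mul_conj, hun, hvn]
      rw [← Complex.ofReal_div, ← Complex.ofReal_div, ← Complex.ofReal_add]
      congr 1
      rw [hSPdef, hSRdef, Real.div_sqrt, Real.div_sqrt]
    have hnorm : ‖T z w‖ = SP + SR := by
      rw [hTzw, Complex.norm_real, Real.norm_eq_abs]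
      exact abs_of_nonneg (by positivity)
    have hbound : ‖T z w‖ ≤ ‖T‖ * ‖z‖ * ‖w‖ := T.le_opNorm₂ z w
    rw [hnorm] at hbound
    have h1 : ‖T‖ * ‖z‖ * ‖w‖ ≤ ‖T‖ * 1 * 1 := by
      gcongr
    linarith
end

section
/- Let T : ℓ∞²(ℂ) × ℓ∞²(ℂ) → ℂ be the bilinear form T(z,w) = Σ_{i,j=1}^{2} a_{ij} z_i w_j with real coefficients a_{ij}. Suppose it is NOT the case that all four coefficients are nonzero with a₁₁a₂₁/(a₁₂a₂₂) < 0 and |(a₁₁²a₂₁²/(a₁₂²a₂₂²))(a₁₂²+a₂₂²) − (a₁₁²+a₂₁²)| ≤ |2a₁₁a₂₁(1 − a₁₁a₂₁/(a₁₂a₂₂))|. Then ‖T‖ = max{ |a₁₁+a₂₁| + |a₁₂+a₂₂| , |a₁₁−a₂₁| + |a₁₂−a₂₂| }. -/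
set_option maxHeartbeats 1000000

private lemma my_sign_mul_abs (x : ℝ) : x * (if 0 ≤ x then (1:ℝ) else -1) = |x| := by
  split_ifs with hx
  · rw [mul_one, abs_of_nonneg hx]
  · rw [abs_of_neg (lt_of_not_ge hx)]; ring

private lemma sqrt_key (A B C D u : ℝ) (hB : 0 ≤ B) (hAB : 0 < A + B)
    (h1 : 0 ≤ A + B * u) (h2 : 0 ≤ C + D * u) (h3 : 0 ≤ C + D)
    (hu : u ≤ 1)
    (hphiu : D ^ 2 * (A + B * u) ≤ B ^ 2 * (C + D * u))
    (hphi1 : D ^ 2 * (A + B) ≤ B ^ 2 * (C + D)) :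
    Real.sqrt (A + B * u) + Real.sqrt (C + D * u)
      ≤ Real.sqrt (A + B) + Real.sqrt (C + D) := by
  set x := Real.sqrt (A + B * u) with hxeq
  set x' := Real.sqrt (A + B) with hx'eq
  set y := Real.sqrt (C + D * u) with hyeq
  set y' := Real.sqrt (C + D) with hy'eq
  have hxn : 0 ≤ x := Real.sqrt_nonneg _
  have hx'p : 0 < x' := Real.sqrt_pos.mpr hAB
  have hyn : 0 ≤ y := Real.sqrt_nonneg _
  have hy'n : 0 ≤ y' := Real.sqrt_nonneg _
  have hx2 : x ^ 2 = A + B * u := Real.sq_sqrt h1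
  have hx'2 : x' ^ 2 = A + B := Real.sq_sqrt hAB.le
  have hy2 : y ^ 2 = C + D * u := Real.sq_sqrt h2
  have hy'2 : y' ^ 2 = C + D := Real.sq_sqrt h3
  have hxx' : x ≤ x' := by
    rw [hxeq, hx'eq]
    exact Real.sqrt_le_sqrt (by nlinarith [mul_nonneg hB (show (0:ℝ) ≤ 1 - u by linarith)])
  have k1 : |D| * x ≤ B * y := by
    have e5 : |D| * x = Real.sqrt (D ^ 2 * (A + B * u)) := by
      rw [Real.sqrt_mul (sq_nonneg D), Real.sqrt_sq_eq_abs, ← hxeq]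
    have e6 : B * y = Real.sqrt (B ^ 2 * (C + D * u)) := by
      rw [Real.sqrt_mul (sq_nonneg B), Real.sqrt_sq_eq_abs, abs_of_nonneg hB, ← hyeq]
    rw [e5, e6]
    exact Real.sqrt_le_sqrt hphiu
  have k2 : |D| * x' ≤ B * y' := by
    have e5 : |D| * x' = Real.sqrt (D ^ 2 * (A + B)) := by
      rw [Real.sqrt_mul (sq_nonneg D), Real.sqrt_sq_eq_abs, ← hx'eq]
    have e6 : B * y' = Real.sqrt (B ^ 2 * (C + D)) := by
      rw [Real.sqrt_mul (sq_nonneg B), Real.sqrt_sq_eq_abs, abs_of_nonneg hB, ← hy'eq]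
    rw [e5, e6]
    exact Real.sqrt_le_sqrt hphi1
  rcases eq_or_lt_of_le (add_nonneg hyn hy'n) with hyy | hyy
  · have hy0 : y = 0 := by linarith
    have hy'0 : y' = 0 := by linarith
    rw [hy0, hy'0]
    linarith
  · have e1 : x' ^ 2 - x ^ 2 = B * (1 - u) := by rw [hx'2, hx2]; ring
    have e2 : y' ^ 2 - y ^ 2 = D * (1 - u) := by rw [hy'2, hy2]; ring
    have k3 : |D| * (x + x') ≤ B * (y + y') := by linarith [k1, k2]
    have hD' : -D ≤ |D| := neg_le_abs D
    have hrhs : 0 ≤ (1 - u) * (B * (y + y') + D * (x + x')) := by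
      have h4 : 0 ≤ (|D| + D) * (x + x') :=
        mul_nonneg (by linarith) (by linarith)
      exact mul_nonneg (by linarith) (by nlinarith [k3, h4])
    have keyeq : (x' + y' - (x + y)) * ((x + x') * (y + y'))
        = (1 - u) * (B * (y + y') + D * (x + x')) := by
      linear_combination (y + y') * e1 + (x + x') * e2
    have hprod : (0:ℝ) < (x + x') * (y + y') :=
      mul_pos (by linarith) hyy
    have h5 : 0 ≤ (x' + y' - (x + y)) * ((x + x') * (y + y')) := keyeq ▸ hrhs
    have h6 := (mul_nonneg_iff_of_pos_right hprod).mp h5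
    linarith

private lemma scalar_bound (a11 a12 a21 a22 : ℝ)
    (h : ¬ (a11 ≠ 0 ∧ a21 ≠ 0 ∧ a12 ≠ 0 ∧ a22 ≠ 0
        ∧ a11 * a21 / (a12 * a22) < 0
        ∧ |a11 ^ 2 * a21 ^ 2 / (a12 ^ 2 * a22 ^ 2) * (a12 ^ 2 + a22 ^ 2)
            - (a11 ^ 2 + a21 ^ 2)|
          ≤ |2 * a11 * a21 * (1 - a11 * a21 / (a12 * a22))|))
    (t : ℝ) (ht1 : -1 ≤ t) (ht2 : t ≤ 1) :
    Real.sqrt ((a11 ^ 2 + a21 ^ 2) + 2 * a11 * a21 * t)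
      + Real.sqrt ((a12 ^ 2 + a22 ^ 2) + 2 * a12 * a22 * t)
      ≤ max (|a11 + a21| + |a12 + a22|) (|a11 - a21| + |a12 - a22|) := by
  have hA1 : (0:ℝ) ≤ 1 - t := by linarith
  have hA2 : (0:ℝ) ≤ 1 + t := by linarith
  have e1 : Real.sqrt ((a11 ^ 2 + a21 ^ 2) + 2 * a11 * a21) = |a11 + a21| := by
    rw [show (a11 ^ 2 + a21 ^ 2) + 2 * a11 * a21 = (a11 + a21) ^ 2 by ring,
      Real.sqrt_sq_eq_abs]
  have e2 : Real.sqrt ((a12 ^ 2 + a22 ^ 2) + 2 * a12 * a22) = |a12 + a22| := by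
    rw [show (a12 ^ 2 + a22 ^ 2) + 2 * a12 * a22 = (a12 + a22) ^ 2 by ring,
      Real.sqrt_sq_eq_abs]
  have e3 : Real.sqrt ((a11 ^ 2 + a21 ^ 2) + -(2 * a11 * a21)) = |a11 - a21| := by
    rw [show (a11 ^ 2 + a21 ^ 2) + -(2 * a11 * a21) = (a11 - a21) ^ 2 by ring,
      Real.sqrt_sq_eq_abs]
  have e4 : Real.sqrt ((a12 ^ 2 + a22 ^ 2) + -(2 * a12 * a22)) = |a12 - a22| := by
    rw [show (a12 ^ 2 + a22 ^ 2) + -(2 * a12 * a22) = (a12 - a22) ^ 2 by ring,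
      Real.sqrt_sq_eq_abs]
  have hr1 : 0 ≤ (a11 ^ 2 + a21 ^ 2) + 2 * a11 * a21 * t := by
    linarith [mul_nonneg hA1 (sq_nonneg (a11 - a21)), mul_nonneg hA2 (sq_nonneg (a11 + a21))]
  have hr2 : 0 ≤ (a12 ^ 2 + a22 ^ 2) + 2 * a12 * a22 * t := by
    linarith [mul_nonneg hA1 (sq_nonneg (a12 - a22)), mul_nonneg hA2 (sq_nonneg (a12 + a22))]
  -- endpoint bounds in the monotone cases
  have up1 : 0 ≤ a11 * a21 →
      Real.sqrt ((a11 ^ 2 + a21 ^ 2) + 2 * a11 * a21 * t) ≤ |a11 + a21| := by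
    intro hp
    rw [← e1]
    exact Real.sqrt_le_sqrt (by linarith [mul_nonneg hp hA1])
  have up2 : 0 ≤ a12 * a22 →
      Real.sqrt ((a12 ^ 2 + a22 ^ 2) + 2 * a12 * a22 * t) ≤ |a12 + a22| := by
    intro hq
    rw [← e2]
    exact Real.sqrt_le_sqrt (by linarith [mul_nonneg hq hA1])
  have dn1 : a11 * a21 ≤ 0 →
      Real.sqrt ((a11 ^ 2 + a21 ^ 2) + 2 * a11 * a21 * t) ≤ |a11 - a21| := by
    intro hp
    rw [← e3]
    exact Real.sqrt_le_sqrt (by linarith [mul_nonneg (show (0:ℝ) ≤ -(a11 * a21) by linarith) hA2])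
  have dn2 : a12 * a22 ≤ 0 →
      Real.sqrt ((a12 ^ 2 + a22 ^ 2) + 2 * a12 * a22 * t) ≤ |a12 - a22| := by
    intro hq
    rw [← e4]
    exact Real.sqrt_le_sqrt (by linarith [mul_nonneg (show (0:ℝ) ≤ -(a12 * a22) by linarith) hA2])
  -- main polynomial inequality derived from the negated condition
  have main : a11 * a21 * (a12 * a22) < 0 →
      |2 * (a11 * a21) * (a12 * a22) * (a12 * a22 - a11 * a21)|
        < |(a11 * a21) ^ 2 * (a12 ^ 2 + a22 ^ 2) - (a11 ^ 2 + a21 ^ 2) * (a12 * a22) ^ 2| := by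
    intro hpq
    push_neg at h
    have h11 : a11 ≠ 0 := by rintro rfl; simp at hpq
    have h21 : a21 ≠ 0 := by rintro rfl; simp at hpq
    have h12 : a12 ≠ 0 := by rintro rfl; simp at hpq
    have h22 : a22 ≠ 0 := by rintro rfl; simp at hpq
    have hdiv : a11 * a21 / (a12 * a22) < 0 := div_neg_iff.mpr (mul_neg_iff.mp hpq)
    have h6 := h h11 h21 h12 h22 hdiv
    have hqne : a12 * a22 ≠ 0 := mul_ne_zero h12 h22
    have hq2 : 0 < (a12 * a22) ^ 2 := (sq_nonneg _).lt_of_ne (Ne.symm (pow_ne_zero 2 hqne))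
    have habs2 : ∀ X : ℝ, |X * (a12 * a22) ^ 2| = |X| * (a12 * a22) ^ 2 := fun X => by
      rw [abs_mul, abs_of_pos hq2]
    have e5 : |2 * a11 * a21 * (1 - a11 * a21 / (a12 * a22))| * (a12 * a22) ^ 2
        = |2 * (a11 * a21) * (a12 * a22) * (a12 * a22 - a11 * a21)| := by
      have expand : 2 * a11 * a21 * (1 - a11 * a21 / (a12 * a22)) * (a12 * a22) ^ 2
          = 2 * (a11 * a21) * (a12 * a22) * (a12 * a22 - a11 * a21) := by
        field_simp
      rw [← habs2, expand]
    have e6 : |a11 ^ 2 * a21 ^ 2 / (a12 ^ 2 * a22 ^ 2) * (a12 ^ 2 + a22 ^ 2)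
          - (a11 ^ 2 + a21 ^ 2)| * (a12 * a22) ^ 2
        = |(a11 * a21) ^ 2 * (a12 ^ 2 + a22 ^ 2) - (a11 ^ 2 + a21 ^ 2) * (a12 * a22) ^ 2| := by
      have expand : (a11 ^ 2 * a21 ^ 2 / (a12 ^ 2 * a22 ^ 2) * (a12 ^ 2 + a22 ^ 2)
            - (a11 ^ 2 + a21 ^ 2)) * (a12 * a22) ^ 2
          = (a11 * a21) ^ 2 * (a12 ^ 2 + a22 ^ 2) - (a11 ^ 2 + a21 ^ 2) * (a12 * a22) ^ 2 := by
        field_simp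
      rw [← habs2, expand]
    have := mul_lt_mul_of_pos_right h6 hq2
    rw [e5, e6] at this
    exact this
  have hA0 : (0:ℝ) ≤ a11 ^ 2 + a21 ^ 2 := by positivity
  have hC0 : (0:ℝ) ≤ a12 ^ 2 + a22 ^ 2 := by positivity
  rcases le_or_gt 0 (a11 * a21) with hp | hp
  · rcases le_or_gt 0 (a12 * a22) with hq | hq
    · exact le_trans (add_le_add (up1 hp) (up2 hq)) (le_max_left _ _)
    · rcases hp.eq_or_lt with hp0 | hp0
      · exact le_trans (add_le_add (dn1 (le_of_eq hp0.symm)) (dn2 hq.le)) (le_max_right _ _)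
      · -- 0 < a11*a21, a12*a22 < 0
        have hpq : a11 * a21 * (a12 * a22) < 0 := mul_neg_of_pos_of_neg hp0 hq
        have hXY := main hpq
        rcases le_or_gt 0 ((a11 * a21) ^ 2 * (a12 ^ 2 + a22 ^ 2)
            - (a11 ^ 2 + a21 ^ 2) * (a12 * a22) ^ 2) with hY | hY
        · rw [abs_of_nonneg hY] at hXY
          obtain ⟨hX1, hX2⟩ := abs_lt.mp hXY
          have hk := sqrt_key (a11 ^ 2 + a21 ^ 2) (2 * a11 * a21)
            (a12 ^ 2 + a22 ^ 2) (2 * a12 * a22) t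
            (by linarith) (by linarith)
            hr1 hr2 (by linarith [sq_nonneg (a12 + a22)]) ht2
            (by linarith [mul_nonneg hA2 (sub_nonneg.mpr hX2.le),
                  mul_nonneg hA1 (sub_nonneg.mpr hX1.le)])
            (by linarith [hX2])
          rw [e1, e2] at hk
          exact le_trans hk (le_max_left _ _)
        · rw [abs_of_neg hY] at hXY
          obtain ⟨hX1, hX2⟩ := abs_lt.mp hXY
          have hX1' : (a11 * a21) ^ 2 * (a12 ^ 2 + a22 ^ 2)
              - (a11 ^ 2 + a21 ^ 2) * (a12 * a22) ^ 2
              < 2 * (a11 * a21) * (a12 * a22) * (a12 * a22 - a11 * a21) := by linarith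
          have hk := sqrt_key (a12 ^ 2 + a22 ^ 2) (-(2 * a12 * a22))
            (a11 ^ 2 + a21 ^ 2) (-(2 * a11 * a21)) (-t)
            (by linarith) (by linarith [hC0])
            (by linarith [hr2]) (by linarith [hr1]) (by linarith [sq_nonneg (a11 - a21)])
            (by linarith)
            (by linarith [mul_nonneg hA2 (sub_nonneg.mpr hX1'.le),
                  mul_nonneg hA1 (sub_nonneg.mpr hX2.le)])
            (by linarith [hX2])
          rw [show (a12 ^ 2 + a22 ^ 2) + -(2 * a12 * a22) * -t
                = (a12 ^ 2 + a22 ^ 2) + 2 * a12 * a22 * t by ring,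
              show (a11 ^ 2 + a21 ^ 2) + -(2 * a11 * a21) * -t
                = (a11 ^ 2 + a21 ^ 2) + 2 * a11 * a21 * t by ring,
              e4, e3] at hk
          have hfin : Real.sqrt ((a11 ^ 2 + a21 ^ 2) + 2 * a11 * a21 * t)
              + Real.sqrt ((a12 ^ 2 + a22 ^ 2) + 2 * a12 * a22 * t)
              ≤ |a11 - a21| + |a12 - a22| := by linarith
          exact le_trans hfin (le_max_right _ _)
  · rcases le_or_gt 0 (a12 * a22) with hq | hq
    · rcases hq.eq_or_lt with hq0 | hq0
      · exact le_trans (add_le_add (dn1 hp.le) (dn2 (le_of_eq hq0.symm))) (le_max_right _ _)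
      · -- a11*a21 < 0, 0 < a12*a22
        have hpq : a11 * a21 * (a12 * a22) < 0 := mul_neg_of_neg_of_pos hp hq0
        have hXY := main hpq
        rcases le_or_gt 0 ((a11 * a21) ^ 2 * (a12 ^ 2 + a22 ^ 2)
            - (a11 ^ 2 + a21 ^ 2) * (a12 * a22) ^ 2) with hY | hY
        · rw [abs_of_nonneg hY] at hXY
          obtain ⟨hX1, hX2⟩ := abs_lt.mp hXY
          have hk := sqrt_key (a11 ^ 2 + a21 ^ 2) (-(2 * a11 * a21))
            (a12 ^ 2 + a22 ^ 2) (-(2 * a12 * a22)) (-t)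
            (by linarith) (by linarith [hA0])
            (by linarith [hr1]) (by linarith [hr2]) (by linarith [sq_nonneg (a12 - a22)])
            (by linarith)
            (by linarith [mul_nonneg hA2 (sub_nonneg.mpr hX2.le),
                  mul_nonneg hA1 (sub_nonneg.mpr hX1.le)])
            (by linarith [hX1])
          rw [show (a11 ^ 2 + a21 ^ 2) + -(2 * a11 * a21) * -t
                = (a11 ^ 2 + a21 ^ 2) + 2 * a11 * a21 * t by ring,
              show (a12 ^ 2 + a22 ^ 2) + -(2 * a12 * a22) * -t
                = (a12 ^ 2 + a22 ^ 2) + 2 * a12 * a22 * t by ring,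
              e3, e4] at hk
          exact le_trans hk (le_max_right _ _)
        · rw [abs_of_neg hY] at hXY
          obtain ⟨hX1, hX2⟩ := abs_lt.mp hXY
          have hX1' : (a11 * a21) ^ 2 * (a12 ^ 2 + a22 ^ 2)
              - (a11 ^ 2 + a21 ^ 2) * (a12 * a22) ^ 2
              < 2 * (a11 * a21) * (a12 * a22) * (a12 * a22 - a11 * a21) := by linarith
          have hk := sqrt_key (a12 ^ 2 + a22 ^ 2) (2 * a12 * a22)
            (a11 ^ 2 + a21 ^ 2) (2 * a11 * a21) t
            (by linarith) (by linarith)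
            hr2 hr1 (by linarith [sq_nonneg (a11 + a21)]) ht2
            (by linarith [mul_nonneg hA2 (sub_nonneg.mpr hX1'.le),
                  mul_nonneg hA1 (sub_nonneg.mpr hX2.le)])
            (by linarith [hX1'])
          rw [e2, e1] at hk
          have hfin : Real.sqrt ((a11 ^ 2 + a21 ^ 2) + 2 * a11 * a21 * t)
              + Real.sqrt ((a12 ^ 2 + a22 ^ 2) + 2 * a12 * a22 * t)
              ≤ |a11 + a21| + |a12 + a22| := by linarith
          exact le_trans hfin (le_max_left _ _)
    · exact le_trans (add_le_add (dn1 hp.le) (dn2 hq.le)) (le_max_right _ _)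

private lemma norm_combo_sq (a b : ℝ) (p q : ℂ) :
    ‖(a : ℂ) * p + (b : ℂ) * q‖ ^ 2
      = a ^ 2 * ‖p‖ ^ 2 + b ^ 2 * ‖q‖ ^ 2 + 2 * a * b * (p * (starRingEnd ℂ) q).re := by
  have h1 : ∀ w : ℂ, ‖w‖ ^ 2 = w.re ^ 2 + w.im ^ 2 := by
    intro w
    rw [Complex.sq_norm, Complex.normSq_apply]
    ring
  rw [h1, h1, h1]
  simp only [Complex.add_re, Complex.add_im, Complex.mul_re, Complex.mul_im,
    Complex.ofReal_re, Complex.ofReal_im, Complex.conj_re, Complex.conj_im]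
  ring

private lemma norm_ge_aux (c1 c2 : ℝ) (T : (Fin 2 → ℂ) →L[ℂ] (Fin 2 → ℂ) →L[ℂ] ℂ)
    (z : Fin 2 → ℂ) (hz : ‖z‖ ≤ 1)
    (hval : ∀ w : Fin 2 → ℂ, T z w = (c1 : ℂ) * w 0 + (c2 : ℂ) * w 1) :
    |c1| + |c2| ≤ ‖T‖ := by
  set w : Fin 2 → ℂ := fun i =>
    if i = 0 then ((if 0 ≤ c1 then (1:ℝ) else -1 : ℝ) : ℂ)
    else ((if 0 ≤ c2 then (1:ℝ) else -1 : ℝ) : ℂ) with hwdef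
  have habs : ∀ c : ℝ, ‖((if 0 ≤ c then (1:ℝ) else -1 : ℝ) : ℂ)‖ ≤ 1 := by
    intro c; split_ifs <;> simp
  have hwnorm : ‖w‖ ≤ 1 := by
    rw [pi_norm_le_iff_of_nonneg zero_le_one]
    intro i
    by_cases hi : i = 0
    · rw [hi]
      simpa [hwdef] using habs c1
    · have hwi : w i = ((if 0 ≤ c2 then (1:ℝ) else -1 : ℝ) : ℂ) := by simp [hwdef, hi]
      rw [hwi]
      exact habs c2
  have hw0 : w 0 = ((if 0 ≤ c1 then (1:ℝ) else -1 : ℝ) : ℂ) := by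
    simp [hwdef]
  have hw1 : w 1 = ((if 0 ≤ c2 then (1:ℝ) else -1 : ℝ) : ℂ) := by
    simp [hwdef, show (1 : Fin 2) ≠ 0 from by decide]
  have hTw : T z w = (((|c1| + |c2| : ℝ)) : ℂ) := by
    rw [hval w, hw0, hw1, ← my_sign_mul_abs c1, ← my_sign_mul_abs c2]
    push_cast
    ring
  have h1 : |c1| + |c2| = ‖T z w‖ := by
    rw [hTw, Complex.norm_real, Real.norm_eq_abs]
    exact (abs_of_nonneg (by positivity)).symm
  rw [h1]
  calc ‖T z w‖ ≤ ‖T‖ * ‖z‖ * ‖w‖ := T.le_opNorm₂ z w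
    _ ≤ ‖T‖ * 1 * 1 := by
        have h2 : (0:ℝ) ≤ ‖T‖ := norm_nonneg T
        gcongr
    _ = ‖T‖ := by ring

/-- Part (B) of the norm formula for complex bilinear forms on `ℓ∞²(ℂ)` with real
coefficients: when the conditions of part (A) do not all hold, the norm is the same
expression as in the real case. -/
theorem norm_bilinear_form_linf2_complex_caseB
    (a11 a12 a21 a22 : ℝ)
    (T : (Fin 2 → ℂ) →L[ℂ] (Fin 2 → ℂ) →L[ℂ] ℂ)
    (hT : ∀ z w : Fin 2 → ℂ,
      T z w = (a11 : ℂ) * z 0 * w 0 + (a21 : ℂ) * z 1 * w 0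
        + (a12 : ℂ) * z 0 * w 1 + (a22 : ℂ) * z 1 * w 1)
    (h : ¬ (a11 ≠ 0 ∧ a21 ≠ 0 ∧ a12 ≠ 0 ∧ a22 ≠ 0
        ∧ a11 * a21 / (a12 * a22) < 0
        ∧ |a11 ^ 2 * a21 ^ 2 / (a12 ^ 2 * a22 ^ 2) * (a12 ^ 2 + a22 ^ 2)
            - (a11 ^ 2 + a21 ^ 2)|
          ≤ |2 * a11 * a21 * (1 - a11 * a21 / (a12 * a22))|)) :
    ‖T‖ = max (|a11 + a21| + |a12 + a22|) (|a11 - a21| + |a12 - a22|) := by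
  have hM0 : (0:ℝ) ≤ max (|a11 + a21| + |a12 + a22|) (|a11 - a21| + |a12 - a22|) :=
    le_trans (by positivity) (le_max_left _ _)
  apply le_antisymm
  · refine T.opNorm_le_bound hM0 fun z => ?_
    refine (T z).opNorm_le_bound (mul_nonneg hM0 (norm_nonneg z)) fun w => ?_
    rw [hT]
    have hz0 : ‖z 0‖ ≤ ‖z‖ := norm_le_pi_norm z 0
    have hz1 : ‖z 1‖ ≤ ‖z‖ := norm_le_pi_norm z 1
    have hw0 : ‖w 0‖ ≤ ‖w‖ := norm_le_pi_norm w 0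
    have hw1 : ‖w 1‖ ≤ ‖w‖ := norm_le_pi_norm w 1
    have hrearr : (a11 : ℂ) * z 0 * w 0 + (a21 : ℂ) * z 1 * w 0
        + (a12 : ℂ) * z 0 * w 1 + (a22 : ℂ) * z 1 * w 1
        = ((a11 : ℂ) * z 0 + (a21 : ℂ) * z 1) * w 0
          + ((a12 : ℂ) * z 0 + (a22 : ℂ) * z 1) * w 1 := by ring
    rw [hrearr]
    have key2 : ‖(a11 : ℂ) * z 0 + (a21 : ℂ) * z 1‖ + ‖(a12 : ℂ) * z 0 + (a22 : ℂ) * z 1‖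
        ≤ max (|a11 + a21| + |a12 + a22|) (|a11 - a21| + |a12 - a22|) * ‖z‖ := by
      rcases eq_or_lt_of_le (norm_nonneg z) with hr | hr
      · have hz00 : z 0 = 0 := norm_le_zero_iff.mp (hz0.trans hr.ge)
        have hz10 : z 1 = 0 := norm_le_zero_iff.mp (hz1.trans hr.ge)
        simp [hz00, hz10]
        positivity
      · have hr2' : (0:ℝ) < ‖z‖ ^ 2 := by positivity
        have hvle : |(z 0 * (starRingEnd ℂ) (z 1)).re| ≤ ‖z‖ ^ 2 := by
          calc |(z 0 * (starRingEnd ℂ) (z 1)).re|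
              ≤ ‖z 0 * (starRingEnd ℂ) (z 1)‖ := Complex.abs_re_le_norm _
            _ = ‖z 0 * (starRingEnd ℂ) (z 1)‖ := rfl
            _ = ‖z 0‖ * ‖z 1‖ := by rw [norm_mul, RCLike.norm_conj]
            _ ≤ ‖z‖ * ‖z‖ := mul_le_mul hz0 hz1 (norm_nonneg _) (norm_nonneg _)
            _ = ‖z‖ ^ 2 := by ring
        set v := (z 0 * (starRingEnd ℂ) (z 1)).re with hvdef
        set t := v / ‖z‖ ^ 2 with htdef
        have habs : |t| ≤ 1 := by
          rw [htdef, abs_div, abs_of_pos hr2']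
          exact (div_le_one hr2').mpr hvle
        obtain ⟨ht1, ht2⟩ := abs_le.mp habs
        have hvt : t * ‖z‖ ^ 2 = v := div_mul_cancel₀ v (ne_of_gt hr2')
        have hq0 : ‖z 0‖ ^ 2 ≤ ‖z‖ ^ 2 := pow_le_pow_left₀ (norm_nonneg _) hz0 2
        have hq1 : ‖z 1‖ ^ 2 ≤ ‖z‖ ^ 2 := pow_le_pow_left₀ (norm_nonneg _) hz1 2
        have hvt1 : 2 * a11 * a21 * (t * ‖z‖ ^ 2) = 2 * a11 * a21 * v := by rw [hvt]
        have hvt2 : 2 * a12 * a22 * (t * ‖z‖ ^ 2) = 2 * a12 * a22 * v := by rw [hvt]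
        have hb1 : ‖(a11 : ℂ) * z 0 + (a21 : ℂ) * z 1‖
            ≤ ‖z‖ * Real.sqrt ((a11 ^ 2 + a21 ^ 2) + 2 * a11 * a21 * t) := by
          have hsq : ‖(a11 : ℂ) * z 0 + (a21 : ℂ) * z 1‖ ^ 2
              ≤ ‖z‖ ^ 2 * ((a11 ^ 2 + a21 ^ 2) + 2 * a11 * a21 * t) := by
            rw [norm_combo_sq, ← hvdef]
            linarith [hvt1, mul_le_mul_of_nonneg_left hq0 (sq_nonneg a11),
              mul_le_mul_of_nonneg_left hq1 (sq_nonneg a21)]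
          calc ‖(a11 : ℂ) * z 0 + (a21 : ℂ) * z 1‖
              = Real.sqrt (‖(a11 : ℂ) * z 0 + (a21 : ℂ) * z 1‖ ^ 2) :=
                (Real.sqrt_sq (norm_nonneg _)).symm
            _ ≤ Real.sqrt (‖z‖ ^ 2 * ((a11 ^ 2 + a21 ^ 2) + 2 * a11 * a21 * t)) :=
                Real.sqrt_le_sqrt hsq
            _ = ‖z‖ * Real.sqrt ((a11 ^ 2 + a21 ^ 2) + 2 * a11 * a21 * t) := by
                rw [Real.sqrt_mul (sq_nonneg _), Real.sqrt_sq (norm_nonneg z)]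
        have hb2 : ‖(a12 : ℂ) * z 0 + (a22 : ℂ) * z 1‖
            ≤ ‖z‖ * Real.sqrt ((a12 ^ 2 + a22 ^ 2) + 2 * a12 * a22 * t) := by
          have hsq : ‖(a12 : ℂ) * z 0 + (a22 : ℂ) * z 1‖ ^ 2
              ≤ ‖z‖ ^ 2 * ((a12 ^ 2 + a22 ^ 2) + 2 * a12 * a22 * t) := by
            rw [norm_combo_sq, ← hvdef]
            linarith [hvt2, mul_le_mul_of_nonneg_left hq0 (sq_nonneg a12),
              mul_le_mul_of_nonneg_left hq1 (sq_nonneg a22)]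
          calc ‖(a12 : ℂ) * z 0 + (a22 : ℂ) * z 1‖
              = Real.sqrt (‖(a12 : ℂ) * z 0 + (a22 : ℂ) * z 1‖ ^ 2) :=
                (Real.sqrt_sq (norm_nonneg _)).symm
            _ ≤ Real.sqrt (‖z‖ ^ 2 * ((a12 ^ 2 + a22 ^ 2) + 2 * a12 * a22 * t)) :=
                Real.sqrt_le_sqrt hsq
            _ = ‖z‖ * Real.sqrt ((a12 ^ 2 + a22 ^ 2) + 2 * a12 * a22 * t) := by
                rw [Real.sqrt_mul (sq_nonneg _), Real.sqrt_sq (norm_nonneg z)]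
        calc ‖(a11 : ℂ) * z 0 + (a21 : ℂ) * z 1‖ + ‖(a12 : ℂ) * z 0 + (a22 : ℂ) * z 1‖
            ≤ ‖z‖ * Real.sqrt ((a11 ^ 2 + a21 ^ 2) + 2 * a11 * a21 * t)
              + ‖z‖ * Real.sqrt ((a12 ^ 2 + a22 ^ 2) + 2 * a12 * a22 * t) :=
              add_le_add hb1 hb2
          _ = ‖z‖ * (Real.sqrt ((a11 ^ 2 + a21 ^ 2) + 2 * a11 * a21 * t)
              + Real.sqrt ((a12 ^ 2 + a22 ^ 2) + 2 * a12 * a22 * t)) := by ring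
          _ ≤ ‖z‖ * max (|a11 + a21| + |a12 + a22|) (|a11 - a21| + |a12 - a22|) :=
              mul_le_mul_of_nonneg_left (scalar_bound a11 a12 a21 a22 h t ht1 ht2)
                (norm_nonneg z)
          _ = max (|a11 + a21| + |a12 + a22|) (|a11 - a21| + |a12 - a22|) * ‖z‖ :=
              mul_comm _ _
    calc ‖((a11 : ℂ) * z 0 + (a21 : ℂ) * z 1) * w 0
          + ((a12 : ℂ) * z 0 + (a22 : ℂ) * z 1) * w 1‖
        ≤ ‖((a11 : ℂ) * z 0 + (a21 : ℂ) * z 1) * w 0‖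
          + ‖((a12 : ℂ) * z 0 + (a22 : ℂ) * z 1) * w 1‖ := norm_add_le _ _
      _ = ‖(a11 : ℂ) * z 0 + (a21 : ℂ) * z 1‖ * ‖w 0‖
          + ‖(a12 : ℂ) * z 0 + (a22 : ℂ) * z 1‖ * ‖w 1‖ := by rw [norm_mul, norm_mul]
      _ ≤ ‖(a11 : ℂ) * z 0 + (a21 : ℂ) * z 1‖ * ‖w‖
          + ‖(a12 : ℂ) * z 0 + (a22 : ℂ) * z 1‖ * ‖w‖ := by gcongr
      _ = (‖(a11 : ℂ) * z 0 + (a21 : ℂ) * z 1‖ + ‖(a12 : ℂ) * z 0 + (a22 : ℂ) * z 1‖) * ‖w‖ :=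
          by ring
      _ ≤ max (|a11 + a21| + |a12 + a22|) (|a11 - a21| + |a12 - a22|) * ‖z‖ * ‖w‖ :=
          mul_le_mul_of_nonneg_right key2 (norm_nonneg w)
  · apply max_le
    · refine norm_ge_aux (a11 + a21) (a12 + a22) T (fun i => if i = 0 then 1 else 1) ?_ ?_
      · rw [pi_norm_le_iff_of_nonneg zero_le_one]
        intro i
        by_cases hi : i = 0 <;> simp [hi]
      · intro w'
        rw [hT]
        norm_num
        push_cast
        ring
    · refine norm_ge_aux (a11 - a21) (a12 - a22) T (fun i => if i = 0 then 1 else -1) ?_ ?_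
      · rw [pi_norm_le_iff_of_nonneg zero_le_one]
        intro i
        by_cases hi : i = 0 <;> simp [hi]
      · intro w'
        rw [hT]
        norm_num
        push_cast
        ring
end

section
/- Let T : ℓ∞²(ℂ) × ℓ∞²(ℂ) → ℂ be the bilinear form T(z,w) = Σ_{i,j=1}^{2} a_{ij} z_i w_j with real coefficients a_{ij}. Then ‖T‖ = sup over t ∈ ℝ of √(a₁₁² + a₂₁² + 2a₁₁a₂₁ cos t) + √(a₁₂² + a₂₂² + 2a₁₂a₂₂ cos t). -/
open ComplexConjugate

private lemma norm_sq_combo (a b : ℝ) (u v : ℂ) :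
    ‖(a:ℂ) * u + (b:ℂ) * v‖ ^ 2
      = a^2 * ‖u‖^2 + b^2 * ‖v‖^2 + 2*a*b * ((u * conj v).re) := by
  simp only [Complex.sq_norm, Complex.normSq_add, Complex.normSq_mul,
    Complex.normSq_ofReal]
  have : ((a:ℂ) * u * conj ((b:ℂ)*v)).re = a * b * (u * conj v).re := by
    simp [map_mul, Complex.mul_re]
    ring
  rw [this]; ring

private lemma norm_combo_of_unit (a b : ℝ) (u v : ℂ) (hu : ‖u‖ = 1) (hv : ‖v‖ = 1) :
    ‖(a:ℂ) * u + (b:ℂ) * v‖ = Real.sqrt (a^2 + b^2 + 2*a*b * ((u * conj v).re)) := by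
  have h := norm_sq_combo a b u v
  rw [hu, hv] at h
  rw [← Real.sqrt_sq (norm_nonneg ((a:ℂ) * u + (b:ℂ) * v)), h]
  norm_num

private lemma exists_midpoint (z : ℂ) (hz : ‖z‖ ≤ 1) :
    ∃ p q : ℂ, ‖p‖ = 1 ∧ ‖q‖ = 1 ∧ z = (p + q)/2 := by
  set r : ℝ := ‖z‖ with hr
  set s : ℝ := Real.sqrt (1 - r^2) with hs
  set d : ℂ := if z = 0 then 1 else z / r with hd
  have hd1 : ‖d‖ = 1 := by
    rw [hd]; split_ifs with h
    · simp
    · rw [norm_div, Complex.norm_real, hr, Real.norm_of_nonneg (norm_nonneg z)]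
      exact div_self (norm_ne_zero_iff.mpr h)
  have hzd : z = (r : ℂ) * d := by
    rw [hd]; split_ifs with h
    · simp [h, hr]
    · rw [mul_div_assoc', mul_comm, mul_div_assoc]
      have : (r:ℂ) ≠ 0 := by
        simpa [hr] using h
      rw [div_self this, mul_one]
  have hnorm : ∀ c : ℝ, ‖((r:ℂ) + (c:ℂ) * Complex.I) * d‖ = Real.sqrt (r^2 + c^2) := by
    intro c
    rw [norm_mul, hd1, mul_one]
    exact_mod_cast Complex.norm_add_mul_I r c
  have hr0 : 0 ≤ r := norm_nonneg z
  have hs2 : s^2 = 1 - r^2 := Real.sq_sqrt (by nlinarith)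
  refine ⟨((r:ℂ) + (s:ℂ) * Complex.I) * d, ((r:ℂ) + ((-s : ℝ):ℂ) * Complex.I) * d, ?_, ?_, ?_⟩
  · rw [hnorm s, hs2]; norm_num
  · rw [hnorm (-s), neg_pow, hs2]; norm_num
  · rw [hzd]; push_cast; ring

/-- Convexity step: for the sum of two affine norms on the disc, one can move
a point of the closed unit disc to the unit circle without decreasing the value. -/
private lemma step (α β γ δ z : ℂ) (hz : ‖z‖ ≤ 1) :
    ∃ u : ℂ, ‖u‖ = 1 ∧ ‖α*z+β‖ + ‖γ*z+δ‖ ≤ ‖α*u+β‖ + ‖γ*u+δ‖ := by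
  obtain ⟨p, q, hp, hq, hpq⟩ := exists_midpoint z hz
  have e1 : α*z+β = ((α*p+β) + (α*q+β))/2 := by rw [hpq]; ring
  have e2 : γ*z+δ = ((γ*p+δ) + (γ*q+δ))/2 := by rw [hpq]; ring
  have b1 : ‖α*z+β‖ ≤ (‖α*p+β‖ + ‖α*q+β‖)/2 := by
    rw [e1, norm_div]
    have : ‖(2:ℂ)‖ = 2 := by norm_num
    rw [this]
    exact div_le_div_of_nonneg_right (norm_add_le _ _) (by norm_num) |>.trans_eq rfl
  have b2 : ‖γ*z+δ‖ ≤ (‖γ*p+δ‖ + ‖γ*q+δ‖)/2 := by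
    rw [e2, norm_div]
    have : ‖(2:ℂ)‖ = 2 := by norm_num
    rw [this]
    exact div_le_div_of_nonneg_right (norm_add_le _ _) (by norm_num) |>.trans_eq rfl
  rcases le_total (‖α*p+β‖ + ‖γ*p+δ‖) (‖α*q+β‖ + ‖γ*q+δ‖) with h | h
  · exact ⟨q, hq, by linarith⟩
  · exact ⟨p, hp, by linarith⟩

private lemma phase_exists (c : ℂ) : ∃ u : ℂ, ‖u‖ = 1 ∧ c * u = (‖c‖ : ℂ) := by
  by_cases h : c = 0
  · exact ⟨1, by simp, by simp [h]⟩
  · have hc : (‖c‖:ℂ) ≠ 0 :=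
      Complex.ofReal_ne_zero.mpr (norm_ne_zero_iff.mpr h)
    refine ⟨conj c / ‖c‖, ?_, ?_⟩
    · rw [norm_div, RCLike.norm_conj, Complex.norm_real,
        Real.norm_of_nonneg (norm_nonneg c)]
      exact div_self (norm_ne_zero_iff.mpr h)
    · rw [mul_div_assoc', Complex.mul_conj, Complex.normSq_eq_norm_sq]
      rw [div_eq_iff hc]
      push_cast
      ring

/-- The norm of a complex bilinear form on `ℓ∞²(ℂ)` with real coefficients is the supremum
over `t ∈ ℝ` of `√(a₁₁² + a₂₁² + 2a₁₁a₂₁ cos t) + √(a₁₂² + a₂₂² + 2a₁₂a₂₂ cos t)`. -/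
theorem norm_bilinear_form_linf2_complex_sup_cos
    (a11 a12 a21 a22 : ℝ)
    (T : (Fin 2 → ℂ) →L[ℂ] (Fin 2 → ℂ) →L[ℂ] ℂ)
    (hT : ∀ z w : Fin 2 → ℂ,
      T z w = (a11 : ℂ) * z 0 * w 0 + (a21 : ℂ) * z 1 * w 0
        + (a12 : ℂ) * z 0 * w 1 + (a22 : ℂ) * z 1 * w 1) :
    ‖T‖ = ⨆ t : ℝ,
      (Real.sqrt (a11 ^ 2 + a21 ^ 2 + 2 * a11 * a21 * Real.cos t)
        + Real.sqrt (a12 ^ 2 + a22 ^ 2 + 2 * a12 * a22 * Real.cos t)) := by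
  set f : ℝ → ℝ := fun t =>
      (Real.sqrt (a11 ^ 2 + a21 ^ 2 + 2 * a11 * a21 * Real.cos t)
        + Real.sqrt (a12 ^ 2 + a22 ^ 2 + 2 * a12 * a22 * Real.cos t)) with hf
  -- boundedness of f
  have sqrt_bound : ∀ a b c : ℝ, |c| ≤ 1 → Real.sqrt (a^2+b^2+2*a*b*c) ≤ |a|+|b| := by
    intro a b c hc
    have h1 : a*b*c ≤ |a| * |b| := by
      have e1 : a*b*c ≤ |a*b| * |c| := by rw [← abs_mul]; exact le_abs_self _
      have e2 : |a*b| * |c| ≤ |a*b| := mul_le_of_le_one_right (abs_nonneg _) hc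
      rw [abs_mul] at e1 e2
      linarith
    have h2 : a^2+b^2+2*a*b*c ≤ (|a|+|b|)^2 := by
      have := sq_abs a; have := sq_abs b
      nlinarith
    calc Real.sqrt (a^2+b^2+2*a*b*c) ≤ Real.sqrt ((|a|+|b|)^2) := Real.sqrt_le_sqrt h2
      _ = |a|+|b| := Real.sqrt_sq (by positivity)
  have hbdd : BddAbove (Set.range f) := by
    refine ⟨(|a11|+|a21|) + (|a12|+|a22|), ?_⟩
    rintro x ⟨t, rfl⟩
    have h1 := sqrt_bound a11 a21 (Real.cos t) (Real.abs_cos_le_one t)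
    have h2 := sqrt_bound a12 a22 (Real.cos t) (Real.abs_cos_le_one t)
    simp only [hf]
    linarith
  set S : ℝ := ⨆ t : ℝ, f t with hS
  have hfS : ∀ t, f t ≤ S := fun t => le_ciSup hbdd t
  have hfnn : ∀ t, 0 ≤ f t := by
    intro t; simp only [hf]; positivity
  have hSnn : 0 ≤ S := le_trans (hfnn 0) (hfS 0)
  -- value at unit circle points equals f at some t
  have unit_val : ∀ u v : ℂ, ‖u‖ = 1 → ‖v‖ = 1 →
      ∃ t : ℝ, ‖(a11:ℂ)*u + (a21:ℂ)*v‖ + ‖(a12:ℂ)*u + (a22:ℂ)*v‖ = f t := by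
    intro u v hu hv
    set c : ℝ := (u * conj v).re with hc
    have hc1 : |c| ≤ 1 := by
      have : ‖u * conj v‖ = 1 := by
        rw [norm_mul, hu, RingHomIsometric.norm_map, hv]; norm_num
      calc |c| ≤ ‖u * conj v‖ := Complex.abs_re_le_norm _
        _ = 1 := this
    refine ⟨Real.arccos c, ?_⟩
    have hcos : Real.cos (Real.arccos c) = c :=
      Real.cos_arccos (neg_le_of_abs_le hc1) (le_of_abs_le hc1)
    simp only [hf, hcos]
    rw [norm_combo_of_unit a11 a21 u v hu hv, norm_combo_of_unit a12 a22 u v hu hv]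
  -- polydisc bound
  have disc_bound : ∀ z1 z2 : ℂ, ‖z1‖ ≤ 1 → ‖z2‖ ≤ 1 →
      ‖(a11:ℂ)*z1 + (a21:ℂ)*z2‖ + ‖(a12:ℂ)*z1 + (a22:ℂ)*z2‖ ≤ S := by
    intro z1 z2 h1 h2
    obtain ⟨u1, hu1, hb1⟩ := step (a11:ℂ) ((a21:ℂ)*z2) (a12:ℂ) ((a22:ℂ)*z2) z1 h1
    obtain ⟨u2, hu2, hb2⟩ := step (a21:ℂ) ((a11:ℂ)*u1) (a22:ℂ) ((a12:ℂ)*u1) z2 h2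
    obtain ⟨t, ht⟩ := unit_val u1 u2 hu1 hu2
    have e1 : (a21:ℂ)*z2+(a11:ℂ)*u1 = (a11:ℂ)*u1 + (a21:ℂ)*z2 := by ring
    have e2 : (a22:ℂ)*z2+(a12:ℂ)*u1 = (a12:ℂ)*u1 + (a22:ℂ)*z2 := by ring
    have e3 : (a21:ℂ)*u2+(a11:ℂ)*u1 = (a11:ℂ)*u1 + (a21:ℂ)*u2 := by ring
    have e4 : (a22:ℂ)*u2+(a12:ℂ)*u1 = (a12:ℂ)*u1 + (a22:ℂ)*u2 := by ring
    rw [e1, e2, e3, e4] at hb2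
    calc ‖(a11:ℂ)*z1 + (a21:ℂ)*z2‖ + ‖(a12:ℂ)*z1 + (a22:ℂ)*z2‖
        ≤ ‖(a11:ℂ)*u1 + (a21:ℂ)*z2‖ + ‖(a12:ℂ)*u1 + (a22:ℂ)*z2‖ := hb1
      _ ≤ ‖(a11:ℂ)*u1 + (a21:ℂ)*u2‖ + ‖(a12:ℂ)*u1 + (a22:ℂ)*u2‖ := hb2
      _ = f t := ht
      _ ≤ S := hfS t
  apply le_antisymm
  · -- upper bound
    apply ContinuousLinearMap.opNorm_le_bound₂ _ hSnn
    intro z w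
    set c1 : ℂ := (a11:ℂ)*z 0 + (a21:ℂ)*z 1 with hc1
    set c2 : ℂ := (a12:ℂ)*z 0 + (a22:ℂ)*z 1 with hc2
    have hTzw : T z w = c1 * w 0 + c2 * w 1 := by rw [hT]; ring
    have hw0 : ‖w 0‖ ≤ ‖w‖ := norm_le_pi_norm w 0
    have hw1 : ‖w 1‖ ≤ ‖w‖ := norm_le_pi_norm w 1
    have hwn : 0 ≤ ‖w‖ := norm_nonneg w
    have step1 : ‖T z w‖ ≤ (‖c1‖ + ‖c2‖) * ‖w‖ := by
      rw [hTzw]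
      calc ‖c1 * w 0 + c2 * w 1‖ ≤ ‖c1 * w 0‖ + ‖c2 * w 1‖ := norm_add_le _ _
        _ = ‖c1‖*‖w 0‖ + ‖c2‖*‖w 1‖ := by rw [norm_mul, norm_mul]
        _ ≤ ‖c1‖*‖w‖ + ‖c2‖*‖w‖ :=
            add_le_add (mul_le_mul_of_nonneg_left hw0 (norm_nonneg _))
              (mul_le_mul_of_nonneg_left hw1 (norm_nonneg _))
        _ = (‖c1‖ + ‖c2‖) * ‖w‖ := by ring
    have step2 : ‖c1‖ + ‖c2‖ ≤ S * ‖z‖ := by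
      by_cases hz : z = 0
      · simp [hc1, hc2, hz]
      · set n : ℝ := ‖z‖ with hn
        have hnpos : 0 < n := norm_pos_iff.mpr hz
        have hz0 : ‖z 0 / (n:ℂ)‖ ≤ 1 := by
          rw [norm_div, Complex.norm_real, Real.norm_of_nonneg hnpos.le,
            div_le_one hnpos]
          exact norm_le_pi_norm z 0
        have hz1 : ‖z 1 / (n:ℂ)‖ ≤ 1 := by
          rw [norm_div, Complex.norm_real, Real.norm_of_nonneg hnpos.le,
            div_le_one hnpos]
          exact norm_le_pi_norm z 1
        have hkey := disc_bound (z 0 / (n:ℂ)) (z 1 / (n:ℂ)) hz0 hz1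
        have hnne : (n:ℂ) ≠ 0 := by
          exact_mod_cast Complex.ofReal_ne_zero.mpr hnpos.ne'
        have d1 : c1 = (n:ℂ) * ((a11:ℂ)*(z 0/(n:ℂ)) + (a21:ℂ)*(z 1/(n:ℂ))) := by
          rw [hc1]; field_simp
        have d2 : c2 = (n:ℂ) * ((a12:ℂ)*(z 0/(n:ℂ)) + (a22:ℂ)*(z 1/(n:ℂ))) := by
          rw [hc2]; field_simp
        have n1 : ‖c1‖ = n * ‖(a11:ℂ)*(z 0/(n:ℂ)) + (a21:ℂ)*(z 1/(n:ℂ))‖ := by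
          rw [d1, norm_mul, Complex.norm_real, Real.norm_of_nonneg hnpos.le]
        have n2 : ‖c2‖ = n * ‖(a12:ℂ)*(z 0/(n:ℂ)) + (a22:ℂ)*(z 1/(n:ℂ))‖ := by
          rw [d2, norm_mul, Complex.norm_real, Real.norm_of_nonneg hnpos.le]
        calc ‖c1‖ + ‖c2‖ = n * (‖(a11:ℂ)*(z 0/(n:ℂ)) + (a21:ℂ)*(z 1/(n:ℂ))‖
              + ‖(a12:ℂ)*(z 0/(n:ℂ)) + (a22:ℂ)*(z 1/(n:ℂ))‖) := by rw [n1, n2]; ring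
          _ ≤ n * S := by
              apply mul_le_mul_of_nonneg_left hkey hnpos.le
          _ = S * ‖z‖ := by rw [mul_comm]
    calc ‖T z w‖ ≤ (‖c1‖ + ‖c2‖) * ‖w‖ := step1
      _ ≤ (S * ‖z‖) * ‖w‖ := mul_le_mul_of_nonneg_right step2 hwn
      _ = S * ‖z‖ * ‖w‖ := by ring
  · -- lower bound
    apply ciSup_le
    intro t
    set v : ℂ := Complex.exp (t * Complex.I) with hv
    have hvnorm : ‖v‖ = 1 := by
      rw [hv, Complex.norm_exp_ofReal_mul_I]
    set c1 : ℂ := (a11:ℂ)*1 + (a21:ℂ)*v with hc1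
    set c2 : ℂ := (a12:ℂ)*1 + (a22:ℂ)*v with hc2
    obtain ⟨p1, hp1, hcp1⟩ := phase_exists c1
    obtain ⟨p2, hp2, hcp2⟩ := phase_exists c2
    set z : Fin 2 → ℂ := ![1, v] with hz
    set w : Fin 2 → ℂ := ![p1, p2] with hw
    have hz1 : ‖z‖ ≤ 1 := by
      rw [pi_norm_le_iff_of_nonneg (by norm_num)]
      intro i
      fin_cases i <;> simp [hz, hvnorm]
    have hw1 : ‖w‖ ≤ 1 := by
      rw [pi_norm_le_iff_of_nonneg (by norm_num)]
      intro i
      fin_cases i <;> simp [hw, hp1, hp2]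
    have hre : ((1:ℂ) * conj v).re = Real.cos t := by
      rw [one_mul, Complex.conj_re, hv, Complex.exp_ofReal_mul_I_re]
    have hval : T z w = ((‖c1‖ + ‖c2‖ : ℝ) : ℂ) := by
      rw [hT]
      have hz0 : z 0 = 1 := rfl
      have hz1' : z 1 = v := rfl
      have hw0 : w 0 = p1 := rfl
      have hw1' : w 1 = p2 := rfl
      rw [hz0, hz1', hw0, hw1']
      push_cast
      calc (a11:ℂ) * 1 * p1 + (a21:ℂ) * v * p1 + (a12:ℂ) * 1 * p2 + (a22:ℂ) * v * p2
          = c1 * p1 + c2 * p2 := by rw [hc1, hc2]; ring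
        _ = ((‖c1‖:ℂ)) + ((‖c2‖:ℂ)) := by rw [hcp1, hcp2]
    have hnval : ‖T z w‖ = ‖c1‖ + ‖c2‖ := by
      rw [hval, Complex.norm_real, Real.norm_of_nonneg (by positivity)]
    have hft : f t = ‖c1‖ + ‖c2‖ := by
      have e1 : ‖c1‖ = Real.sqrt (a11^2 + a21^2 + 2*a11*a21*Real.cos t) := by
        rw [hc1, norm_combo_of_unit a11 a21 1 v (by norm_num) hvnorm, hre]
      have e2 : ‖c2‖ = Real.sqrt (a12^2 + a22^2 + 2*a12*a22*Real.cos t) := by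
        rw [hc2, norm_combo_of_unit a12 a22 1 v (by norm_num) hvnorm, hre]
      simp only [hf, e1, e2]
    calc f t = ‖T z w‖ := by rw [hnval, hft]
      _ ≤ ‖T‖ * ‖z‖ * ‖w‖ := T.le_opNorm₂ z w
      _ ≤ ‖T‖ * 1 * 1 := by gcongr
      _ = ‖T‖ := by ring
end

section
/- The set of extreme points of the closed unit ball of the space of bilinear forms on ℓ∞²(ℝ) (with the operator norm) consists exactly of: the eight forms ±x_iy_j for i,j ∈ {1,2} (i.e., (x,y) ↦ ε·x_iy_j with ε ∈ {−1,1}), together with the eight forms (x,y) ↦ ½(ε₁₁x₁y₁ + ε₂₁x₂y₁ + ε₁₂x₁y₂ + ε₂₂x₂y₂) where each ε_{ij} ∈ {−1,1} and ε₁₁ε₂₁ε₁₂ε₂₂ = −1. -/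
set_option maxHeartbeats 1000000
set_option synthInstance.maxHeartbeats 1000000

noncomputable def ee (i : Fin 2) : Fin 2 → ℝ := Pi.single i 1

noncomputable def Pj (i : Fin 2) : (Fin 2 → ℝ) →L[ℝ] ℝ := ContinuousLinearMap.proj i

noncomputable def Bf (a b c d : ℝ) : (Fin 2 → ℝ) →L[ℝ] (Fin 2 → ℝ) →L[ℝ] ℝ :=
  ((a • Pj 0 + b • Pj 1).smulRight (Pj 0)) + ((c • Pj 0 + d • Pj 1).smulRight (Pj 1))

lemma Bf_apply (a b c d : ℝ) (x y : Fin 2 → ℝ) :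
    Bf a b c d x y = a * x 0 * y 0 + b * x 1 * y 0 + c * x 0 * y 1 + d * x 1 * y 1 := by
  simp [Bf, Pj, ContinuousLinearMap.smulRight_apply, ContinuousLinearMap.proj_apply]
  ring

lemma Bf_entry (a b c d : ℝ) :
    Bf a b c d (ee 0) (ee 0) = a ∧ Bf a b c d (ee 1) (ee 0) = b ∧
    Bf a b c d (ee 0) (ee 1) = c ∧ Bf a b c d (ee 1) (ee 1) = d := by
  refine ⟨?_, ?_, ?_, ?_⟩ <;> rw [Bf_apply] <;> norm_num [ee]

lemma expand (T : (Fin 2 → ℝ) →L[ℝ] (Fin 2 → ℝ) →L[ℝ] ℝ) (x y : Fin 2 → ℝ) :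
    T x y = T (ee 0) (ee 0) * x 0 * y 0 + T (ee 1) (ee 0) * x 1 * y 0
      + T (ee 0) (ee 1) * x 0 * y 1 + T (ee 1) (ee 1) * x 1 * y 1 := by
  have hx : x = x 0 • ee 0 + x 1 • ee 1 := by
    funext i; fin_cases i <;> simp [ee]
  have hy : y = y 0 • ee 0 + y 1 • ee 1 := by
    funext i; fin_cases i <;> simp [ee]
  conv_lhs => rw [hx, hy]
  simp [map_add, map_smul]
  ring

lemma key (a b c d x0 x1 y0 y1 X Y : ℝ)
    (h1 : |a+b+c+d| ≤ 1) (h2 : |a+b-c-d| ≤ 1) (h3 : |a-b+c-d| ≤ 1) (h4 : |a-b-c+d| ≤ 1)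
    (hx0 : |x0| ≤ X) (hx1 : |x1| ≤ X) (hy0 : |y0| ≤ Y) (hy1 : |y1| ≤ Y) :
    |a * x0 * y0 + b * x1 * y0 + c * x0 * y1 + d * x1 * y1| ≤ X * Y := by
  set A := (a+b+c+d) * ((x0+x1)*(y0+y1)) with hA
  set B := (a-b+c-d) * ((x0-x1)*(y0+y1)) with hB
  set C := (a+b-c-d) * ((x0+x1)*(y0-y1)) with hC
  set D := (a-b-c+d) * ((x0-x1)*(y0-y1)) with hD
  have e : a * x0 * y0 + b * x1 * y0 + c * x0 * y1 + d * x1 * y1 = (A+B+C+D)/4 := by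
    rw [hA, hB, hC, hD]; ring
  rw [e]
  have hxx : |x0+x1| + |x0-x1| ≤ 2 * X := by
    rcases abs_cases x0 with ⟨_,_⟩ <;> rcases abs_cases x1 with ⟨_,_⟩ <;>
      rcases abs_cases (x0+x1) with ⟨_,_⟩ <;> rcases abs_cases (x0-x1) with ⟨_,_⟩ <;> linarith
  have hyy : |y0+y1| + |y0-y1| ≤ 2 * Y := by
    rcases abs_cases y0 with ⟨_,_⟩ <;> rcases abs_cases y1 with ⟨_,_⟩ <;>
      rcases abs_cases (y0+y1) with ⟨_,_⟩ <;> rcases abs_cases (y0-y1) with ⟨_,_⟩ <;> linarith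
  have b1 : |A| ≤ |x0+x1| * |y0+y1| := by
    rw [hA, abs_mul, abs_mul]; exact mul_le_of_le_one_left (by positivity) h1
  have b2 : |B| ≤ |x0-x1| * |y0+y1| := by
    rw [hB, abs_mul, abs_mul]; exact mul_le_of_le_one_left (by positivity) h3
  have b3 : |C| ≤ |x0+x1| * |y0-y1| := by
    rw [hC, abs_mul, abs_mul]; exact mul_le_of_le_one_left (by positivity) h2
  have b4 : |D| ≤ |x0-x1| * |y0-y1| := by
    rw [hD, abs_mul, abs_mul]; exact mul_le_of_le_one_left (by positivity) h4
  have s1 := abs_add_le (A+B+C) D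
  have s2 := abs_add_le (A+B) C
  have s3 := abs_add_le A B
  have hprod : (|x0+x1| + |x0-x1|) * (|y0+y1| + |y0-y1|) ≤ (2*X) * (2*Y) :=
    mul_le_mul hxx hyy (by positivity)
      (by linarith [abs_nonneg x0, abs_nonneg (x0+x1), abs_nonneg (x0-x1)])
  have habcd : |A+B+C+D| ≤ 4 * (X*Y) := by nlinarith
  rw [abs_div, show |(4:ℝ)| = 4 by norm_num]
  linarith

lemma norm_le_one (T : (Fin 2 → ℝ) →L[ℝ] (Fin 2 → ℝ) →L[ℝ] ℝ)
    (h1 : |T (ee 0) (ee 0) + T (ee 1) (ee 0) + T (ee 0) (ee 1) + T (ee 1) (ee 1)| ≤ 1)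
    (h2 : |T (ee 0) (ee 0) + T (ee 1) (ee 0) - T (ee 0) (ee 1) - T (ee 1) (ee 1)| ≤ 1)
    (h3 : |T (ee 0) (ee 0) - T (ee 1) (ee 0) + T (ee 0) (ee 1) - T (ee 1) (ee 1)| ≤ 1)
    (h4 : |T (ee 0) (ee 0) - T (ee 1) (ee 0) - T (ee 0) (ee 1) + T (ee 1) (ee 1)| ≤ 1) :
    ‖T‖ ≤ 1 := by
  refine ContinuousLinearMap.opNorm_le_bound T zero_le_one (fun x => ?_)
  refine ContinuousLinearMap.opNorm_le_bound (T x) (by positivity) (fun y => ?_)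
  rw [Real.norm_eq_abs, expand T x y]
  have := key (T (ee 0) (ee 0)) (T (ee 1) (ee 0)) (T (ee 0) (ee 1)) (T (ee 1) (ee 1))
    (x 0) (x 1) (y 0) (y 1) ‖x‖ ‖y‖ h1 h2 h3 h4
    (norm_le_pi_norm x 0) (norm_le_pi_norm x 1) (norm_le_pi_norm y 0) (norm_le_pi_norm y 1)
  calc |T (ee 0) (ee 0) * x 0 * y 0 + T (ee 1) (ee 0) * x 1 * y 0
      + T (ee 0) (ee 1) * x 0 * y 1 + T (ee 1) (ee 1) * x 1 * y 1| ≤ ‖x‖ * ‖y‖ := this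
    _ ≤ 1 * ‖x‖ * ‖y‖ := by rw [one_mul]

lemma corner (T : (Fin 2 → ℝ) →L[ℝ] (Fin 2 → ℝ) →L[ℝ] ℝ) (σ τ : ℝ)
    (hσ : |σ| ≤ 1) (hτ : |τ| ≤ 1) :
    |T (ee 0) (ee 0) + σ * T (ee 1) (ee 0) + τ * T (ee 0) (ee 1) + σ * τ * T (ee 1) (ee 1)|
      ≤ ‖T‖ := by
  set v : Fin 2 → ℝ := fun i => if i = 0 then 1 else σ with hv
  set w : Fin 2 → ℝ := fun i => if i = 0 then 1 else τ with hw
  have hvn : ‖v‖ ≤ 1 := by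
    rw [pi_norm_le_iff_of_nonneg zero_le_one]
    intro i; fin_cases i <;> simp [hv, Real.norm_eq_abs, hσ]
  have hwn : ‖w‖ ≤ 1 := by
    rw [pi_norm_le_iff_of_nonneg zero_le_one]
    intro i; fin_cases i <;> simp [hw, Real.norm_eq_abs, hτ]
  have hb : ‖T v w‖ ≤ ‖T‖ * ‖v‖ * ‖w‖ :=
    ((T v).le_opNorm w).trans (by gcongr; exact T.le_opNorm v)
  have hval : T v w = T (ee 0) (ee 0) + σ * T (ee 1) (ee 0)
      + τ * T (ee 0) (ee 1) + σ * τ * T (ee 1) (ee 1) := by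
    rw [expand T v w]; simp [hv, hw]; ring
  have hTn : (0:ℝ) ≤ ‖T‖ := norm_nonneg T
  calc |T (ee 0) (ee 0) + σ * T (ee 1) (ee 0) + τ * T (ee 0) (ee 1) + σ * τ * T (ee 1) (ee 1)|
      = ‖T v w‖ := by rw [Real.norm_eq_abs, hval]
    _ ≤ ‖T‖ * ‖v‖ * ‖w‖ := hb
    _ ≤ ‖T‖ * 1 * 1 := by
        have h0 : (0:ℝ) ≤ ‖v‖ := norm_nonneg v
        nlinarith [mul_nonneg hTn h0, mul_le_mul_of_nonneg_left hvn hTn]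
    _ = ‖T‖ := by ring

lemma corner4 (T : (Fin 2 → ℝ) →L[ℝ] (Fin 2 → ℝ) →L[ℝ] ℝ) (h : ‖T‖ ≤ 1) :
    |T (ee 0) (ee 0) + T (ee 1) (ee 0) + T (ee 0) (ee 1) + T (ee 1) (ee 1)| ≤ 1 ∧
    |T (ee 0) (ee 0) + T (ee 1) (ee 0) - T (ee 0) (ee 1) - T (ee 1) (ee 1)| ≤ 1 ∧
    |T (ee 0) (ee 0) - T (ee 1) (ee 0) + T (ee 0) (ee 1) - T (ee 1) (ee 1)| ≤ 1 ∧
    |T (ee 0) (ee 0) - T (ee 1) (ee 0) - T (ee 0) (ee 1) + T (ee 1) (ee 1)| ≤ 1 := by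
  refine ⟨?_, ?_, ?_, ?_⟩
  · have := (corner T 1 1 (by norm_num) (by norm_num)).trans h
    calc _ = |T (ee 0) (ee 0) + 1 * T (ee 1) (ee 0) + 1 * T (ee 0) (ee 1)
        + 1 * 1 * T (ee 1) (ee 1)| := by ring_nf
      _ ≤ 1 := this
  · have := (corner T 1 (-1) (by norm_num) (by norm_num)).trans h
    calc _ = |T (ee 0) (ee 0) + 1 * T (ee 1) (ee 0) + (-1) * T (ee 0) (ee 1)
        + 1 * (-1) * T (ee 1) (ee 1)| := by ring_nf
      _ ≤ 1 := this
  · have := (corner T (-1) 1 (by norm_num) (by norm_num)).trans h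
    calc _ = |T (ee 0) (ee 0) + (-1) * T (ee 1) (ee 0) + 1 * T (ee 0) (ee 1)
        + (-1) * 1 * T (ee 1) (ee 1)| := by ring_nf
      _ ≤ 1 := this
  · have := (corner T (-1) (-1) (by norm_num) (by norm_num)).trans h
    calc _ = |T (ee 0) (ee 0) + (-1) * T (ee 1) (ee 0) + (-1) * T (ee 0) (ee 1)
        + (-1) * (-1) * T (ee 1) (ee 1)| := by ring_nf
      _ ≤ 1 := this

lemma abs_pair (u v : ℝ) (h1 : |u+v| ≤ 1) (h2 : |u-v| ≤ 1) : |u| + |v| ≤ 1 := by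
  rcases abs_cases u with ⟨_,_⟩ <;> rcases abs_cases v with ⟨_,_⟩ <;>
    rcases abs_cases (u+v) with ⟨_,_⟩ <;> rcases abs_cases (u-v) with ⟨_,_⟩ <;> linarith

def V (p q : ℝ) : Prop := (p = 1 ∧ q = 0) ∨ (p = -1 ∧ q = 0) ∨ (p = 0 ∧ q = 1) ∨ (p = 0 ∧ q = -1)

lemma ext_of_entries (A B : (Fin 2 → ℝ) →L[ℝ] (Fin 2 → ℝ) →L[ℝ] ℝ)
    (h : ∀ i j : Fin 2, A (ee i) (ee j) = B (ee i) (ee j)) : A = B := by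
  ext x y
  rw [expand A x y, expand B x y, h 0 0, h 1 0, h 0 1, h 1 1]

lemma l1_mid (p q p1 q1 p2 q2 : ℝ) (hV : V p q)
    (h1 : |p1| + |q1| ≤ 1) (h2 : |p2| + |q2| ≤ 1)
    (hmp : p1 + p2 = 2 * p) (hmq : q1 + q2 = 2 * q) : p1 = p2 ∧ q1 = q2 := by
  have f1 := le_abs_self p1; have f2 := neg_abs_le p1
  have f3 := le_abs_self p2; have f4 := neg_abs_le p2
  have f5 := le_abs_self q1; have f6 := neg_abs_le q1
  have f7 := le_abs_self q2; have f8 := neg_abs_le q2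
  have g1 := abs_nonneg p1; have g2 := abs_nonneg p2
  have g3 := abs_nonneg q1; have g4 := abs_nonneg q2
  rcases hV with ⟨e1,e2⟩ | ⟨e1,e2⟩ | ⟨e1,e2⟩ | ⟨e1,e2⟩ <;> subst e1 <;> subst e2 <;>
    constructor <;> linarith

lemma l1_vertex (p q : ℝ) (h : |p| + |q| ≤ 1)
    (hext : ∀ u v : ℝ, |p+u| + |q+v| ≤ 1 → |p-u| + |q-v| ≤ 1 → u = 0 ∧ v = 0) :
    V p q := by
  by_cases hs : |p| + |q| < 1
  · exfalso
    have := hext (1 - |p| - |q|) 0 ?_ ?_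
    · linarith [this.1]
    · have : |p + (1 - |p| - |q|)| ≤ |p| + (1 - |p| - |q|) := by
        rcases abs_cases p with ⟨_,_⟩ <;> rcases abs_cases (p + (1 - |p| - |q|)) with ⟨_,_⟩ <;> linarith
      simp only [add_zero]
      linarith
    · have : |p - (1 - |p| - |q|)| ≤ |p| + (1 - |p| - |q|) := by
        rcases abs_cases p with ⟨_,_⟩ <;> rcases abs_cases (p - (1 - |p| - |q|)) with ⟨_,_⟩ <;> linarith
      simp only [sub_zero]
      linarith
  · have heq : |p| + |q| = 1 := le_antisymm h (not_lt.mp hs)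
    by_cases hp : p = 0
    · right; right
      subst hp
      simp at heq
      rcases abs_cases q with ⟨h1,_⟩ | ⟨h1,_⟩
      · left; exact ⟨rfl, by linarith⟩
      · right; exact ⟨rfl, by linarith⟩
    by_cases hq : q = 0
    · subst hq
      simp at heq
      rcases abs_cases p with ⟨h1,_⟩ | ⟨h1,_⟩
      · left; exact ⟨by linarith, rfl⟩
      · right; left; exact ⟨by linarith, rfl⟩
    exfalso
    rcases lt_trichotomy p 0 with hp1 | hp1 | hp1
    · rcases lt_trichotomy q 0 with hq1 | hq1 | hq1
      · set t := min (-p) (-q) with ht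
        have htpos : 0 < t := lt_min (by linarith) (by linarith)
        have htp : t ≤ -p := min_le_left _ _
        have htq : t ≤ -q := min_le_right _ _
        have hae : |p| = -p := abs_of_neg hp1
        have hbe : |q| = -q := abs_of_neg hq1
        have := hext (-t) t (by
          rw [abs_of_neg (by linarith), abs_of_nonpos (by linarith)]; linarith) (by
          rw [abs_of_nonpos (by linarith), abs_of_neg (by linarith)]; linarith)
        linarith [this.1]
      · exact hq hq1
      · set t := min (-p) q with ht
        have htpos : 0 < t := lt_min (by linarith) hq1
        have htp : t ≤ -p := min_le_left _ _
        have htq : t ≤ q := min_le_right _ _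
        have hae : |p| = -p := abs_of_neg hp1
        have hbe : |q| = q := abs_of_pos hq1
        have := hext (-t) (-t) (by
          rw [abs_of_neg (by linarith), abs_of_nonneg (by linarith)]; linarith) (by
          rw [abs_of_nonpos (by linarith), abs_of_pos (by linarith)]; linarith)
        linarith [this.1]
    · exact hp hp1
    · rcases lt_trichotomy q 0 with hq1 | hq1 | hq1
      · set t := min p (-q) with ht
        have htpos : 0 < t := lt_min hp1 (by linarith)
        have htp : t ≤ p := min_le_left _ _
        have htq : t ≤ -q := min_le_right _ _
        have hae : |p| = p := abs_of_pos hp1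
        have hbe : |q| = -q := abs_of_neg hq1
        have := hext t t (by
          rw [abs_of_pos (by linarith), abs_of_nonpos (by linarith)]; linarith) (by
          rw [abs_of_nonneg (by linarith), abs_of_neg (by linarith)]; linarith)
        linarith [this.1]
      · exact hq hq1
      · set t := min p q with ht
        have htpos : 0 < t := lt_min hp1 hq1
        have htp : t ≤ p := min_le_left _ _
        have htq : t ≤ q := min_le_right _ _
        have hae : |p| = p := abs_of_pos hp1
        have hbe : |q| = q := abs_of_pos hq1
        have := hext t (-t) (by
          rw [abs_of_pos (by linarith), abs_of_nonneg (by linarith)]; linarith) (by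
          rw [abs_of_nonneg (by linarith), abs_of_pos (by linarith)]; linarith)
        linarith [this.1]
lemma pq_bounds (T : (Fin 2 → ℝ) →L[ℝ] (Fin 2 → ℝ) →L[ℝ] ℝ) (h : ‖T‖ ≤ 1) :
    |T (ee 0) (ee 0) + T (ee 1) (ee 1)| + |T (ee 1) (ee 0) + T (ee 0) (ee 1)| ≤ 1 ∧
    |T (ee 0) (ee 0) - T (ee 1) (ee 1)| + |T (ee 1) (ee 0) - T (ee 0) (ee 1)| ≤ 1 := by
  obtain ⟨k1, k2, k3, k4⟩ := corner4 T h
  constructor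
  · refine abs_pair _ _ ?_ ?_
    · calc |T (ee 0) (ee 0) + T (ee 1) (ee 1) + (T (ee 1) (ee 0) + T (ee 0) (ee 1))|
          = |T (ee 0) (ee 0) + T (ee 1) (ee 0) + T (ee 0) (ee 1) + T (ee 1) (ee 1)| := by ring_nf
        _ ≤ 1 := k1
    · calc |T (ee 0) (ee 0) + T (ee 1) (ee 1) - (T (ee 1) (ee 0) + T (ee 0) (ee 1))|
          = |T (ee 0) (ee 0) - T (ee 1) (ee 0) - T (ee 0) (ee 1) + T (ee 1) (ee 1)| := by ring_nf
        _ ≤ 1 := k4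
  · refine abs_pair _ _ ?_ ?_
    · calc |T (ee 0) (ee 0) - T (ee 1) (ee 1) + (T (ee 1) (ee 0) - T (ee 0) (ee 1))|
          = |T (ee 0) (ee 0) + T (ee 1) (ee 0) - T (ee 0) (ee 1) - T (ee 1) (ee 1)| := by ring_nf
        _ ≤ 1 := k2
    · calc |T (ee 0) (ee 0) - T (ee 1) (ee 1) - (T (ee 1) (ee 0) - T (ee 0) (ee 1))|
          = |T (ee 0) (ee 0) - T (ee 1) (ee 0) + T (ee 0) (ee 1) - T (ee 1) (ee 1)| := by ring_nf
        _ ≤ 1 := k3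

lemma norm_le_one_of_V (T : (Fin 2 → ℝ) →L[ℝ] (Fin 2 → ℝ) →L[ℝ] ℝ)
    (hV1 : V (T (ee 0) (ee 0) + T (ee 1) (ee 1)) (T (ee 1) (ee 0) + T (ee 0) (ee 1)))
    (hV2 : V (T (ee 0) (ee 0) - T (ee 1) (ee 1)) (T (ee 1) (ee 0) - T (ee 0) (ee 1))) :
    ‖T‖ ≤ 1 := by
  have e1 : |T (ee 0) (ee 0) + T (ee 1) (ee 0) + T (ee 0) (ee 1) + T (ee 1) (ee 1)|
      ≤ |T (ee 0) (ee 0) + T (ee 1) (ee 1)| + |T (ee 1) (ee 0) + T (ee 0) (ee 1)| := by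
    calc _ = |(T (ee 0) (ee 0) + T (ee 1) (ee 1)) + (T (ee 1) (ee 0) + T (ee 0) (ee 1))| := by
          ring_nf
      _ ≤ _ := abs_add_le _ _
  have e4 : |T (ee 0) (ee 0) - T (ee 1) (ee 0) - T (ee 0) (ee 1) + T (ee 1) (ee 1)|
      ≤ |T (ee 0) (ee 0) + T (ee 1) (ee 1)| + |T (ee 1) (ee 0) + T (ee 0) (ee 1)| := by
    calc _ = |(T (ee 0) (ee 0) + T (ee 1) (ee 1)) - (T (ee 1) (ee 0) + T (ee 0) (ee 1))| := by
          ring_nf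
      _ ≤ _ := abs_sub _ _
  have e2 : |T (ee 0) (ee 0) + T (ee 1) (ee 0) - T (ee 0) (ee 1) - T (ee 1) (ee 1)|
      ≤ |T (ee 0) (ee 0) - T (ee 1) (ee 1)| + |T (ee 1) (ee 0) - T (ee 0) (ee 1)| := by
    calc _ = |(T (ee 0) (ee 0) - T (ee 1) (ee 1)) + (T (ee 1) (ee 0) - T (ee 0) (ee 1))| := by
          ring_nf
      _ ≤ _ := abs_add_le _ _
  have e3 : |T (ee 0) (ee 0) - T (ee 1) (ee 0) + T (ee 0) (ee 1) - T (ee 1) (ee 1)|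
      ≤ |T (ee 0) (ee 0) - T (ee 1) (ee 1)| + |T (ee 1) (ee 0) - T (ee 0) (ee 1)| := by
    calc _ = |(T (ee 0) (ee 0) - T (ee 1) (ee 1)) - (T (ee 1) (ee 0) - T (ee 0) (ee 1))| := by
          ring_nf
      _ ≤ _ := abs_sub _ _
  have hs1 : |T (ee 0) (ee 0) + T (ee 1) (ee 1)| + |T (ee 1) (ee 0) + T (ee 0) (ee 1)| = 1 := by
    rcases hV1 with ⟨u1,u2⟩ | ⟨u1,u2⟩ | ⟨u1,u2⟩ | ⟨u1,u2⟩ <;> rw [u1, u2] <;> norm_num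
  have hs2 : |T (ee 0) (ee 0) - T (ee 1) (ee 1)| + |T (ee 1) (ee 0) - T (ee 0) (ee 1)| = 1 := by
    rcases hV2 with ⟨u1,u2⟩ | ⟨u1,u2⟩ | ⟨u1,u2⟩ | ⟨u1,u2⟩ <;> rw [u1, u2] <;> norm_num
  exact norm_le_one T (by linarith) (by linarith) (by linarith) (by linarith)

lemma extreme_of_V (T : (Fin 2 → ℝ) →L[ℝ] (Fin 2 → ℝ) →L[ℝ] ℝ)
    (hV1 : V (T (ee 0) (ee 0) + T (ee 1) (ee 1)) (T (ee 1) (ee 0) + T (ee 0) (ee 1)))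
    (hV2 : V (T (ee 0) (ee 0) - T (ee 1) (ee 1)) (T (ee 1) (ee 0) - T (ee 0) (ee 1))) :
    ∀ A B : (Fin 2 → ℝ) →L[ℝ] (Fin 2 → ℝ) →L[ℝ] ℝ,
      ‖A‖ ≤ 1 → ‖B‖ ≤ 1 → T = (1 / 2 : ℝ) • (A + B) → A = B := by
  intro A B hA hB hm
  obtain ⟨hApq, hArs⟩ := pq_bounds A hA
  obtain ⟨hBpq, hBrs⟩ := pq_bounds B hB
  have hmid : ∀ i j : Fin 2, T (ee i) (ee j) = (1/2) * (A (ee i) (ee j) + B (ee i) (ee j)) := by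
    intro i j
    rw [hm]
    simp [ContinuousLinearMap.smul_apply, ContinuousLinearMap.add_apply, smul_eq_mul]
    ring
  have m00 := hmid 0 0
  have m10 := hmid 1 0
  have m01 := hmid 0 1
  have m11 := hmid 1 1
  obtain ⟨q1, q2⟩ := l1_mid _ _ _ _ _ _ hV1 hApq hBpq (by linarith) (by linarith)
  obtain ⟨q3, q4⟩ := l1_mid _ _ _ _ _ _ hV2 hArs hBrs (by linarith) (by linarith)
  refine ext_of_entries A B ?_
  intro i j
  have hi : i = 0 ∨ i = 1 := by omega
  have hj : j = 0 ∨ j = 1 := by omega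
  rcases hi with rfl | rfl <;> rcases hj with rfl | rfl <;> linarith

lemma vertex_of_extreme (T : (Fin 2 → ℝ) →L[ℝ] (Fin 2 → ℝ) →L[ℝ] ℝ) (hT : ‖T‖ ≤ 1)
    (hext : ∀ A B : (Fin 2 → ℝ) →L[ℝ] (Fin 2 → ℝ) →L[ℝ] ℝ,
      ‖A‖ ≤ 1 → ‖B‖ ≤ 1 → T = (1 / 2 : ℝ) • (A + B) → A = B) :
    V (T (ee 0) (ee 0) + T (ee 1) (ee 1)) (T (ee 1) (ee 0) + T (ee 0) (ee 1)) ∧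
    V (T (ee 0) (ee 0) - T (ee 1) (ee 1)) (T (ee 1) (ee 0) - T (ee 0) (ee 1)) := by
  obtain ⟨hpq, hrs⟩ := pq_bounds T hT
  constructor
  · refine l1_vertex _ _ hpq (fun u v h1 h2 => ?_)
    set S := Bf (u/2) (v/2) (v/2) (u/2) with hS
    obtain ⟨s00, s10, s01, s11⟩ := Bf_entry (u/2) (v/2) (v/2) (u/2)
    rw [← hS] at s00 s10 s01 s11
    have hAe : ∀ i j : Fin 2, (T + S) (ee i) (ee j) = T (ee i) (ee j) + S (ee i) (ee j) := by
      intro i j; simp [ContinuousLinearMap.add_apply]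
    have hBe : ∀ i j : Fin 2, (T - S) (ee i) (ee j) = T (ee i) (ee j) - S (ee i) (ee j) := by
      intro i j; simp [ContinuousLinearMap.sub_apply]
    have ha1 : |(T (ee 0) (ee 0) + T (ee 1) (ee 1) + u) + (T (ee 1) (ee 0) + T (ee 0) (ee 1) + v)| ≤ 1 := by
      calc _ ≤ |T (ee 0) (ee 0) + T (ee 1) (ee 1) + u| + |T (ee 1) (ee 0) + T (ee 0) (ee 1) + v| :=
            abs_add_le _ _
        _ ≤ 1 := h1
    have ha4 : |(T (ee 0) (ee 0) + T (ee 1) (ee 1) + u) - (T (ee 1) (ee 0) + T (ee 0) (ee 1) + v)| ≤ 1 := by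
      calc _ ≤ |T (ee 0) (ee 0) + T (ee 1) (ee 1) + u| + |T (ee 1) (ee 0) + T (ee 0) (ee 1) + v| :=
            abs_sub _ _
        _ ≤ 1 := h1
    have hb1 : |(T (ee 0) (ee 0) + T (ee 1) (ee 1) - u) + (T (ee 1) (ee 0) + T (ee 0) (ee 1) - v)| ≤ 1 := by
      calc _ ≤ |T (ee 0) (ee 0) + T (ee 1) (ee 1) - u| + |T (ee 1) (ee 0) + T (ee 0) (ee 1) - v| :=
            abs_add_le _ _
        _ ≤ 1 := h2
    have hb4 : |(T (ee 0) (ee 0) + T (ee 1) (ee 1) - u) - (T (ee 1) (ee 0) + T (ee 0) (ee 1) - v)| ≤ 1 := by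
      calc _ ≤ |T (ee 0) (ee 0) + T (ee 1) (ee 1) - u| + |T (ee 1) (ee 0) + T (ee 0) (ee 1) - v| :=
            abs_sub _ _
        _ ≤ 1 := h2
    have hr2 : |(T (ee 0) (ee 0) - T (ee 1) (ee 1)) + (T (ee 1) (ee 0) - T (ee 0) (ee 1))| ≤ 1 := by
      calc _ ≤ |T (ee 0) (ee 0) - T (ee 1) (ee 1)| + |T (ee 1) (ee 0) - T (ee 0) (ee 1)| := abs_add_le _ _
        _ ≤ 1 := hrs
    have hr3 : |(T (ee 0) (ee 0) - T (ee 1) (ee 1)) - (T (ee 1) (ee 0) - T (ee 0) (ee 1))| ≤ 1 := by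
      calc _ ≤ |T (ee 0) (ee 0) - T (ee 1) (ee 1)| + |T (ee 1) (ee 0) - T (ee 0) (ee 1)| := abs_sub _ _
        _ ≤ 1 := hrs
    have hAn : ‖T + S‖ ≤ 1 := by
      refine norm_le_one _ ?_ ?_ ?_ ?_ <;> rw [hAe, hAe, hAe, hAe, s00, s10, s01, s11]
      · calc _ = |(T (ee 0) (ee 0) + T (ee 1) (ee 1) + u) + (T (ee 1) (ee 0) + T (ee 0) (ee 1) + v)| := by
              ring_nf
          _ ≤ 1 := ha1
      · calc _ = |(T (ee 0) (ee 0) - T (ee 1) (ee 1)) + (T (ee 1) (ee 0) - T (ee 0) (ee 1))| := by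
              ring_nf
          _ ≤ 1 := hr2
      · calc _ = |(T (ee 0) (ee 0) - T (ee 1) (ee 1)) - (T (ee 1) (ee 0) - T (ee 0) (ee 1))| := by
              ring_nf
          _ ≤ 1 := hr3
      · calc _ = |(T (ee 0) (ee 0) + T (ee 1) (ee 1) + u) - (T (ee 1) (ee 0) + T (ee 0) (ee 1) + v)| := by
              ring_nf
          _ ≤ 1 := ha4
    have hBn : ‖T - S‖ ≤ 1 := by
      refine norm_le_one _ ?_ ?_ ?_ ?_ <;> rw [hBe, hBe, hBe, hBe, s00, s10, s01, s11]
      · calc _ = |(T (ee 0) (ee 0) + T (ee 1) (ee 1) - u) + (T (ee 1) (ee 0) + T (ee 0) (ee 1) - v)| := by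
              ring_nf
          _ ≤ 1 := hb1
      · calc _ = |(T (ee 0) (ee 0) - T (ee 1) (ee 1)) + (T (ee 1) (ee 0) - T (ee 0) (ee 1))| := by
              ring_nf
          _ ≤ 1 := hr2
      · calc _ = |(T (ee 0) (ee 0) - T (ee 1) (ee 1)) - (T (ee 1) (ee 0) - T (ee 0) (ee 1))| := by
              ring_nf
          _ ≤ 1 := hr3
      · calc _ = |(T (ee 0) (ee 0) + T (ee 1) (ee 1) - u) - (T (ee 1) (ee 0) + T (ee 0) (ee 1) - v)| := by
              ring_nf
          _ ≤ 1 := hb4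
    have hmid : T = (1 / 2 : ℝ) • ((T + S) + (T - S)) := by
      ext x y
      simp [ContinuousLinearMap.add_apply, ContinuousLinearMap.sub_apply,
        ContinuousLinearMap.smul_apply, smul_eq_mul]
      ring
    have hAB := hext (T + S) (T - S) hAn hBn hmid
    have h00 : (T + S) (ee 0) (ee 0) = (T - S) (ee 0) (ee 0) := by rw [hAB]
    have h10 : (T + S) (ee 1) (ee 0) = (T - S) (ee 1) (ee 0) := by rw [hAB]
    rw [hAe, hBe, s00] at h00
    rw [hAe, hBe, s10] at h10
    constructor <;> linarith
  · refine l1_vertex _ _ hrs (fun u v h1 h2 => ?_)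
    set S := Bf (u/2) (v/2) (-(v/2)) (-(u/2)) with hS
    obtain ⟨s00, s10, s01, s11⟩ := Bf_entry (u/2) (v/2) (-(v/2)) (-(u/2))
    rw [← hS] at s00 s10 s01 s11
    have hAe : ∀ i j : Fin 2, (T + S) (ee i) (ee j) = T (ee i) (ee j) + S (ee i) (ee j) := by
      intro i j; simp [ContinuousLinearMap.add_apply]
    have hBe : ∀ i j : Fin 2, (T - S) (ee i) (ee j) = T (ee i) (ee j) - S (ee i) (ee j) := by
      intro i j; simp [ContinuousLinearMap.sub_apply]
    have ha1 : |(T (ee 0) (ee 0) - T (ee 1) (ee 1) + u) + (T (ee 1) (ee 0) - T (ee 0) (ee 1) + v)| ≤ 1 := by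
      calc _ ≤ |T (ee 0) (ee 0) - T (ee 1) (ee 1) + u| + |T (ee 1) (ee 0) - T (ee 0) (ee 1) + v| :=
            abs_add_le _ _
        _ ≤ 1 := h1
    have ha4 : |(T (ee 0) (ee 0) - T (ee 1) (ee 1) + u) - (T (ee 1) (ee 0) - T (ee 0) (ee 1) + v)| ≤ 1 := by
      calc _ ≤ |T (ee 0) (ee 0) - T (ee 1) (ee 1) + u| + |T (ee 1) (ee 0) - T (ee 0) (ee 1) + v| :=
            abs_sub _ _
        _ ≤ 1 := h1
    have hb1 : |(T (ee 0) (ee 0) - T (ee 1) (ee 1) - u) + (T (ee 1) (ee 0) - T (ee 0) (ee 1) - v)| ≤ 1 := by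
      calc _ ≤ |T (ee 0) (ee 0) - T (ee 1) (ee 1) - u| + |T (ee 1) (ee 0) - T (ee 0) (ee 1) - v| :=
            abs_add_le _ _
        _ ≤ 1 := h2
    have hb4 : |(T (ee 0) (ee 0) - T (ee 1) (ee 1) - u) - (T (ee 1) (ee 0) - T (ee 0) (ee 1) - v)| ≤ 1 := by
      calc _ ≤ |T (ee 0) (ee 0) - T (ee 1) (ee 1) - u| + |T (ee 1) (ee 0) - T (ee 0) (ee 1) - v| :=
            abs_sub _ _
        _ ≤ 1 := h2
    have hr2 : |(T (ee 0) (ee 0) + T (ee 1) (ee 1)) + (T (ee 1) (ee 0) + T (ee 0) (ee 1))| ≤ 1 := by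
      calc _ ≤ |T (ee 0) (ee 0) + T (ee 1) (ee 1)| + |T (ee 1) (ee 0) + T (ee 0) (ee 1)| := abs_add_le _ _
        _ ≤ 1 := hpq
    have hr3 : |(T (ee 0) (ee 0) + T (ee 1) (ee 1)) - (T (ee 1) (ee 0) + T (ee 0) (ee 1))| ≤ 1 := by
      calc _ ≤ |T (ee 0) (ee 0) + T (ee 1) (ee 1)| + |T (ee 1) (ee 0) + T (ee 0) (ee 1)| := abs_sub _ _
        _ ≤ 1 := hpq
    have hAn : ‖T + S‖ ≤ 1 := by
      refine norm_le_one _ ?_ ?_ ?_ ?_ <;> rw [hAe, hAe, hAe, hAe, s00, s10, s01, s11]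
      · calc _ = |(T (ee 0) (ee 0) + T (ee 1) (ee 1)) + (T (ee 1) (ee 0) + T (ee 0) (ee 1))| := by
              ring_nf
          _ ≤ 1 := hr2
      · calc _ = |(T (ee 0) (ee 0) - T (ee 1) (ee 1) + u) + (T (ee 1) (ee 0) - T (ee 0) (ee 1) + v)| := by
              ring_nf
          _ ≤ 1 := ha1
      · calc _ = |(T (ee 0) (ee 0) - T (ee 1) (ee 1) + u) - (T (ee 1) (ee 0) - T (ee 0) (ee 1) + v)| := by
              ring_nf
          _ ≤ 1 := ha4
      · calc _ = |(T (ee 0) (ee 0) + T (ee 1) (ee 1)) - (T (ee 1) (ee 0) + T (ee 0) (ee 1))| := by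
              ring_nf
          _ ≤ 1 := hr3
    have hBn : ‖T - S‖ ≤ 1 := by
      refine norm_le_one _ ?_ ?_ ?_ ?_ <;> rw [hBe, hBe, hBe, hBe, s00, s10, s01, s11]
      · calc _ = |(T (ee 0) (ee 0) + T (ee 1) (ee 1)) + (T (ee 1) (ee 0) + T (ee 0) (ee 1))| := by
              ring_nf
          _ ≤ 1 := hr2
      · calc _ = |(T (ee 0) (ee 0) - T (ee 1) (ee 1) - u) + (T (ee 1) (ee 0) - T (ee 0) (ee 1) - v)| := by
              ring_nf
          _ ≤ 1 := hb1
      · calc _ = |(T (ee 0) (ee 0) - T (ee 1) (ee 1) - u) - (T (ee 1) (ee 0) - T (ee 0) (ee 1) - v)| := by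
              ring_nf
          _ ≤ 1 := hb4
      · calc _ = |(T (ee 0) (ee 0) + T (ee 1) (ee 1)) - (T (ee 1) (ee 0) + T (ee 0) (ee 1))| := by
              ring_nf
          _ ≤ 1 := hr3
    have hmid : T = (1 / 2 : ℝ) • ((T + S) + (T - S)) := by
      ext x y
      simp [ContinuousLinearMap.add_apply, ContinuousLinearMap.sub_apply,
        ContinuousLinearMap.smul_apply, smul_eq_mul]
      ring
    have hAB := hext (T + S) (T - S) hAn hBn hmid
    have h00 : (T + S) (ee 0) (ee 0) = (T - S) (ee 0) (ee 0) := by rw [hAB]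
    have h10 : (T + S) (ee 1) (ee 0) = (T - S) (ee 1) (ee 0) := by rw [hAB]
    rw [hAe, hBe, s00] at h00
    rw [hAe, hBe, s10] at h10
    constructor <;> linarith

/-- Characterization of the extreme points of the closed unit ball of the space of bilinear
forms on `ℓ∞²(ℝ)`: they are exactly the sixteen forms `± xᵢyⱼ` and
`½(ε₁₁x₁y₁ + ε₂₁x₂y₁ + ε₁₂x₁y₂ + ε₂₂x₂y₂)` with signs `ε` of product `-1`.
(Extreme point of the ball: `T` is in the ball and whenever `T` is the midpoint of two
members `A, B` of the ball, then `A = B`.) -/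
theorem extremePoints_unitBall_bilinear_linf2
    (T : (Fin 2 → ℝ) →L[ℝ] (Fin 2 → ℝ) →L[ℝ] ℝ) :
    (‖T‖ ≤ 1 ∧ ∀ A B : (Fin 2 → ℝ) →L[ℝ] (Fin 2 → ℝ) →L[ℝ] ℝ,
        ‖A‖ ≤ 1 → ‖B‖ ≤ 1 → T = (1 / 2 : ℝ) • (A + B) → A = B)
    ↔ ((∃ ε : ℝ, (ε = 1 ∨ ε = -1) ∧ ∃ i j : Fin 2,
          ∀ x y : Fin 2 → ℝ, T x y = ε * x i * y j)
      ∨ (∃ ε : Fin 2 → Fin 2 → ℝ, (∀ i j, ε i j = 1 ∨ ε i j = -1)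
          ∧ ε 0 0 * ε 1 0 * ε 0 1 * ε 1 1 = -1
          ∧ ∀ x y : Fin 2 → ℝ,
              T x y = (1 / 2) * ∑ i : Fin 2, ∑ j : Fin 2, ε i j * x i * y j)) := by
  constructor
  · rintro ⟨hn, hext⟩
    obtain ⟨hV1, hV2⟩ := vertex_of_extreme T hn hext
    rcases hV1 with ⟨h1,h2⟩ | ⟨h1,h2⟩ | ⟨h1,h2⟩ | ⟨h1,h2⟩ <;>
      rcases hV2 with ⟨h3,h4⟩ | ⟨h3,h4⟩ | ⟨h3,h4⟩ | ⟨h3,h4⟩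
    · refine Or.inl ⟨1, Or.inl rfl, 0, 0, fun x y => ?_⟩
      rw [expand T x y]
      have ha : T (ee 0) (ee 0) = 1 := by linarith
      have hb : T (ee 1) (ee 0) = 0 := by linarith
      have hc : T (ee 0) (ee 1) = 0 := by linarith
      have hd : T (ee 1) (ee 1) = 0 := by linarith
      rw [ha, hb, hc, hd]; ring
    · refine Or.inl ⟨1, Or.inl rfl, 1, 1, fun x y => ?_⟩
      rw [expand T x y]
      have ha : T (ee 0) (ee 0) = 0 := by linarith
      have hb : T (ee 1) (ee 0) = 0 := by linarith
      have hc : T (ee 0) (ee 1) = 0 := by linarith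
      have hd : T (ee 1) (ee 1) = 1 := by linarith
      rw [ha, hb, hc, hd]; ring
    · refine Or.inr ⟨![![1, -1], ![1, 1]], ?_, ?_, fun x y => ?_⟩
      · intro i j
        have hi : i = 0 ∨ i = 1 := by omega
        have hj : j = 0 ∨ j = 1 := by omega
        rcases hi with rfl | rfl <;> rcases hj with rfl | rfl <;> norm_num
      · norm_num
      · rw [expand T x y]
        have ha : T (ee 0) (ee 0) = (1/2 : ℝ) := by linarith
        have hb : T (ee 1) (ee 0) = (1/2 : ℝ) := by linarith
        have hc : T (ee 0) (ee 1) = (-(1/2) : ℝ) := by linarith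
        have hd : T (ee 1) (ee 1) = (1/2 : ℝ) := by linarith
        rw [ha, hb, hc, hd]
        simp [Fin.sum_univ_two]
        ring
    · refine Or.inr ⟨![![1, 1], ![-1, 1]], ?_, ?_, fun x y => ?_⟩
      · intro i j
        have hi : i = 0 ∨ i = 1 := by omega
        have hj : j = 0 ∨ j = 1 := by omega
        rcases hi with rfl | rfl <;> rcases hj with rfl | rfl <;> norm_num
      · norm_num
      · rw [expand T x y]
        have ha : T (ee 0) (ee 0) = (1/2 : ℝ) := by linarith
        have hb : T (ee 1) (ee 0) = (-(1/2) : ℝ) := by linarith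
        have hc : T (ee 0) (ee 1) = (1/2 : ℝ) := by linarith
        have hd : T (ee 1) (ee 1) = (1/2 : ℝ) := by linarith
        rw [ha, hb, hc, hd]
        simp [Fin.sum_univ_two]
        ring
    · refine Or.inl ⟨-1, Or.inr rfl, 1, 1, fun x y => ?_⟩
      rw [expand T x y]
      have ha : T (ee 0) (ee 0) = 0 := by linarith
      have hb : T (ee 1) (ee 0) = 0 := by linarith
      have hc : T (ee 0) (ee 1) = 0 := by linarith
      have hd : T (ee 1) (ee 1) = -1 := by linarith
      rw [ha, hb, hc, hd]; ring
    · refine Or.inl ⟨-1, Or.inr rfl, 0, 0, fun x y => ?_⟩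
      rw [expand T x y]
      have ha : T (ee 0) (ee 0) = -1 := by linarith
      have hb : T (ee 1) (ee 0) = 0 := by linarith
      have hc : T (ee 0) (ee 1) = 0 := by linarith
      have hd : T (ee 1) (ee 1) = 0 := by linarith
      rw [ha, hb, hc, hd]; ring
    · refine Or.inr ⟨![![-1, -1], ![1, -1]], ?_, ?_, fun x y => ?_⟩
      · intro i j
        have hi : i = 0 ∨ i = 1 := by omega
        have hj : j = 0 ∨ j = 1 := by omega
        rcases hi with rfl | rfl <;> rcases hj with rfl | rfl <;> norm_num
      · norm_num
      · rw [expand T x y]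
        have ha : T (ee 0) (ee 0) = (-(1/2) : ℝ) := by linarith
        have hb : T (ee 1) (ee 0) = (1/2 : ℝ) := by linarith
        have hc : T (ee 0) (ee 1) = (-(1/2) : ℝ) := by linarith
        have hd : T (ee 1) (ee 1) = (-(1/2) : ℝ) := by linarith
        rw [ha, hb, hc, hd]
        simp [Fin.sum_univ_two]
        ring
    · refine Or.inr ⟨![![-1, 1], ![-1, -1]], ?_, ?_, fun x y => ?_⟩
      · intro i j
        have hi : i = 0 ∨ i = 1 := by omega
        have hj : j = 0 ∨ j = 1 := by omega
        rcases hi with rfl | rfl <;> rcases hj with rfl | rfl <;> norm_num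
      · norm_num
      · rw [expand T x y]
        have ha : T (ee 0) (ee 0) = (-(1/2) : ℝ) := by linarith
        have hb : T (ee 1) (ee 0) = (-(1/2) : ℝ) := by linarith
        have hc : T (ee 0) (ee 1) = (1/2 : ℝ) := by linarith
        have hd : T (ee 1) (ee 1) = (-(1/2) : ℝ) := by linarith
        rw [ha, hb, hc, hd]
        simp [Fin.sum_univ_two]
        ring
    · refine Or.inr ⟨![![1, 1], ![1, -1]], ?_, ?_, fun x y => ?_⟩
      · intro i j
        have hi : i = 0 ∨ i = 1 := by omega
        have hj : j = 0 ∨ j = 1 := by omega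
        rcases hi with rfl | rfl <;> rcases hj with rfl | rfl <;> norm_num
      · norm_num
      · rw [expand T x y]
        have ha : T (ee 0) (ee 0) = (1/2 : ℝ) := by linarith
        have hb : T (ee 1) (ee 0) = (1/2 : ℝ) := by linarith
        have hc : T (ee 0) (ee 1) = (1/2 : ℝ) := by linarith
        have hd : T (ee 1) (ee 1) = (-(1/2) : ℝ) := by linarith
        rw [ha, hb, hc, hd]
        simp [Fin.sum_univ_two]
        ring
    · refine Or.inr ⟨![![-1, 1], ![1, 1]], ?_, ?_, fun x y => ?_⟩
      · intro i j
        have hi : i = 0 ∨ i = 1 := by omega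
        have hj : j = 0 ∨ j = 1 := by omega
        rcases hi with rfl | rfl <;> rcases hj with rfl | rfl <;> norm_num
      · norm_num
      · rw [expand T x y]
        have ha : T (ee 0) (ee 0) = (-(1/2) : ℝ) := by linarith
        have hb : T (ee 1) (ee 0) = (1/2 : ℝ) := by linarith
        have hc : T (ee 0) (ee 1) = (1/2 : ℝ) := by linarith
        have hd : T (ee 1) (ee 1) = (1/2 : ℝ) := by linarith
        rw [ha, hb, hc, hd]
        simp [Fin.sum_univ_two]
        ring
    · refine Or.inl ⟨1, Or.inl rfl, 1, 0, fun x y => ?_⟩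
      rw [expand T x y]
      have ha : T (ee 0) (ee 0) = 0 := by linarith
      have hb : T (ee 1) (ee 0) = 1 := by linarith
      have hc : T (ee 0) (ee 1) = 0 := by linarith
      have hd : T (ee 1) (ee 1) = 0 := by linarith
      rw [ha, hb, hc, hd]; ring
    · refine Or.inl ⟨1, Or.inl rfl, 0, 1, fun x y => ?_⟩
      rw [expand T x y]
      have ha : T (ee 0) (ee 0) = 0 := by linarith
      have hb : T (ee 1) (ee 0) = 0 := by linarith
      have hc : T (ee 0) (ee 1) = 1 := by linarith
      have hd : T (ee 1) (ee 1) = 0 := by linarith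
      rw [ha, hb, hc, hd]; ring
    · refine Or.inr ⟨![![1, -1], ![-1, -1]], ?_, ?_, fun x y => ?_⟩
      · intro i j
        have hi : i = 0 ∨ i = 1 := by omega
        have hj : j = 0 ∨ j = 1 := by omega
        rcases hi with rfl | rfl <;> rcases hj with rfl | rfl <;> norm_num
      · norm_num
      · rw [expand T x y]
        have ha : T (ee 0) (ee 0) = (1/2 : ℝ) := by linarith
        have hb : T (ee 1) (ee 0) = (-(1/2) : ℝ) := by linarith
        have hc : T (ee 0) (ee 1) = (-(1/2) : ℝ) := by linarith
        have hd : T (ee 1) (ee 1) = (-(1/2) : ℝ) := by linarith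
        rw [ha, hb, hc, hd]
        simp [Fin.sum_univ_two]
        ring
    · refine Or.inr ⟨![![-1, -1], ![-1, 1]], ?_, ?_, fun x y => ?_⟩
      · intro i j
        have hi : i = 0 ∨ i = 1 := by omega
        have hj : j = 0 ∨ j = 1 := by omega
        rcases hi with rfl | rfl <;> rcases hj with rfl | rfl <;> norm_num
      · norm_num
      · rw [expand T x y]
        have ha : T (ee 0) (ee 0) = (-(1/2) : ℝ) := by linarith
        have hb : T (ee 1) (ee 0) = (-(1/2) : ℝ) := by linarith
        have hc : T (ee 0) (ee 1) = (-(1/2) : ℝ) := by linarith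
        have hd : T (ee 1) (ee 1) = (1/2 : ℝ) := by linarith
        rw [ha, hb, hc, hd]
        simp [Fin.sum_univ_two]
        ring
    · refine Or.inl ⟨-1, Or.inr rfl, 0, 1, fun x y => ?_⟩
      rw [expand T x y]
      have ha : T (ee 0) (ee 0) = 0 := by linarith
      have hb : T (ee 1) (ee 0) = 0 := by linarith
      have hc : T (ee 0) (ee 1) = -1 := by linarith
      have hd : T (ee 1) (ee 1) = 0 := by linarith
      rw [ha, hb, hc, hd]; ring
    · refine Or.inl ⟨-1, Or.inr rfl, 1, 0, fun x y => ?_⟩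
      rw [expand T x y]
      have ha : T (ee 0) (ee 0) = 0 := by linarith
      have hb : T (ee 1) (ee 0) = -1 := by linarith
      have hc : T (ee 0) (ee 1) = 0 := by linarith
      have hd : T (ee 1) (ee 1) = 0 := by linarith
      rw [ha, hb, hc, hd]; ring
  · intro h
    have hent : ∃ a b c d : ℝ, T (ee 0) (ee 0) = a ∧ T (ee 1) (ee 0) = b ∧
        T (ee 0) (ee 1) = c ∧ T (ee 1) (ee 1) = d ∧ V (a + d) (b + c) ∧ V (a - d) (b - c) := by
      rcases h with ⟨ε, hε, i, j, hT⟩ | ⟨ε, hε, hp, hT⟩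
      · have e00 : T (ee 0) (ee 0) = ε * ee 0 i * ee 0 j := hT (ee 0) (ee 0)
        have e10 : T (ee 1) (ee 0) = ε * ee 1 i * ee 0 j := hT (ee 1) (ee 0)
        have e01 : T (ee 0) (ee 1) = ε * ee 0 i * ee 1 j := hT (ee 0) (ee 1)
        have e11 : T (ee 1) (ee 1) = ε * ee 1 i * ee 1 j := hT (ee 1) (ee 1)
        have hi : i = 0 ∨ i = 1 := by omega
        have hj : j = 0 ∨ j = 1 := by omega
        rcases hi with rfl | rfl <;> rcases hj with rfl | rfl <;>
          simp only [ee, Pi.single_eq_same, Pi.single_eq_of_ne (by decide : (1:Fin 2) ≠ 0),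
            Pi.single_eq_of_ne (by decide : (0:Fin 2) ≠ 1), mul_zero, mul_one, zero_mul] at e00 e10 e01 e11 <;>
          rcases hε with rfl | rfl <;>
          refine ⟨_, _, _, _, e00, e10, e01, e11, ?_, ?_⟩ <;> norm_num [V]
      · have e00 : T (ee 0) (ee 0) = ε 0 0 / 2 := by
          rw [hT]
          simp [ee, Fin.sum_univ_two, Pi.single_eq_of_ne (by decide : (1:Fin 2) ≠ 0),
            Pi.single_eq_of_ne (by decide : (0:Fin 2) ≠ 1)]
          ring
        have e10 : T (ee 1) (ee 0) = ε 1 0 / 2 := by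
          rw [hT]
          simp [ee, Fin.sum_univ_two, Pi.single_eq_of_ne (by decide : (1:Fin 2) ≠ 0),
            Pi.single_eq_of_ne (by decide : (0:Fin 2) ≠ 1)]
          ring
        have e01 : T (ee 0) (ee 1) = ε 0 1 / 2 := by
          rw [hT]
          simp [ee, Fin.sum_univ_two, Pi.single_eq_of_ne (by decide : (1:Fin 2) ≠ 0),
            Pi.single_eq_of_ne (by decide : (0:Fin 2) ≠ 1)]
          ring
        have e11 : T (ee 1) (ee 1) = ε 1 1 / 2 := by
          rw [hT]
          simp [ee, Fin.sum_univ_two, Pi.single_eq_of_ne (by decide : (1:Fin 2) ≠ 0),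
            Pi.single_eq_of_ne (by decide : (0:Fin 2) ≠ 1)]
          ring
        refine ⟨_, _, _, _, e00, e10, e01, e11, ?_, ?_⟩ <;>
          rcases hε 0 0 with h00 | h00 <;> rcases hε 1 0 with h10 | h10 <;>
          rcases hε 0 1 with h01 | h01 <;> rcases hε 1 1 with h11 | h11 <;>
          rw [h00, h10, h01, h11] at hp ⊢ <;>
          first
            | (exfalso; revert hp; norm_num; done)
            | norm_num [V]
    obtain ⟨a, b, c, d, e00, e10, e01, e11, hV1, hV2⟩ := hent
    have hV1' : V (T (ee 0) (ee 0) + T (ee 1) (ee 1)) (T (ee 1) (ee 0) + T (ee 0) (ee 1)) := by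
      rw [e00, e10, e01, e11]; exact hV1
    have hV2' : V (T (ee 0) (ee 0) - T (ee 1) (ee 1)) (T (ee 1) (ee 0) - T (ee 0) (ee 1)) := by
      rw [e00, e10, e01, e11]; exact hV2
    exact ⟨norm_le_one_of_V T hV1' hV2', extreme_of_V T hV1' hV2'⟩
end

section
/- In the space of bilinear forms on ℓ∞²(ℝ) with the operator norm, the set of extreme points of the closed unit ball coincides with the set of exposed points of the closed unit ball. -/
/-- The topological dual of a normed space, as `NormedSpace.Dual` was defined in the older
Mathlib (removed since; `StrongDual` does not carry the normed-space instances here). -/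
abbrev NormedSpace.Dual (𝕜 : Type*) [NontriviallyNormedField 𝕜] (E : Type*)
    [SeminormedAddCommGroup E] [NormedSpace 𝕜 E] : Type _ :=
  E →L[𝕜] 𝕜

open ContinuousLinearMap

private abbrev K2 := (Fin 2 → ℝ) →L[ℝ] (Fin 2 → ℝ) →L[ℝ] ℝ

private def wp : Fin 2 → ℝ := ![1, 1]
private def wm : Fin 2 → ℝ := ![1, -1]
private def e0 : Fin 2 → ℝ := ![1, 0]
private def e1 : Fin 2 → ℝ := ![0, 1]

private lemma norm_wp : ‖wp‖ ≤ 1 := by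
  rw [pi_norm_le_iff_of_nonneg zero_le_one]; intro i; fin_cases i <;> simp [wp]
private lemma norm_wm : ‖wm‖ ≤ 1 := by
  rw [pi_norm_le_iff_of_nonneg zero_le_one]; intro i; fin_cases i <;> simp [wm]
private lemma norm_e0 : ‖e0‖ ≤ 1 := by
  rw [pi_norm_le_iff_of_nonneg zero_le_one]; intro i; fin_cases i <;> simp [e0]
private lemma norm_e1 : ‖e1‖ ≤ 1 := by
  rw [pi_norm_le_iff_of_nonneg zero_le_one]; intro i; fin_cases i <;> simp [e1]

private noncomputable def foo (i j : Fin 2) : K2 :=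
  (ContinuousLinearMap.proj i : (Fin 2 → ℝ) →L[ℝ] ℝ).smulRight
    (ContinuousLinearMap.proj j : (Fin 2 → ℝ) →L[ℝ] ℝ)

private lemma foo_apply (i j : Fin 2) (x y : Fin 2 → ℝ) : foo i j x y = x i * y j := by
  simp [foo]

private noncomputable def bform (u v p q : ℝ) : K2 :=
  ((u+p)/2) • foo 0 0 + ((v+q)/2) • foo 0 1 + ((u-p)/2) • foo 1 0 + ((v-q)/2) • foo 1 1

private lemma bform_apply (u v p q : ℝ) (x y : Fin 2 → ℝ) :
    bform u v p q x y =
      (x 0 + x 1)/2 * (u * y 0 + v * y 1) + (x 0 - x 1)/2 * (p * y 0 + q * y 1) := by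
  simp [bform, foo_apply, ContinuousLinearMap.add_apply, ContinuousLinearMap.smul_apply]
  ring

private lemma eval_repr (T : K2) (x y : Fin 2 → ℝ) :
    T x y = (x 0 + x 1)/2 * (T wp e0 * y 0 + T wp e1 * y 1)
      + (x 0 - x 1)/2 * (T wm e0 * y 0 + T wm e1 * y 1) := by
  have hx : x = ((x 0 + x 1)/2) • wp + ((x 0 - x 1)/2) • wm := by
    funext i; fin_cases i <;> simp [wp, wm] <;> ring
  have hy : y = (y 0) • e0 + (y 1) • e1 := by
    funext i; fin_cases i <;> simp [e0, e1]
  conv_lhs => rw [hx, hy]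
  simp only [map_add, map_smul, ContinuousLinearMap.add_apply,
    ContinuousLinearMap.coe_smul', Pi.smul_apply, smul_eq_mul]
  ring

private lemma repr_eq (T : K2) : bform (T wp e0) (T wp e1) (T wm e0) (T wm e1) = T := by
  refine ContinuousLinearMap.ext fun x => ContinuousLinearMap.ext fun y => ?_
  rw [bform_apply, eval_repr T x y]

private lemma bform_c1 (u v p q : ℝ) : bform u v p q wp e0 = u := by
  rw [bform_apply]; norm_num [wp, e0]
private lemma bform_c2 (u v p q : ℝ) : bform u v p q wp e1 = v := by
  rw [bform_apply]; norm_num [wp, e1]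
private lemma bform_c3 (u v p q : ℝ) : bform u v p q wm e0 = p := by
  rw [bform_apply]; norm_num [wm, e0]
private lemma bform_c4 (u v p q : ℝ) : bform u v p q wm e1 = q := by
  rw [bform_apply]; norm_num [wm, e1]

private lemma exists_sign (r : ℝ) : ∃ s : ℝ, ‖s‖ ≤ 1 ∧ s * r = |r| := by
  rcases le_or_gt 0 r with h | h
  · exact ⟨1, by norm_num, by rw [one_mul, abs_of_nonneg h]⟩
  · exact ⟨-1, by norm_num, by rw [neg_one_mul, abs_of_neg h]⟩

private lemma row_bound (T : K2) (hT : ‖T‖ ≤ 1) (z : Fin 2 → ℝ) (hz : ‖z‖ ≤ 1) :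
    |T z e0| + |T z e1| ≤ 1 := by
  obtain ⟨s, hs, hse⟩ := exists_sign (T z e0)
  obtain ⟨t, ht, hte⟩ := exists_sign (T z e1)
  have hy : (![s, t] : Fin 2 → ℝ) = s • e0 + t • e1 := by
    funext i; fin_cases i <;> simp [e0, e1]
  have h1 : T z ![s, t] = s * T z e0 + t * T z e1 := by
    rw [hy]; simp [map_add, map_smul, smul_eq_mul]
  have hny : ‖(![s, t] : Fin 2 → ℝ)‖ ≤ 1 := by
    rw [pi_norm_le_iff_of_nonneg zero_le_one]
    intro i; fin_cases i <;> simpa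
  have h2 : |T z ![s, t]| ≤ 1 := by
    rw [← Real.norm_eq_abs]
    calc ‖T z ![s, t]‖ ≤ ‖T z‖ * ‖(![s, t] : Fin 2 → ℝ)‖ := le_opNorm _ _
      _ ≤ ‖T z‖ * 1 := mul_le_mul_of_nonneg_left hny (norm_nonneg _)
      _ = ‖T z‖ := mul_one _
      _ ≤ ‖T‖ * ‖z‖ := le_opNorm _ _
      _ ≤ 1 * 1 := mul_le_mul hT hz (norm_nonneg _) zero_le_one
      _ = 1 := one_mul _
  calc |T z e0| + |T z e1| = s * T z e0 + t * T z e1 := by rw [hse, hte]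
    _ = T z ![s, t] := h1.symm
    _ ≤ |T z ![s, t]| := le_abs_self _
    _ ≤ 1 := h2

private lemma norm_le_of_coords (T : K2)
    (h1 : |T wp e0| + |T wp e1| ≤ 1) (h2 : |T wm e0| + |T wm e1| ≤ 1) : ‖T‖ ≤ 1 := by
  refine opNorm_le_bound T zero_le_one fun x => ?_
  rw [one_mul]
  refine opNorm_le_bound _ (norm_nonneg x) fun y => ?_
  rw [Real.norm_eq_abs, eval_repr]
  have hx0 : |x 0| ≤ ‖x‖ := by rw [← Real.norm_eq_abs]; exact norm_le_pi_norm x 0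
  have hx1 : |x 1| ≤ ‖x‖ := by rw [← Real.norm_eq_abs]; exact norm_le_pi_norm x 1
  have hy0 : |y 0| ≤ ‖y‖ := by rw [← Real.norm_eq_abs]; exact norm_le_pi_norm y 0
  have hy1 : |y 1| ≤ ‖y‖ := by rw [← Real.norm_eq_abs]; exact norm_le_pi_norm y 1
  set a := (x 0 + x 1)/2 with ha
  set b := (x 0 - x 1)/2 with hb
  have hab : |a| + |b| ≤ ‖x‖ := by
    rcases abs_cases a with ⟨h1', -⟩ | ⟨h1', -⟩ <;> rcases abs_cases b with ⟨h2', -⟩ | ⟨h2', -⟩ <;>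
      rw [h1', h2'] <;>
      linarith [le_abs_self (x 0), neg_abs_le (x 0), le_abs_self (x 1), neg_abs_le (x 1)]
  have key : ∀ u v : ℝ, |u| + |v| ≤ 1 → |u * y 0 + v * y 1| ≤ ‖y‖ := by
    intro u v huv
    calc |u * y 0 + v * y 1| ≤ |u * y 0| + |v * y 1| := abs_add_le _ _
      _ = |u| * |y 0| + |v| * |y 1| := by rw [abs_mul, abs_mul]
      _ ≤ |u| * ‖y‖ + |v| * ‖y‖ :=
          add_le_add (mul_le_mul_of_nonneg_left hy0 (abs_nonneg _))
            (mul_le_mul_of_nonneg_left hy1 (abs_nonneg _))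
      _ = (|u| + |v|) * ‖y‖ := by ring
      _ ≤ 1 * ‖y‖ := mul_le_mul_of_nonneg_right huv (norm_nonneg _)
      _ = ‖y‖ := one_mul _
  have k1 := key _ _ h1
  have k2 := key _ _ h2
  calc |a * (T wp e0 * y 0 + T wp e1 * y 1) + b * (T wm e0 * y 0 + T wm e1 * y 1)|
      ≤ |a| * |T wp e0 * y 0 + T wp e1 * y 1| + |b| * |T wm e0 * y 0 + T wm e1 * y 1| := by
        refine (abs_add_le _ _).trans ?_
        rw [abs_mul, abs_mul]
    _ ≤ |a| * ‖y‖ + |b| * ‖y‖ :=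
        add_le_add (mul_le_mul_of_nonneg_left k1 (abs_nonneg _))
          (mul_le_mul_of_nonneg_left k2 (abs_nonneg _))
    _ = (|a| + |b|) * ‖y‖ := by ring
    _ ≤ ‖x‖ * ‖y‖ := mul_le_mul_of_nonneg_right hab (norm_nonneg _)

private lemma sgn_helper (r ε : ℝ) (hε : 0 ≤ ε) :
    ∃ d : ℝ, |d| ≤ ε ∧ |r + d| = |r| + ε ∧ (ε ≤ |r| → |r - d| = |r| - ε) ∧ (d = 0 → ε = 0) := by
  rcases le_or_gt 0 r with h | h
  · refine ⟨ε, by rw [abs_of_nonneg hε], ?_, ?_, fun hd => hd⟩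
    · rw [abs_of_nonneg (by linarith), abs_of_nonneg h]
    · intro h'
      rw [abs_of_nonneg h] at h' ⊢
      rw [abs_of_nonneg (by linarith)]
  · refine ⟨-ε, by rw [abs_neg, abs_of_nonneg hε], ?_, ?_,
      fun hd => by linarith [neg_eq_zero.mp hd]⟩
    · rw [abs_of_neg h]
      rw [show r + -ε = -(ε - r) by ring, abs_neg, abs_of_nonneg (by linarith)]
      ring
    · intro h'
      rw [abs_of_neg h] at h' ⊢
      rw [show r - -ε = -(-r - ε) by ring, abs_neg, abs_of_nonneg (by linarith)]

private lemma l1_extreme {u v : ℝ} (huv : |u| + |v| ≤ 1)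
    (hext : ∀ t s : ℝ, |u + t| + |v + s| ≤ 1 → |u - t| + |v - s| ≤ 1 → t = 0 ∧ s = 0) :
    (v = 0 ∧ (u = 1 ∨ u = -1)) ∨ (u = 0 ∧ (v = 1 ∨ v = -1)) := by
  by_cases hu : u = 0
  · by_cases hv : v = 0
    · exfalso
      obtain ⟨ht, -⟩ := hext 1 0 (by rw [hu, hv]; norm_num) (by rw [hu, hv]; norm_num)
      norm_num at ht
    · right; refine ⟨hu, ?_⟩
      have hv1 : |v| ≤ 1 := by have := abs_nonneg u; linarith
      rcases lt_or_eq_of_le hv1 with hlt | heq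
      · exfalso
        obtain ⟨d, hd, hplus, -, hzero⟩ := sgn_helper v (1 - |v|) (by linarith)
        have hA : |u + 0| + |v + d| ≤ 1 := by
          rw [hu]; simp only [zero_add, abs_zero]; rw [hplus]; linarith [abs_nonneg u]
        have hB : |u - 0| + |v - d| ≤ 1 := by
          rw [hu]; simp only [zero_sub, abs_neg, abs_zero, sub_zero]
          have := abs_sub v d
          linarith
        obtain ⟨-, hs⟩ := hext 0 d hA hB
        have := hzero hs; linarith
      · exact (abs_eq zero_le_one).1 heq
  · by_cases hv : v = 0
    · left; refine ⟨hv, ?_⟩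
      have hu1 : |u| ≤ 1 := by have := abs_nonneg v; linarith
      rcases lt_or_eq_of_le hu1 with hlt | heq
      · exfalso
        obtain ⟨d, hd, hplus, -, hzero⟩ := sgn_helper u (1 - |u|) (by linarith)
        have hA : |u + d| + |v + 0| ≤ 1 := by
          rw [hv]; simp only [add_zero, abs_zero]; rw [hplus]; linarith
        have hB : |u - d| + |v - 0| ≤ 1 := by
          rw [hv]; simp only [sub_zero, abs_zero]
          have := abs_sub u d
          linarith
        obtain ⟨ht, -⟩ := hext d 0 hA hB
        have := hzero ht; linarith
      · exact (abs_eq zero_le_one).1 heq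
    · exfalso
      have hup : 0 < |u| := abs_pos.2 hu
      have hvp : 0 < |v| := abs_pos.2 hv
      set ε := min |u| |v| with hεdef
      have hε : 0 < ε := lt_min hup hvp
      obtain ⟨d, hd, hdplus, hdminus, hd0⟩ := sgn_helper u ε hε.le
      obtain ⟨e, he, heplus, heminus, he0⟩ := sgn_helper v ε hε.le
      have hA : |u + d| + |v + -e| ≤ 1 := by
        rw [hdplus, show v + -e = v - e by ring, heminus (min_le_right _ _)]; linarith
      have hB : |u - d| + |v - -e| ≤ 1 := by
        rw [show v - -e = v + e by ring, heplus, hdminus (min_le_left _ _)]; linarith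
      obtain ⟨ht, -⟩ := hext d (-e) hA hB
      have := hd0 ht; linarith

private lemma eval_bound (S : K2) (z y : Fin 2 → ℝ) (hz : ‖z‖ ≤ 1) (hy : ‖y‖ ≤ 1) :
    |S z y| ≤ ‖S‖ := by
  rw [← Real.norm_eq_abs]
  have h1 := le_opNorm (S z) y
  have h2 := le_opNorm S z
  nlinarith [norm_nonneg (S z), norm_nonneg S, norm_nonneg y, norm_nonneg z]

private noncomputable def expfun (σ1 σ2 : ℝ) (y1 y2 : Fin 2 → ℝ) : NormedSpace.Dual ℝ K2 :=
  (σ1/2) • ((ContinuousLinearMap.apply ℝ ℝ y1).comp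
      ((ContinuousLinearMap.apply ℝ ((Fin 2 → ℝ) →L[ℝ] ℝ)) wp))
  + (σ2/2) • ((ContinuousLinearMap.apply ℝ ℝ y2).comp
      ((ContinuousLinearMap.apply ℝ ((Fin 2 → ℝ) →L[ℝ] ℝ)) wm))

private lemma expfun_apply (σ1 σ2 : ℝ) (y1 y2 : Fin 2 → ℝ) (S : K2) :
    expfun σ1 σ2 y1 y2 S = σ1/2 * S wp y1 + σ2/2 * S wm y2 := by
  simp [expfun]

private lemma expose_master (T : K2) (hT : ‖T‖ ≤ 1) (y1 y2 : Fin 2 → ℝ) (σ1 σ2 : ℝ)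
    (hy1 : ‖y1‖ ≤ 1) (hy2 : ‖y2‖ ≤ 1)
    (h1 : σ1 = 1 ∨ σ1 = -1) (h2 : σ2 = 1 ∨ σ2 = -1)
    (hT1 : T wp y1 = σ1) (hT2 : T wm y2 = σ2)
    (key : ∀ S : K2, ‖S‖ ≤ 1 → S wp y1 = σ1 → S wm y2 = σ2 → S = T) :
    ∃ f : NormedSpace.Dual ℝ K2, f T = 1 ∧ ‖f‖ = 1 ∧
      ∀ S : K2, ‖S‖ ≤ 1 → S ≠ T → f S < 1 := by
  have hσ1 : σ1 * σ1 = 1 := by rcases h1 with h | h <;> rw [h] <;> norm_num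
  have hσ2 : σ2 * σ2 = 1 := by rcases h2 with h | h <;> rw [h] <;> norm_num
  have haσ1 : |σ1| = 1 := by rcases h1 with h | h <;> rw [h] <;> norm_num
  have haσ2 : |σ2| = 1 := by rcases h2 with h | h <;> rw [h] <;> norm_num
  refine ⟨expfun σ1 σ2 y1 y2, ?_, ?_, ?_⟩
  · rw [expfun_apply, hT1, hT2]
    linear_combination (1/2) * hσ1 + (1/2) * hσ2
  · have hle : ∀ S : K2, |expfun σ1 σ2 y1 y2 S| ≤ ‖S‖ := by
      intro S
      rw [expfun_apply]
      have b1 := eval_bound S wp y1 norm_wp hy1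
      have b2 := eval_bound S wm y2 norm_wm hy2
      calc |σ1/2 * S wp y1 + σ2/2 * S wm y2|
          ≤ |σ1/2 * S wp y1| + |σ2/2 * S wm y2| := abs_add_le _ _
        _ = |σ1|/2 * |S wp y1| + |σ2|/2 * |S wm y2| := by
            rw [abs_mul, abs_mul, abs_div, abs_div]; norm_num
        _ = 1/2 * |S wp y1| + 1/2 * |S wm y2| := by rw [haσ1, haσ2]
        _ ≤ 1/2 * ‖S‖ + 1/2 * ‖S‖ := by linarith
        _ = ‖S‖ := by ring
    refine le_antisymm (opNorm_le_bound _ zero_le_one fun S => ?_) ?_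
    · rw [Real.norm_eq_abs, one_mul]; exact hle S
    · have h1T : (1 : ℝ) ≤ |expfun σ1 σ2 y1 y2 T| := by
        rw [expfun_apply, hT1, hT2]
        have : σ1/2 * σ1 + σ2/2 * σ2 = 1 := by
          linear_combination (1/2) * hσ1 + (1/2) * hσ2
        rw [this]; norm_num
      have h2T : |expfun σ1 σ2 y1 y2 T| ≤ ‖expfun σ1 σ2 y1 y2‖ * ‖T‖ := by
        rw [← Real.norm_eq_abs]; exact le_opNorm _ _
      nlinarith [norm_nonneg (expfun σ1 σ2 y1 y2)]
  · intro S hS hne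
    have b1 := eval_bound S wp y1 norm_wp hy1
    have b2 := eval_bound S wm y2 norm_wm hy2
    have e1' : σ1/2 * S wp y1 ≤ 1/2 := by
      have h' : σ1/2 * S wp y1 ≤ |σ1/2 * S wp y1| := le_abs_self _
      have h'' : |σ1/2 * S wp y1| = 1/2 * |S wp y1| := by
        rw [abs_mul, abs_div, haσ1]; norm_num
      linarith
    have e2' : σ2/2 * S wm y2 ≤ 1/2 := by
      have h' : σ2/2 * S wm y2 ≤ |σ2/2 * S wm y2| := le_abs_self _
      have h'' : |σ2/2 * S wm y2| = 1/2 * |S wm y2| := by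
        rw [abs_mul, abs_div, haσ2]; norm_num
      linarith
    have hle1 : expfun σ1 σ2 y1 y2 S ≤ 1 := by rw [expfun_apply]; linarith
    refine lt_of_le_of_ne hle1 fun heq => hne ?_
    rw [expfun_apply] at heq
    have q1 : σ1/2 * S wp y1 = 1/2 := by linarith
    have q2 : σ2/2 * S wm y2 = 1/2 := by linarith
    have a1 : S wp y1 = σ1 := by linear_combination 2 * σ1 * q1 - S wp y1 * hσ1
    have a2 : S wm y2 = σ2 := by linear_combination 2 * σ2 * q2 - S wm y2 * hσ2
    exact key S hS a1 a2

private lemma zero_of {a b : ℝ} (hab : |a| + |b| ≤ 1) (ha : a = 1 ∨ a = -1) : b = 0 := by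
  have h1 : |a| = 1 := by rcases ha with h | h <;> rw [h] <;> norm_num
  have h0 : |b| ≤ 0 := by linarith
  exact abs_eq_zero.1 (le_antisymm h0 (abs_nonneg _))

/-- In the space of bilinear forms on `ℓ∞²(ℝ)` with the operator norm, the extreme points of
the closed unit ball coincide with its exposed points. (Extreme point: `T` is in the ball and
whenever `T` is the midpoint of two members of the ball, they are equal. Exposed point: `T` is
in the ball and there is a continuous linear functional `f` with `f T = 1 = ‖f‖` and `f S < 1`
for every other member `S` of the ball.) -/
theorem extremePoints_eq_exposedPoints_unitBall_bilinear_linf2 :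
    {T : (Fin 2 → ℝ) →L[ℝ] (Fin 2 → ℝ) →L[ℝ] ℝ |
        ‖T‖ ≤ 1 ∧ ∀ A B : (Fin 2 → ℝ) →L[ℝ] (Fin 2 → ℝ) →L[ℝ] ℝ,
          ‖A‖ ≤ 1 → ‖B‖ ≤ 1 → T = (1 / 2 : ℝ) • (A + B) → A = B}
    = {T : (Fin 2 → ℝ) →L[ℝ] (Fin 2 → ℝ) →L[ℝ] ℝ |
        ‖T‖ ≤ 1 ∧ ∃ f : NormedSpace.Dual ℝ ((Fin 2 → ℝ) →L[ℝ] (Fin 2 → ℝ) →L[ℝ] ℝ),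
          f T = 1 ∧ ‖f‖ = 1 ∧
          ∀ S : (Fin 2 → ℝ) →L[ℝ] (Fin 2 → ℝ) →L[ℝ] ℝ, ‖S‖ ≤ 1 → S ≠ T → f S < 1} := by
  ext T
  simp only [Set.mem_setOf_eq]
  constructor
  · rintro ⟨hT, hext⟩
    refine ⟨hT, ?_⟩
    have hrow1 := row_bound T hT wp norm_wp
    have hrow2 := row_bound T hT wm norm_wm
    -- extremeness of the first coordinate pair
    have hext1 : ∀ t s : ℝ, |T wp e0 + t| + |T wp e1 + s| ≤ 1 →
        |T wp e0 - t| + |T wp e1 - s| ≤ 1 → t = 0 ∧ s = 0 := by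
      intro t s h1 h2
      set A := bform (T wp e0 + t) (T wp e1 + s) (T wm e0) (T wm e1) with hAdef
      set B := bform (T wp e0 - t) (T wp e1 - s) (T wm e0) (T wm e1) with hBdef
      have hA : ‖A‖ ≤ 1 := by
        refine norm_le_of_coords A ?_ ?_
        · rw [hAdef, bform_c1, bform_c2]; exact h1
        · rw [hAdef, bform_c3, bform_c4]; exact hrow2
      have hB : ‖B‖ ≤ 1 := by
        refine norm_le_of_coords B ?_ ?_
        · rw [hBdef, bform_c1, bform_c2]; exact h2
        · rw [hBdef, bform_c3, bform_c4]; exact hrow2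
      have hmid : T = (1 / 2 : ℝ) • (A + B) := by
        refine ContinuousLinearMap.ext fun x => ContinuousLinearMap.ext fun y => ?_
        rw [eval_repr T x y]
        simp only [hAdef, hBdef, ContinuousLinearMap.smul_apply,
          ContinuousLinearMap.add_apply, ContinuousLinearMap.coe_smul', Pi.smul_apply,
          bform_apply, smul_eq_mul]
        ring
      have hAB := hext A B hA hB hmid
      constructor
      · have h' := congrArg (fun F : K2 => F wp e0) hAB
        simp only [hAdef, hBdef, bform_c1] at h'
        linarith
      · have h' := congrArg (fun F : K2 => F wp e1) hAB
        simp only [hAdef, hBdef, bform_c2] at h'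
        linarith
    have hext2 : ∀ t s : ℝ, |T wm e0 + t| + |T wm e1 + s| ≤ 1 →
        |T wm e0 - t| + |T wm e1 - s| ≤ 1 → t = 0 ∧ s = 0 := by
      intro t s h1 h2
      set A := bform (T wp e0) (T wp e1) (T wm e0 + t) (T wm e1 + s) with hAdef
      set B := bform (T wp e0) (T wp e1) (T wm e0 - t) (T wm e1 - s) with hBdef
      have hA : ‖A‖ ≤ 1 := by
        refine norm_le_of_coords A ?_ ?_
        · rw [hAdef, bform_c1, bform_c2]; exact hrow1
        · rw [hAdef, bform_c3, bform_c4]; exact h1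
      have hB : ‖B‖ ≤ 1 := by
        refine norm_le_of_coords B ?_ ?_
        · rw [hBdef, bform_c1, bform_c2]; exact hrow1
        · rw [hBdef, bform_c3, bform_c4]; exact h2
      have hmid : T = (1 / 2 : ℝ) • (A + B) := by
        refine ContinuousLinearMap.ext fun x => ContinuousLinearMap.ext fun y => ?_
        rw [eval_repr T x y]
        simp only [hAdef, hBdef, ContinuousLinearMap.smul_apply,
          ContinuousLinearMap.add_apply, ContinuousLinearMap.coe_smul', Pi.smul_apply,
          bform_apply, smul_eq_mul]
        ring
      have hAB := hext A B hA hB hmid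
      constructor
      · have h' := congrArg (fun F : K2 => F wm e0) hAB
        simp only [hAdef, hBdef, bform_c3] at h'
        linarith
      · have h' := congrArg (fun F : K2 => F wm e1) hAB
        simp only [hAdef, hBdef, bform_c4] at h'
        linarith
    have case1 := l1_extreme hrow1 hext1
    have case2 := l1_extreme hrow2 hext2
    rcases case1 with ⟨hv0, hu1⟩ | ⟨hu0, hv1⟩ <;> rcases case2 with ⟨hq0, hp1⟩ | ⟨hp0, hq1⟩
    · refine expose_master T hT e0 e0 (T wp e0) (T wm e0) norm_e0 norm_e0 hu1 hp1 rfl rfl ?_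
      intro S hS h1 h2
      have r1 := row_bound S hS wp norm_wp
      have r2 := row_bound S hS wm norm_wm
      have hz1 : S wp e1 = 0 := zero_of r1 (h1 ▸ hu1)
      have hz2 : S wm e1 = 0 := zero_of r2 (h2 ▸ hp1)
      rw [← repr_eq S, ← repr_eq T, h1, h2, hz1, hz2, hv0, hq0]
    · refine expose_master T hT e0 e1 (T wp e0) (T wm e1) norm_e0 norm_e1 hu1 hq1 rfl rfl ?_
      intro S hS h1 h2
      have r1 := row_bound S hS wp norm_wp
      have r2 := row_bound S hS wm norm_wm
      have hz1 : S wp e1 = 0 := zero_of r1 (h1 ▸ hu1)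
      have hz2 : S wm e0 = 0 := zero_of (by linarith : |S wm e1| + |S wm e0| ≤ 1) (h2 ▸ hq1)
      rw [← repr_eq S, ← repr_eq T, h1, h2, hz1, hz2, hv0, hp0]
    · refine expose_master T hT e1 e0 (T wp e1) (T wm e0) norm_e1 norm_e0 hv1 hp1 rfl rfl ?_
      intro S hS h1 h2
      have r1 := row_bound S hS wp norm_wp
      have r2 := row_bound S hS wm norm_wm
      have hz1 : S wp e0 = 0 := zero_of (by linarith : |S wp e1| + |S wp e0| ≤ 1) (h1 ▸ hv1)
      have hz2 : S wm e1 = 0 := zero_of r2 (h2 ▸ hp1)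
      rw [← repr_eq S, ← repr_eq T, h1, h2, hz1, hz2, hu0, hq0]
    · refine expose_master T hT e1 e1 (T wp e1) (T wm e1) norm_e1 norm_e1 hv1 hq1 rfl rfl ?_
      intro S hS h1 h2
      have r1 := row_bound S hS wp norm_wp
      have r2 := row_bound S hS wm norm_wm
      have hz1 : S wp e0 = 0 := zero_of (by linarith : |S wp e1| + |S wp e0| ≤ 1) (h1 ▸ hv1)
      have hz2 : S wm e0 = 0 := zero_of (by linarith : |S wm e1| + |S wm e0| ≤ 1) (h2 ▸ hq1)
      rw [← repr_eq S, ← repr_eq T, h1, h2, hz1, hz2, hu0, hp0]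
  · rintro ⟨hT, f, hfT, hfnorm, hstrict⟩
    refine ⟨hT, fun A B hA hB hmid => ?_⟩
    have hfle : ∀ S : (Fin 2 → ℝ) →L[ℝ] (Fin 2 → ℝ) →L[ℝ] ℝ, ‖S‖ ≤ 1 → f S ≤ 1 := by
      intro S hS
      have h1 : f S ≤ |f S| := le_abs_self _
      have h2 : |f S| ≤ ‖f‖ * ‖S‖ := by rw [← Real.norm_eq_abs]; exact le_opNorm _ _
      rw [hfnorm, one_mul] at h2
      linarith
    have hmf : f T = 1/2 * (f A + f B) := by
      rw [hmid, map_smul, map_add, smul_eq_mul]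
    have hA' : A = T := by
      by_contra h
      have h1 := hstrict A hA h
      have h2 := hfle B hB
      linarith [hfT, hmf]
    have hB' : B = T := by
      by_contra h
      have h1 := hstrict B hB h
      have h2 := hfle A hA
      linarith [hfT, hmf]
    rw [hA', hB']
end

section
/- The bilinear form T : ℓ∞²(ℝ) × ℓ∞²(ℝ) → ℝ given by T(x,y) = ½(x₁y₁ + x₂y₁ + x₁y₂ − x₂y₂) is an exposed point of the closed unit ball of the space of bilinear forms on ℓ∞²(ℝ). -/
open ContinuousLinearMap

private lemma habs_sum (y : Fin 2 → ℝ) : |y 0 + y 1| + |y 0 - y 1| ≤ 2 * ‖y‖ := by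
  have h0 := abs_le.mp (by simpa [Real.norm_eq_abs] using norm_le_pi_norm y 0)
  have h1 := abs_le.mp (by simpa [Real.norm_eq_abs] using norm_le_pi_norm y 1)
  rcases abs_cases (y 0 + y 1) with ⟨e1, _⟩ | ⟨e1, _⟩ <;>
    rcases abs_cases (y 0 - y 1) with ⟨e2, _⟩ | ⟨e2, _⟩ <;> linarith

private def uu : Fin 2 → ℝ := ![1, 1]
private def vv : Fin 2 → ℝ := ![1, -1]

private lemma uu0 : uu 0 = 1 := rfl
private lemma uu1 : uu 1 = 1 := rfl
private lemma vv0 : vv 0 = 1 := rfl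
private lemma vv1 : vv 1 = -1 := rfl

private lemma uun : ‖uu‖ ≤ 1 := by
  rw [pi_norm_le_iff_of_nonneg zero_le_one]
  intro i; fin_cases i <;> simp [uu]

private lemma vvn : ‖vv‖ ≤ 1 := by
  rw [pi_norm_le_iff_of_nonneg zero_le_one]
  intro i; fin_cases i <;> simp [vv]

private noncomputable def ev2 (x y : Fin 2 → ℝ) :
    ((Fin 2 → ℝ) →L[ℝ] (Fin 2 → ℝ) →L[ℝ] ℝ) →L[ℝ] ℝ :=
  (ContinuousLinearMap.apply ℝ ℝ y).comp
    (ContinuousLinearMap.apply ℝ ((Fin 2 → ℝ) →L[ℝ] ℝ) x)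

private noncomputable def ff : ((Fin 2 → ℝ) →L[ℝ] (Fin 2 → ℝ) →L[ℝ] ℝ) →L[ℝ] ℝ :=
  (1/4 : ℝ) • (ev2 uu uu + ev2 uu vv + ev2 vv uu + (-1 : ℝ) • ev2 vv vv)

private lemma ff_apply (S : (Fin 2 → ℝ) →L[ℝ] (Fin 2 → ℝ) →L[ℝ] ℝ) :
    ff S = 1/4 * (S uu uu + S uu vv + S vv uu - S vv vv) := by
  simp [ff, ev2, ContinuousLinearMap.smul_apply, ContinuousLinearMap.add_apply,
    ContinuousLinearMap.comp_apply, ContinuousLinearMap.apply_apply, smul_eq_mul]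
  ring

private lemma sbound (S : (Fin 2 → ℝ) →L[ℝ] (Fin 2 → ℝ) →L[ℝ] ℝ) (a b : Fin 2 → ℝ)
    (ha : ‖a‖ ≤ 1) (hb : ‖b‖ ≤ 1) : |S a b| ≤ ‖S‖ := by
  have h := S.le_opNorm₂ a b
  rw [Real.norm_eq_abs] at h
  have h2 : ‖S‖ * ‖a‖ * ‖b‖ ≤ ‖S‖ * 1 * 1 := by gcongr
  linarith

/-- If `S` agrees with the prescribed values at the four exposing points, then `S = T`. -/
private lemma determined (S T : (Fin 2 → ℝ) →L[ℝ] (Fin 2 → ℝ) →L[ℝ] ℝ)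
    (hT : ∀ x y : Fin 2 → ℝ,
      T x y = (1 / 2) * (x 0 * y 0 + x 1 * y 0 + x 0 * y 1 - x 1 * y 1))
    (e1 : S uu uu = 1) (e2 : S uu vv = 1) (e3 : S vv uu = 1) (e4 : S vv vv = -1) :
    S = T := by
  ext x y
  have hx : x = ((x 0 + x 1)/2) • uu + ((x 0 - x 1)/2) • vv := by
    funext i; fin_cases i <;> simp [uu, vv] <;> ring
  have hy : y = ((y 0 + y 1)/2) • uu + ((y 0 - y 1)/2) • vv := by
    funext i; fin_cases i <;> simp [uu, vv] <;> ring
  rw [hT]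
  conv_lhs => rw [hx, hy]
  simp only [map_add, map_smul, ContinuousLinearMap.add_apply,
    ContinuousLinearMap.smul_apply, smul_eq_mul]
  rw [e1, e2, e3, e4]
  ring

/-- The bilinear form `T(x,y) = ½(x₁y₁ + x₂y₁ + x₁y₂ − x₂y₂)` on `ℓ∞²(ℝ)` is an exposed point
of the closed unit ball of the space of bilinear forms: it lies in the ball and there is a
continuous linear functional `f` with `f T = 1 = ‖f‖` and `f S < 1` for every other member
`S` of the ball. -/
theorem half_form_is_exposed_point
    (T : (Fin 2 → ℝ) →L[ℝ] (Fin 2 → ℝ) →L[ℝ] ℝ)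
    (hT : ∀ x y : Fin 2 → ℝ,
      T x y = (1 / 2) * (x 0 * y 0 + x 1 * y 0 + x 0 * y 1 - x 1 * y 1)) :
    ‖T‖ ≤ 1 ∧ ∃ f : StrongDual ℝ ((Fin 2 → ℝ) →L[ℝ] (Fin 2 → ℝ) →L[ℝ] ℝ),
      f T = 1 ∧ @Norm.norm _ (ContinuousLinearMap.hasOpNorm (𝕜 := ℝ) (𝕜₂ := ℝ)
        (E := (Fin 2 → ℝ) →L[ℝ] (Fin 2 → ℝ) →L[ℝ] ℝ) (F := ℝ)) f = 1 ∧
      ∀ S : (Fin 2 → ℝ) →L[ℝ] (Fin 2 → ℝ) →L[ℝ] ℝ, ‖S‖ ≤ 1 → S ≠ T → f S < 1 := by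
  have hTnorm : ‖T‖ ≤ 1 := by
    apply opNorm_le_bound _ zero_le_one
    intro x
    apply opNorm_le_bound _ (by positivity)
    intro y
    rw [hT, Real.norm_eq_abs]
    have hx0 := abs_le.mp (by simpa [Real.norm_eq_abs] using norm_le_pi_norm x 0)
    have hx1 := abs_le.mp (by simpa [Real.norm_eq_abs] using norm_le_pi_norm x 1)
    have key := habs_sum y
    have e : (1/2 : ℝ) * (x 0 * y 0 + x 1 * y 0 + x 0 * y 1 - x 1 * y 1)
        = 1/2 * (x 0 * (y 0 + y 1)) + 1/2 * (x 1 * (y 0 - y 1)) := by ring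
    rw [e]
    have h1 : |1/2 * (x 0 * (y 0 + y 1)) + 1/2 * (x 1 * (y 0 - y 1))|
        ≤ |1/2 * (x 0 * (y 0 + y 1))| + |1/2 * (x 1 * (y 0 - y 1))| := abs_add_le _ _
    have h2 : |1/2 * (x 0 * (y 0 + y 1))| = 1/2 * |x 0| * |y 0 + y 1| := by
      rw [abs_mul, abs_mul, show |(1/2:ℝ)| = 1/2 from by norm_num]; ring
    have h3 : |1/2 * (x 1 * (y 0 - y 1))| = 1/2 * |x 1| * |y 0 - y 1| := by
      rw [abs_mul, abs_mul, show |(1/2:ℝ)| = 1/2 from by norm_num]; ring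
    have ha0 : |x 0| ≤ ‖x‖ := abs_le.mpr hx0
    have ha1 : |x 1| ≤ ‖x‖ := abs_le.mpr hx1
    nlinarith [abs_nonneg (y 0 + y 1), abs_nonneg (y 0 - y 1), abs_nonneg (x 0),
      abs_nonneg (x 1), norm_nonneg y, norm_nonneg x]
  refine ⟨hTnorm, ?_⟩
  have hTuu : T uu uu = 1 := by rw [hT, uu0, uu1]; norm_num
  have hTuv : T uu vv = 1 := by rw [hT, uu0, uu1, vv0, vv1]; norm_num
  have hTvu : T vv uu = 1 := by rw [hT, uu0, uu1, vv0, vv1]; norm_num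
  have hTvv : T vv vv = -1 := by rw [hT, vv0, vv1]; norm_num
  have hfT : ff T = 1 := by rw [ff_apply, hTuu, hTuv, hTvu, hTvv]; norm_num
  letI : SeminormedAddCommGroup ((Fin 2 → ℝ) →L[ℝ] (Fin 2 → ℝ) →L[ℝ] ℝ) := inferInstance
  letI : NormedSpace ℝ ((Fin 2 → ℝ) →L[ℝ] (Fin 2 → ℝ) →L[ℝ] ℝ) := inferInstance
  have hfn : ‖ff‖ = 1 := by
    have hle : ‖ff‖ ≤ 1 := by
      apply opNorm_le_bound _ zero_le_one
      intro S
      have h1 := abs_le.mp (sbound S uu uu uun uun)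
      have h2 := abs_le.mp (sbound S uu vv uun vvn)
      have h3 := abs_le.mp (sbound S vv uu vvn uun)
      have h4 := abs_le.mp (sbound S vv vv vvn vvn)
      rw [ff_apply, Real.norm_eq_abs, one_mul, abs_le]
      constructor <;> linarith [h1.1, h1.2, h2.1, h2.2, h3.1, h3.2, h4.1, h4.2]
    have hge : 1 ≤ ‖ff‖ := by
      have h := ff.le_opNorm T
      rw [hfT] at h
      simp only [Real.norm_eq_abs, abs_one] at h
      nlinarith [norm_nonneg ff]
    linarith
  refine ⟨ff, hfT, hfn, ?_⟩
  intro S hS hne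
  by_contra hcon
  push_neg at hcon
  have h1 := abs_le.mp (sbound S uu uu uun uun)
  have h2 := abs_le.mp (sbound S uu vv uun vvn)
  have h3 := abs_le.mp (sbound S vv uu vvn uun)
  have h4 := abs_le.mp (sbound S vv vv vvn vvn)
  rw [ff_apply] at hcon
  have euu : S uu uu = 1 := by linarith [h1.2, h2.2, h3.2, h4.1]
  have euv : S uu vv = 1 := by linarith [h1.2, h2.2, h3.2, h4.1]
  have evu : S vv uu = 1 := by linarith [h1.2, h2.2, h3.2, h4.1]
  have evv : S vv vv = -1 := by linarith [h1.2, h2.2, h3.2, h4.1]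
  exact hne (determined S T hT euu euv evu evv)
end

section
/- The bilinear form T : ℓ∞²(ℝ) × ℓ∞²(ℝ) → ℝ given by T(x,y) = x₁y₁ is an exposed point of the closed unit ball of the space of bilinear forms on ℓ∞²(ℝ). -/
set_option maxHeartbeats 1000000


lemma exposed_aux {E : Type*} [SeminormedAddCommGroup E] [NormedSpace ℝ E] (L : E →ₗ[ℝ] ℝ)
    (hLbound : ∀ S, ‖L S‖ ≤ 1 * ‖S‖) (T : E) (hTnorm : ‖T‖ ≤ 1) (hLT : L T = 1) :
    ∃ f : E →L[ℝ] ℝ, (∀ S, f S = L S) ∧ ‖f‖ = 1 := by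
  let f := LinearMap.mkContinuous L 1 hLbound
  have hf_apply : ∀ S, f S = L S := fun S => LinearMap.mkContinuous_apply L 1 hLbound S
  have hfT : f T = 1 := by rw [hf_apply, hLT]
  refine ⟨f, hf_apply, le_antisymm (f.opNorm_le_bound zero_le_one
    (fun S => by rw [hf_apply]; exact hLbound S)) ?_⟩
  have h := f.le_opNorm T
  rw [hfT] at h
  simp only [norm_one] at h
  nlinarith [norm_nonneg f, norm_nonneg T]

/-- The bilinear form `T(x,y) = x₁y₁` on `ℓ∞²(ℝ)` is an exposed point of the closed unit ball
of the space of bilinear forms: it lies in the ball and there is a continuous linear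
functional `f` with `f T = 1 = ‖f‖` and `f S < 1` for every other member `S` of the ball. -/
theorem x1y1_is_exposed_point
    (T : (Fin 2 → ℝ) →L[ℝ] (Fin 2 → ℝ) →L[ℝ] ℝ)
    (hT : ∀ x y : Fin 2 → ℝ, T x y = x 0 * y 0) :
    ‖T‖ ≤ 1 ∧ ∃ f : StrongDual ℝ ((Fin 2 → ℝ) →L[ℝ] (Fin 2 → ℝ) →L[ℝ] ℝ),
      f T = 1 ∧ @norm _ (ContinuousLinearMap.hasOpNorm (𝕜 := ℝ) (𝕜₂ := ℝ)
        (E := (Fin 2 → ℝ) →L[ℝ] (Fin 2 → ℝ) →L[ℝ] ℝ) (F := ℝ) (σ₁₂ := RingHom.id ℝ)) f = 1 ∧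
      ∀ S : (Fin 2 → ℝ) →L[ℝ] (Fin 2 → ℝ) →L[ℝ] ℝ, ‖S‖ ≤ 1 → S ≠ T → f S < 1 := by
  have hpt : ∀ (x : Fin 2 → ℝ) (i : Fin 2), |x i| ≤ ‖x‖ := fun x i => by
    simpa using norm_le_pi_norm x i
  -- ‖T‖ ≤ 1
  have hTnorm : ‖T‖ ≤ 1 := by
    refine ContinuousLinearMap.opNorm_le_bound _ zero_le_one fun x => ?_
    refine ContinuousLinearMap.opNorm_le_bound _ (by positivity) fun y => ?_
    rw [hT, Real.norm_eq_abs, abs_mul, one_mul]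
    have h1 := hpt x 0; have h2 := hpt y 0
    have hx0 : (0:ℝ) ≤ |x 0| := abs_nonneg _
    have hy0 : (0:ℝ) ≤ |y 0| := abs_nonneg _
    nlinarith [norm_nonneg x, norm_nonneg y]
  set u : Fin 2 → ℝ := ![1, 1] with hu_def
  set v : Fin 2 → ℝ := ![1, -1] with hv_def
  have hu : ‖u‖ ≤ 1 := by
    rw [pi_norm_le_iff_of_nonneg zero_le_one]
    intro i; fin_cases i <;> simp [hu_def]
  have hv : ‖v‖ ≤ 1 := by
    rw [pi_norm_le_iff_of_nonneg zero_le_one]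
    intro i; fin_cases i <;> simp [hv_def]
  have hu0 : u 0 = 1 := rfl
  have hu1 : u 1 = 1 := rfl
  have hv0 : v 0 = 1 := rfl
  have hv1 : v 1 = -1 := rfl
  -- key pointwise bound
  have key : ∀ (S : (Fin 2 → ℝ) →L[ℝ] (Fin 2 → ℝ) →L[ℝ] ℝ) (a b : Fin 2 → ℝ),
      ‖a‖ ≤ 1 → ‖b‖ ≤ 1 → |S a b| ≤ ‖S‖ := by
    intro S a b ha hb
    have h := S.le_opNorm₂ a b
    rw [Real.norm_eq_abs] at h
    have hab : ‖a‖ * ‖b‖ ≤ 1 := mul_le_one₀ ha (norm_nonneg b) hb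
    nlinarith [norm_nonneg S, norm_nonneg a, norm_nonneg b]
  -- the exposing functional
  let L : ((Fin 2 → ℝ) →L[ℝ] (Fin 2 → ℝ) →L[ℝ] ℝ) →ₗ[ℝ] ℝ :=
    { toFun := fun S => (S u u + S u v + S v u + S v v) / 4
      map_add' := by intro S S'; simp; ring
      map_smul' := by intro c S; simp; ring }
  have hLbound : ∀ S, ‖L S‖ ≤ 1 * ‖S‖ := by
    intro S
    have h1 := key S u u hu hu
    have h2 := key S u v hu hv
    have h3 := key S v u hv hu
    have h4 := key S v v hv hv
    rw [abs_le] at h1 h2 h3 h4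
    simp only [L, LinearMap.coe_mk, AddHom.coe_mk, Real.norm_eq_abs, one_mul]
    rw [abs_le]
    constructor <;> [linarith; linarith]
  obtain ⟨f, hf_apply0, hfnorm⟩ := exposed_aux (E := (Fin 2 → ℝ) →L[ℝ] (Fin 2 → ℝ) →L[ℝ] ℝ)
    L hLbound T hTnorm (by
      show (T u u + T u v + T v u + T v v) / 4 = 1
      rw [hT, hT, hT, hT, hu0, hv0]; norm_num)
  have hf_apply : ∀ S, f S = (S u u + S u v + S v u + S v v) / 4 := fun S =>
    hf_apply0 S
  have hfS : ∀ S, ‖f S‖ ≤ 1 * ‖S‖ := fun S => by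
    rw [hf_apply S]
    simpa only [L, LinearMap.coe_mk, AddHom.coe_mk] using hLbound S
  have hfT : f T = 1 := by
    rw [hf_apply, hT, hT, hT, hT, hu0, hv0]; norm_num
  refine ⟨hTnorm, f, hfT, hfnorm, ?_⟩
  intro S hS hne
  -- f S ≤ 1 always
  by_contra hcon
  push_neg at hcon
  have h1 := key S u u hu hu
  have h2 := key S u v hu hv
  have h3 := key S v u hv hu
  have h4 := key S v v hv hv
  rw [abs_le] at h1 h2 h3 h4
  have hfS := hf_apply S
  have hA : S u u = 1 := by linarith [hcon.trans_eq hfS]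
  have hB : S u v = 1 := by linarith [hcon.trans_eq hfS]
  have hC : S v u = 1 := by linarith [hcon.trans_eq hfS]
  have hD : S v v = 1 := by linarith [hcon.trans_eq hfS]
  apply hne
  ext x y
  rw [hT]
  have hx : x = ((x 0 + x 1) / 2) • u + ((x 0 - x 1) / 2) • v := by
    funext i; fin_cases i <;>
      simp [hu_def, hv_def, Pi.add_apply, Pi.smul_apply, smul_eq_mul] <;> ring
  have hy : y = ((y 0 + y 1) / 2) • u + ((y 0 - y 1) / 2) • v := by
    funext i; fin_cases i <;>
      simp [hu_def, hv_def, Pi.add_apply, Pi.smul_apply, smul_eq_mul] <;> ring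
  conv_lhs => rw [hx, hy]
  simp only [map_add, map_smul, ContinuousLinearMap.add_apply,
    ContinuousLinearMap.coe_smul', Pi.smul_apply, smul_eq_mul, hA, hB, hC, hD]
  ring
end

section
/- For every nonzero bilinear form T : ℓ∞²(ℝ) × ℓ∞²(ℝ) → ℝ, T(x,y) = Σ_{i,j=1}^{2} a_{ij}x_iy_j with a_{ij} ∈ ℝ, one has (Σ_{i,j=1}^{2} |a_{ij}|^{4/3})^{3/4} ≤ √2 · ‖T‖. -/
lemma littlewood_perterm (a b c R C : ℝ) (hb : 0 ≤ b) (hc : 0 ≤ c)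
    (hbR : b ≤ R) (hcC : c ≤ C) (hab : a ^ 2 ≤ b ^ 2) (hac : a ^ 2 ≤ c ^ 2) :
    |a| ^ ((4 : ℝ) / 3) ≤ (R ^ 2 * C ^ 2) ^ ((1 : ℝ) / 3) *
      (1 / 3 * (a ^ 2 / (b * R)) + 1 / 3 * (a ^ 2 / (c * C)) + 1 / 3 * (b * c / (R * C))) := by
  have hR : 0 ≤ R := hb.trans hbR
  have hC : 0 ≤ C := hc.trans hcC
  rcases eq_or_ne a 0 with rfl | ha
  · rw [abs_zero, Real.zero_rpow (by norm_num)]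
    positivity
  · have ha2 : 0 < a ^ 2 := by positivity
    have hb' : 0 < b := lt_of_le_of_ne hb (by rintro rfl; nlinarith)
    have hc' : 0 < c := lt_of_le_of_ne hc (by rintro rfl; nlinarith)
    have hR' : 0 < R := lt_of_lt_of_le hb' hbR
    have hC' : 0 < C := lt_of_lt_of_le hc' hcC
    have hp1 : (0:ℝ) ≤ a ^ 2 / (b * R) := by positivity
    have hp2 : (0:ℝ) ≤ a ^ 2 / (c * C) := by positivity
    have hp3 : (0:ℝ) ≤ b * c / (R * C) := by positivity
    have geo := Real.geom_mean_le_arith_mean3_weighted (by norm_num : (0:ℝ) ≤ 1/3)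
      (by norm_num : (0:ℝ) ≤ 1/3) (by norm_num : (0:ℝ) ≤ 1/3) hp1 hp2 hp3 (by norm_num)
    have hK : (0:ℝ) ≤ (R ^ 2 * C ^ 2) ^ ((1:ℝ)/3) := by positivity
    have key : (R ^ 2 * C ^ 2) ^ ((1:ℝ)/3) *
        ((a ^ 2 / (b * R)) ^ ((1:ℝ)/3) * (a ^ 2 / (c * C)) ^ ((1:ℝ)/3)
          * (b * c / (R * C)) ^ ((1:ℝ)/3)) = |a| ^ ((4:ℝ)/3) := by
      rw [← Real.mul_rpow hp1 hp2, ← Real.mul_rpow (mul_nonneg hp1 hp2) hp3,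
        ← Real.mul_rpow (by positivity) (by positivity)]
      have : R ^ 2 * C ^ 2 * (a ^ 2 / (b * R) * (a ^ 2 / (c * C)) * (b * c / (R * C)))
          = |a| ^ (4:ℕ) := by
        rw [show |a| ^ (4:ℕ) = a^2 * a^2 by rw [← abs_pow]; rw [abs_of_nonneg (by positivity)]; ring]
        field_simp
      rw [this, ← Real.rpow_natCast |a| 4, ← Real.rpow_mul (abs_nonneg a)]
      norm_num
    calc |a| ^ ((4:ℝ)/3) = (R ^ 2 * C ^ 2) ^ ((1:ℝ)/3) *
        ((a ^ 2 / (b * R)) ^ ((1:ℝ)/3) * (a ^ 2 / (c * C)) ^ ((1:ℝ)/3)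
          * (b * c / (R * C)) ^ ((1:ℝ)/3)) := key.symm
      _ ≤ _ := mul_le_mul_of_nonneg_left geo hK

lemma littlewood_pair (M b1 b2 : ℝ)
    (h : ∀ s1 s2 : ℝ, |s1| ≤ 1 → |s2| ≤ 1 → |b1 * s1 + b2 * s2| ≤ M) :
    |b1| + |b2| ≤ M := by
  have h1 := h 1 1 (by norm_num) (by norm_num)
  have h2 := h 1 (-1) (by norm_num) (by norm_num)
  have h3 := h (-1) 1 (by norm_num) (by norm_num)
  have h4 := h (-1) (-1) (by norm_num) (by norm_num)
  rcases abs_cases (b1 * 1 + b2 * 1) with ⟨e1, _⟩ | ⟨e1, _⟩ <;>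
    rcases abs_cases (b1 * 1 + b2 * (-1)) with ⟨e2, _⟩ | ⟨e2, _⟩ <;>
    rcases abs_cases b1 with ⟨f1, _⟩ | ⟨f1, _⟩ <;>
    rcases abs_cases b2 with ⟨f2, _⟩ | ⟨f2, _⟩ <;>
    rcases abs_cases (b1 * (-1) + b2 * 1) with ⟨e3, _⟩ | ⟨e3, _⟩ <;>
    rcases abs_cases (b1 * (-1) + b2 * (-1)) with ⟨e4, _⟩ | ⟨e4, _⟩ <;>
    linarith

lemma littlewood_mx (x y : ℝ) : 2 * max |x| |y| ≤ |x + y| + |x - y| := by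
  have a1 := abs_add_le (x + y) (x - y)
  have a2 := abs_sub (x + y) (x - y)
  have e1 : |x + y + (x - y)| = 2 * |x| := by
    rw [show x + y + (x - y) = 2 * x by ring, abs_mul]; norm_num
  have e2 : |x + y - (x - y)| = 2 * |y| := by
    rw [show x + y - (x - y) = 2 * y by ring, abs_mul]; norm_num
  rcases max_cases |x| |y| with ⟨hm, _⟩ | ⟨hm, _⟩ <;> rw [hm] <;> linarith

lemma littlewood_rowdiv (x y B R : ℝ) (hB : B ^ 2 = x ^ 2 + y ^ 2) :
    x ^ 2 / (B * R) + y ^ 2 / (B * R) = B / R := by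
  rcases eq_or_ne B 0 with h | h
  · have hx : x = 0 := by nlinarith [sq_nonneg x, sq_nonneg y]
    have hy : y = 0 := by nlinarith [sq_nonneg x, sq_nonneg y]
    simp [h, hx, hy]
  · rw [← add_div, ← hB, pow_two, mul_div_mul_left _ _ h]

set_option maxHeartbeats 1000000 in
lemma littlewood_core (a11 a12 a21 a22 M : ℝ) (hM : 0 ≤ M)
    (hm : max |a11| |a12| + max |a21| |a22| ≤ M)
    (hn : max |a11| |a21| + max |a12| |a22| ≤ M) :
    (|a11| ^ ((4 : ℝ) / 3) + |a12| ^ ((4 : ℝ) / 3)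
        + |a21| ^ ((4 : ℝ) / 3) + |a22| ^ ((4 : ℝ) / 3)) ^ ((3 : ℝ) / 4)
      ≤ Real.sqrt 2 * M := by
  obtain ⟨b1, hb1n, hb1sq, hb1m⟩ : ∃ b1 : ℝ, 0 ≤ b1 ∧ b1 ^ 2 = a11 ^ 2 + a12 ^ 2 ∧
      b1 ≤ Real.sqrt 2 * max |a11| |a12| := by
    refine ⟨Real.sqrt (a11 ^ 2 + a12 ^ 2), Real.sqrt_nonneg _, Real.sq_sqrt (by positivity), ?_⟩
    have hmn : 0 ≤ max |a11| |a12| := (abs_nonneg a11).trans (le_max_left _ _)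
    have h1 : a11 ^ 2 + a12 ^ 2 ≤ 2 * max |a11| |a12| ^ 2 := by
      have hx := le_max_left |a11| |a12|
      have hy := le_max_right |a11| |a12|
      nlinarith [sq_abs a11, sq_abs a12, abs_nonneg a11, abs_nonneg a12]
    calc Real.sqrt (a11 ^ 2 + a12 ^ 2) ≤ Real.sqrt (2 * max |a11| |a12| ^ 2) :=
          Real.sqrt_le_sqrt h1
      _ = Real.sqrt 2 * max |a11| |a12| := by
          rw [Real.sqrt_mul (by norm_num), Real.sqrt_sq hmn]
  obtain ⟨b2, hb2n, hb2sq, hb2m⟩ : ∃ b2 : ℝ, 0 ≤ b2 ∧ b2 ^ 2 = a21 ^ 2 + a22 ^ 2 ∧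
      b2 ≤ Real.sqrt 2 * max |a21| |a22| := by
    refine ⟨Real.sqrt (a21 ^ 2 + a22 ^ 2), Real.sqrt_nonneg _, Real.sq_sqrt (by positivity), ?_⟩
    have hmn : 0 ≤ max |a21| |a22| := (abs_nonneg a21).trans (le_max_left _ _)
    have h1 : a21 ^ 2 + a22 ^ 2 ≤ 2 * max |a21| |a22| ^ 2 := by
      have hx := le_max_left |a21| |a22|
      have hy := le_max_right |a21| |a22|
      nlinarith [sq_abs a21, sq_abs a22, abs_nonneg a21, abs_nonneg a22]
    calc Real.sqrt (a21 ^ 2 + a22 ^ 2) ≤ Real.sqrt (2 * max |a21| |a22| ^ 2) :=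
          Real.sqrt_le_sqrt h1
      _ = Real.sqrt 2 * max |a21| |a22| := by
          rw [Real.sqrt_mul (by norm_num), Real.sqrt_sq hmn]
  obtain ⟨c1, hc1n, hc1sq, hc1m⟩ : ∃ c1 : ℝ, 0 ≤ c1 ∧ c1 ^ 2 = a11 ^ 2 + a21 ^ 2 ∧
      c1 ≤ Real.sqrt 2 * max |a11| |a21| := by
    refine ⟨Real.sqrt (a11 ^ 2 + a21 ^ 2), Real.sqrt_nonneg _, Real.sq_sqrt (by positivity), ?_⟩
    have hmn : 0 ≤ max |a11| |a21| := (abs_nonneg a11).trans (le_max_left _ _)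
    have h1 : a11 ^ 2 + a21 ^ 2 ≤ 2 * max |a11| |a21| ^ 2 := by
      have hx := le_max_left |a11| |a21|
      have hy := le_max_right |a11| |a21|
      nlinarith [sq_abs a11, sq_abs a21, abs_nonneg a11, abs_nonneg a21]
    calc Real.sqrt (a11 ^ 2 + a21 ^ 2) ≤ Real.sqrt (2 * max |a11| |a21| ^ 2) :=
          Real.sqrt_le_sqrt h1
      _ = Real.sqrt 2 * max |a11| |a21| := by
          rw [Real.sqrt_mul (by norm_num), Real.sqrt_sq hmn]
  obtain ⟨c2, hc2n, hc2sq, hc2m⟩ : ∃ c2 : ℝ, 0 ≤ c2 ∧ c2 ^ 2 = a12 ^ 2 + a22 ^ 2 ∧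
      c2 ≤ Real.sqrt 2 * max |a12| |a22| := by
    refine ⟨Real.sqrt (a12 ^ 2 + a22 ^ 2), Real.sqrt_nonneg _, Real.sq_sqrt (by positivity), ?_⟩
    have hmn : 0 ≤ max |a12| |a22| := (abs_nonneg a12).trans (le_max_left _ _)
    have h1 : a12 ^ 2 + a22 ^ 2 ≤ 2 * max |a12| |a22| ^ 2 := by
      have hx := le_max_left |a12| |a22|
      have hy := le_max_right |a12| |a22|
      nlinarith [sq_abs a12, sq_abs a22, abs_nonneg a12, abs_nonneg a22]
    calc Real.sqrt (a12 ^ 2 + a22 ^ 2) ≤ Real.sqrt (2 * max |a12| |a22| ^ 2) :=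
          Real.sqrt_le_sqrt h1
      _ = Real.sqrt 2 * max |a12| |a22| := by
          rw [Real.sqrt_mul (by norm_num), Real.sqrt_sq hmn]
  have hs2 : (0:ℝ) ≤ Real.sqrt 2 := Real.sqrt_nonneg 2
  have hR : b1 + b2 ≤ Real.sqrt 2 * M := by
    calc b1 + b2 ≤ Real.sqrt 2 * max |a11| |a12| + Real.sqrt 2 * max |a21| |a22| :=
          add_le_add hb1m hb2m
      _ = Real.sqrt 2 * (max |a11| |a12| + max |a21| |a22|) := by ring
      _ ≤ Real.sqrt 2 * M := mul_le_mul_of_nonneg_left hm hs2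
  have hC : c1 + c2 ≤ Real.sqrt 2 * M := by
    calc c1 + c2 ≤ Real.sqrt 2 * max |a11| |a21| + Real.sqrt 2 * max |a12| |a22| :=
          add_le_add hc1m hc2m
      _ = Real.sqrt 2 * (max |a11| |a21| + max |a12| |a22|) := by ring
      _ ≤ Real.sqrt 2 * M := mul_le_mul_of_nonneg_left hn hs2
  by_cases h0 : a11 = 0 ∧ a12 = 0 ∧ a21 = 0 ∧ a22 = 0
  · obtain ⟨z1, z2, z3, z4⟩ := h0
    rw [z1, z2, z3, z4]
    rw [abs_zero, Real.zero_rpow (by norm_num : ((4:ℝ)/3) ≠ 0)]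
    norm_num
    positivity
  · have hne : a11 ^ 2 + a12 ^ 2 + a21 ^ 2 + a22 ^ 2 ≠ 0 := by
      intro h
      exact h0 ⟨by nlinarith [sq_nonneg a11, sq_nonneg a12, sq_nonneg a21, sq_nonneg a22],
        by nlinarith [sq_nonneg a11, sq_nonneg a12, sq_nonneg a21, sq_nonneg a22],
        by nlinarith [sq_nonneg a11, sq_nonneg a12, sq_nonneg a21, sq_nonneg a22],
        by nlinarith [sq_nonneg a11, sq_nonneg a12, sq_nonneg a21, sq_nonneg a22]⟩
    have hpos : 0 < a11 ^ 2 + a12 ^ 2 + a21 ^ 2 + a22 ^ 2 :=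
      lt_of_le_of_ne (by positivity) (Ne.symm hne)
    have hRpos : 0 < b1 + b2 := by nlinarith [hb1sq, hb2sq, hb1n, hb2n, hpos]
    have hCpos : 0 < c1 + c2 := by nlinarith [hc1sq, hc2sq, hc1n, hc2n, hpos]
    set R := b1 + b2 with hRdef
    set Cc := c1 + c2 with hCdef
    clear_value R Cc
    -- per-term bounds
    have hb1R : b1 ≤ R := by rw [hRdef]; linarith
    have hb2R : b2 ≤ R := by rw [hRdef]; linarith
    have hc1C : c1 ≤ Cc := by rw [hCdef]; linarith
    have hc2C : c2 ≤ Cc := by rw [hCdef]; linarith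
    have q11b : a11 ^ 2 ≤ b1 ^ 2 := by rw [hb1sq]; linarith [sq_nonneg a12]
    have q12b : a12 ^ 2 ≤ b1 ^ 2 := by rw [hb1sq]; linarith [sq_nonneg a11]
    have q21b : a21 ^ 2 ≤ b2 ^ 2 := by rw [hb2sq]; linarith [sq_nonneg a22]
    have q22b : a22 ^ 2 ≤ b2 ^ 2 := by rw [hb2sq]; linarith [sq_nonneg a21]
    have q11c : a11 ^ 2 ≤ c1 ^ 2 := by rw [hc1sq]; linarith [sq_nonneg a21]
    have q21c : a21 ^ 2 ≤ c1 ^ 2 := by rw [hc1sq]; linarith [sq_nonneg a11]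
    have q12c : a12 ^ 2 ≤ c2 ^ 2 := by rw [hc2sq]; linarith [sq_nonneg a22]
    have q22c : a22 ^ 2 ≤ c2 ^ 2 := by rw [hc2sq]; linarith [sq_nonneg a12]
    have k11 := littlewood_perterm a11 b1 c1 R Cc hb1n hc1n hb1R hc1C q11b q11c
    have k12 := littlewood_perterm a12 b1 c2 R Cc hb1n hc2n hb1R hc2C q12b q12c
    have k21 := littlewood_perterm a21 b2 c1 R Cc hb2n hc1n hb2R hc1C q21b q21c
    have k22 := littlewood_perterm a22 b2 c2 R Cc hb2n hc2n hb2R hc2C q22b q22c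
    -- the weights sum to 1
    have su : a11 ^ 2 / (b1 * R) + a12 ^ 2 / (b1 * R)
        + (a21 ^ 2 / (b2 * R) + a22 ^ 2 / (b2 * R)) = 1 := by
      rw [littlewood_rowdiv a11 a12 b1 R hb1sq, littlewood_rowdiv a21 a22 b2 R hb2sq,
        ← add_div, ← hRdef]
      exact div_self hRpos.ne'
    have sv : a11 ^ 2 / (c1 * Cc) + a21 ^ 2 / (c1 * Cc)
        + (a12 ^ 2 / (c2 * Cc) + a22 ^ 2 / (c2 * Cc)) = 1 := by
      rw [littlewood_rowdiv a11 a21 c1 Cc hc1sq, littlewood_rowdiv a12 a22 c2 Cc hc2sq,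
        ← add_div, ← hCdef]
      exact div_self hCpos.ne'
    have sw : b1 * c1 / (R * Cc) + b1 * c2 / (R * Cc)
        + (b2 * c1 / (R * Cc) + b2 * c2 / (R * Cc)) = 1 := by
      rw [← add_div, ← add_div, ← add_div]
      rw [show b1 * c1 + b1 * c2 + (b2 * c1 + b2 * c2) = (b1 + b2) * (c1 + c2) by ring]
      rw [← hRdef, ← hCdef]
      exact div_self (by positivity)
    set K := (R ^ 2 * Cc ^ 2) ^ ((1:ℝ)/3) with hKdef
    have hK0 : 0 ≤ K := by positivity
    have hSK : |a11| ^ ((4:ℝ)/3) + |a12| ^ ((4:ℝ)/3)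
        + |a21| ^ ((4:ℝ)/3) + |a22| ^ ((4:ℝ)/3) ≤ K := by
      have sum4 : |a11| ^ ((4:ℝ)/3) + |a12| ^ ((4:ℝ)/3)
          + |a21| ^ ((4:ℝ)/3) + |a22| ^ ((4:ℝ)/3) ≤
          K * ((1/3) * (a11 ^ 2 / (b1 * R) + a12 ^ 2 / (b1 * R)
                + (a21 ^ 2 / (b2 * R) + a22 ^ 2 / (b2 * R)))
             + (1/3) * (a11 ^ 2 / (c1 * Cc) + a21 ^ 2 / (c1 * Cc)
                + (a12 ^ 2 / (c2 * Cc) + a22 ^ 2 / (c2 * Cc)))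
             + (1/3) * (b1 * c1 / (R * Cc) + b1 * c2 / (R * Cc)
                + (b2 * c1 / (R * Cc) + b2 * c2 / (R * Cc)))) := by
        have e : K * ((1/3) * (a11 ^ 2 / (b1 * R) + a12 ^ 2 / (b1 * R)
                + (a21 ^ 2 / (b2 * R) + a22 ^ 2 / (b2 * R)))
             + (1/3) * (a11 ^ 2 / (c1 * Cc) + a21 ^ 2 / (c1 * Cc)
                + (a12 ^ 2 / (c2 * Cc) + a22 ^ 2 / (c2 * Cc)))
             + (1/3) * (b1 * c1 / (R * Cc) + b1 * c2 / (R * Cc)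
                + (b2 * c1 / (R * Cc) + b2 * c2 / (R * Cc))))
            = K * (1 / 3 * (a11 ^ 2 / (b1 * R)) + 1 / 3 * (a11 ^ 2 / (c1 * Cc))
                + 1 / 3 * (b1 * c1 / (R * Cc)))
            + K * (1 / 3 * (a12 ^ 2 / (b1 * R)) + 1 / 3 * (a12 ^ 2 / (c2 * Cc))
                + 1 / 3 * (b1 * c2 / (R * Cc)))
            + K * (1 / 3 * (a21 ^ 2 / (b2 * R)) + 1 / 3 * (a21 ^ 2 / (c1 * Cc))
                + 1 / 3 * (b2 * c1 / (R * Cc)))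
            + K * (1 / 3 * (a22 ^ 2 / (b2 * R)) + 1 / 3 * (a22 ^ 2 / (c2 * Cc))
                + 1 / 3 * (b2 * c2 / (R * Cc))) := by ring
        rw [e]
        have m11 := mul_le_mul_of_nonneg_left k11 hK0
        have m12 := mul_le_mul_of_nonneg_left k12 hK0
        have m21 := mul_le_mul_of_nonneg_left k21 hK0
        have m22 := mul_le_mul_of_nonneg_left k22 hK0
        linarith
      calc |a11| ^ ((4:ℝ)/3) + |a12| ^ ((4:ℝ)/3) + |a21| ^ ((4:ℝ)/3) + |a22| ^ ((4:ℝ)/3)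
          ≤ _ := sum4
        _ = K := by rw [su, sv, sw]; norm_num
    -- finish with rpow manipulations
    have hS0 : (0:ℝ) ≤ |a11| ^ ((4:ℝ)/3) + |a12| ^ ((4:ℝ)/3)
        + |a21| ^ ((4:ℝ)/3) + |a22| ^ ((4:ℝ)/3) := by positivity
    have step1 : (|a11| ^ ((4:ℝ)/3) + |a12| ^ ((4:ℝ)/3)
        + |a21| ^ ((4:ℝ)/3) + |a22| ^ ((4:ℝ)/3)) ^ ((3:ℝ)/4) ≤ K ^ ((3:ℝ)/4) :=
      Real.rpow_le_rpow hS0 hSK (by norm_num)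
    have step2 : K ^ ((3:ℝ)/4) = (R ^ 2 * Cc ^ 2) ^ ((1:ℝ)/4) := by
      rw [hKdef, ← Real.rpow_mul (by positivity)]
      norm_num
    have hX : (0:ℝ) ≤ Real.sqrt 2 * M := by positivity
    have hRC : R ^ 2 * Cc ^ 2 ≤ (Real.sqrt 2 * M) ^ 4 := by
      have hR2 : R ^ 2 ≤ (Real.sqrt 2 * M) ^ 2 := pow_le_pow_left₀ hRpos.le hR 2
      have hC2 : Cc ^ 2 ≤ (Real.sqrt 2 * M) ^ 2 := pow_le_pow_left₀ hCpos.le hC 2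
      calc R ^ 2 * Cc ^ 2 ≤ (Real.sqrt 2 * M) ^ 2 * (Real.sqrt 2 * M) ^ 2 :=
            mul_le_mul hR2 hC2 (sq_nonneg Cc) (sq_nonneg _)
        _ = (Real.sqrt 2 * M) ^ 4 := by ring
    have step3 : (R ^ 2 * Cc ^ 2) ^ ((1:ℝ)/4) ≤ ((Real.sqrt 2 * M) ^ 4) ^ ((1:ℝ)/4) :=
      Real.rpow_le_rpow (by positivity) hRC (by norm_num)
    have step4 : ((Real.sqrt 2 * M) ^ 4) ^ ((1:ℝ)/4) = Real.sqrt 2 * M := by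
      rw [← Real.rpow_natCast (Real.sqrt 2 * M) 4, ← Real.rpow_mul hX]
      norm_num
    calc (|a11| ^ ((4:ℝ)/3) + |a12| ^ ((4:ℝ)/3)
        + |a21| ^ ((4:ℝ)/3) + |a22| ^ ((4:ℝ)/3)) ^ ((3:ℝ)/4)
        ≤ K ^ ((3:ℝ)/4) := step1
      _ = (R ^ 2 * Cc ^ 2) ^ ((1:ℝ)/4) := step2
      _ ≤ ((Real.sqrt 2 * M) ^ 4) ^ ((1:ℝ)/4) := step3
      _ = Real.sqrt 2 * M := step4

set_option maxHeartbeats 1000000 in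
/-- Littlewood's 4/3 inequality on `ℓ∞²(ℝ)`: for every nonzero bilinear form
`T(x,y) = Σ aᵢⱼ xᵢ yⱼ` one has `(Σ |aᵢⱼ|^(4/3))^(3/4) ≤ √2 ‖T‖`. -/
theorem littlewood_43_linf2_real
    (a11 a12 a21 a22 : ℝ)
    (T : (Fin 2 → ℝ) →L[ℝ] (Fin 2 → ℝ) →L[ℝ] ℝ)
    (hT : ∀ x y : Fin 2 → ℝ,
      T x y = a11 * x 0 * y 0 + a21 * x 1 * y 0 + a12 * x 0 * y 1 + a22 * x 1 * y 1)
    (hT0 : T ≠ 0) :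
    (|a11| ^ ((4 : ℝ) / 3) + |a12| ^ ((4 : ℝ) / 3)
        + |a21| ^ ((4 : ℝ) / 3) + |a22| ^ ((4 : ℝ) / 3)) ^ ((3 : ℝ) / 4)
      ≤ Real.sqrt 2 * ‖T‖ := by
  have hsign : ∀ e1 e2 d1 d2 : ℝ, |e1| ≤ 1 → |e2| ≤ 1 → |d1| ≤ 1 → |d2| ≤ 1 →
      |a11 * e1 * d1 + a21 * e2 * d1 + a12 * e1 * d2 + a22 * e2 * d2| ≤ ‖T‖ := by
    intro e1 e2 d1 d2 he1 he2 hd1 hd2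
    have hx : ‖(![e1, e2] : Fin 2 → ℝ)‖ ≤ 1 := by
      rw [pi_norm_le_iff_of_nonneg zero_le_one]
      intro i; fin_cases i <;> simpa [Real.norm_eq_abs]
    have hy : ‖(![d1, d2] : Fin 2 → ℝ)‖ ≤ 1 := by
      rw [pi_norm_le_iff_of_nonneg zero_le_one]
      intro i; fin_cases i <;> simpa [Real.norm_eq_abs]
    have key : T ![e1, e2] ![d1, d2]
        = a11 * e1 * d1 + a21 * e2 * d1 + a12 * e1 * d2 + a22 * e2 * d2 := by
      rw [hT]; simp [Matrix.cons_val_zero, Matrix.cons_val_one, Matrix.head_cons]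
    have hop := T.le_opNorm₂ ![e1, e2] ![d1, d2]
    rw [key, Real.norm_eq_abs] at hop
    have hTn : (0:ℝ) ≤ ‖T‖ := T.opNorm_nonneg
    have hxn : (0:ℝ) ≤ ‖(![e1, e2] : Fin 2 → ℝ)‖ := norm_nonneg _
    have hyn : (0:ℝ) ≤ ‖(![d1, d2] : Fin 2 → ℝ)‖ := norm_nonneg _
    have hmm : ‖T‖ * ‖(![e1, e2] : Fin 2 → ℝ)‖ * ‖(![d1, d2] : Fin 2 → ℝ)‖ ≤ ‖T‖ * 1 * 1 :=
      mul_le_mul (mul_le_mul le_rfl hx hxn hTn) hy hyn (by positivity)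
    linarith
  have hrow1 : |a11 + a12| + |a21 + a22| ≤ ‖T‖ := by
    apply littlewood_pair; intro s1 s2 hs1 hs2
    have h := hsign s1 s2 1 1 hs1 hs2 (by norm_num) (by norm_num)
    rw [show (a11 + a12) * s1 + (a21 + a22) * s2
      = a11 * s1 * 1 + a21 * s2 * 1 + a12 * s1 * 1 + a22 * s2 * 1 by ring]
    exact h
  have hrow2 : |a11 - a12| + |a21 - a22| ≤ ‖T‖ := by
    apply littlewood_pair; intro s1 s2 hs1 hs2
    have h := hsign s1 s2 1 (-1) hs1 hs2 (by norm_num) (by norm_num)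
    rw [show (a11 - a12) * s1 + (a21 - a22) * s2
      = a11 * s1 * 1 + a21 * s2 * 1 + a12 * s1 * (-1) + a22 * s2 * (-1) by ring]
    exact h
  have hcol1 : |a11 + a21| + |a12 + a22| ≤ ‖T‖ := by
    apply littlewood_pair; intro s1 s2 hs1 hs2
    have h := hsign 1 1 s1 s2 (by norm_num) (by norm_num) hs1 hs2
    rw [show (a11 + a21) * s1 + (a12 + a22) * s2
      = a11 * 1 * s1 + a21 * 1 * s1 + a12 * 1 * s2 + a22 * 1 * s2 by ring]
    exact h
  have hcol2 : |a11 - a21| + |a12 - a22| ≤ ‖T‖ := by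
    apply littlewood_pair; intro s1 s2 hs1 hs2
    have h := hsign 1 (-1) s1 s2 (by norm_num) (by norm_num) hs1 hs2
    rw [show (a11 - a21) * s1 + (a12 - a22) * s2
      = a11 * 1 * s1 + a21 * (-1) * s1 + a12 * 1 * s2 + a22 * (-1) * s2 by ring]
    exact h
  have hm : max |a11| |a12| + max |a21| |a22| ≤ ‖T‖ := by
    have t1 := littlewood_mx a11 a12
    have t2 := littlewood_mx a21 a22
    linarith
  have hn : max |a11| |a21| + max |a12| |a22| ≤ ‖T‖ := by
    have t1 := littlewood_mx a11 a21
    have t2 := littlewood_mx a12 a22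
    linarith
  exact littlewood_core a11 a12 a21 a22 ‖T‖ T.opNorm_nonneg hm hn
end
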